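/- arXiv:gr-qc/9806113 — 12 statements merged into one kernel-verified Lean document; each statement's English description precedes it below -/
import Mathlib

section
/- If a solution (p,q) of the planar system on an interval I satisfies p(τ₀)² + q(τ₀)² = 1 for some τ₀ ∈ I, then p(τ)² + q(τ)² = 1 for all τ ∈ I; that is, the unit circle is an invariant set of the flow. -/
/-- If a solution `(p,q)` of the planar system on an interval `I` satisfies
`p(τ₀)² + q(τ₀)² = 1` for some `τ₀ ∈ I`, then `p(τ)² + q(τ)² = 1` for all `τ ∈ I`;
the unit circle is an invariant set of the flow. -/
theorem stmt1 (α : ℝ) (hα : 0 < α) (I : Set ℝ) (hI : I.OrdConnected) (p q : ℝ → ℝ)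
    (hp : ∀ τ ∈ I, HasDerivAt p (p τ * (q τ) ^ 2 - α * p τ * q τ) τ)
    (hq : ∀ τ ∈ I,
      HasDerivAt q ((q τ) ^ 3 + α * (q τ) ^ 2 - q τ - α + 2 * α * (p τ) ^ 2) τ)
    (τ₀ : ℝ) (hτ₀ : τ₀ ∈ I) (hcirc : (p τ₀) ^ 2 + (q τ₀) ^ 2 = 1) :
    ∀ τ ∈ I, (p τ) ^ 2 + (q τ) ^ 2 = 1 := by
  intro τ₁ hτ₁
  set c : ℝ → ℝ := fun t => 2 * q t ^ 2 + 2 * α * q t with hc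
  set f : ℝ → ℝ := fun t => p t ^ 2 + q t ^ 2 - 1 with hfdef
  have hIcc : Set.uIcc τ₀ τ₁ ⊆ I := hI.uIcc_subset hτ₀ hτ₁
  -- derivative of f
  have hf' : ∀ t ∈ I, HasDerivAt f (c t * f t) t := by
    intro t ht
    have h1 := ((hp t ht).fun_pow 2).add ((hq t ht).fun_pow 2)
    have h2 := h1.sub_const 1
    refine h2.congr_deriv ?_
    simp only [hc, hfdef]
    ring
  have hqc : ContinuousOn q I := fun t ht => (hq t ht).continuousAt.continuousWithinAt
  have hcc : ContinuousOn c (Set.uIcc τ₀ τ₁) := by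
    apply ContinuousOn.add
    · exact (continuousOn_const.mul (((hqc.mono hIcc).pow 2)))
    · exact continuousOn_const.mul (hqc.mono hIcc)
  obtain ⟨K, hK⟩ := isCompact_uIcc.exists_bound_of_continuousOn hcc
  set K0 : ℝ := max K 0 with hK0
  have hK0nn : 0 ≤ K0 := le_max_right _ _
  set m : ℝ → ℝ := fun t => max (-K0) (min (c t) K0) with hm
  set v : ℝ → ℝ → ℝ := fun t x => m t * x with hv
  have hmbd : ∀ t, |m t| ≤ K0 := by
    intro t
    rw [abs_le]
    constructor
    · exact le_max_left _ _
    · exact max_le (by linarith) (min_le_right _ _)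
  have hlip : ∀ t, LipschitzOnWith (Real.toNNReal K0) (v t) Set.univ := by
    intro t
    apply LipschitzWith.lipschitzOnWith
    apply LipschitzWith.of_dist_le_mul
    intro x y
    have h : dist (v t x) (v t y) = |m t| * dist x y := by
      simp only [hv, Real.dist_eq, ← mul_sub, abs_mul]
    rw [h, Real.coe_toNNReal _ hK0nn]
    exact mul_le_mul_of_nonneg_right (hmbd t) dist_nonneg
  have hmc : ∀ t ∈ Set.uIcc τ₀ τ₁, m t = c t := by
    intro t ht
    have hb : |c t| ≤ K0 := le_trans (hK t ht) (le_max_left _ _)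
    rw [abs_le] at hb
    simp only [hm]
    rw [min_eq_left hb.2, max_eq_right hb.1]
  have hfd : ∀ t ∈ Set.uIcc τ₀ τ₁, HasDerivAt f (v t (f t)) t := by
    intro t ht
    have := hf' t (hIcc ht)
    simpa [hv, hmc t ht] using this
  have hfc : ContinuousOn f (Set.uIcc τ₀ τ₁) :=
    fun t ht => (hfd t ht).continuousAt.continuousWithinAt
  have hgd : ∀ t : ℝ, HasDerivAt (fun _ : ℝ => (0 : ℝ)) (v t 0) t := by
    intro t
    have : v t 0 = 0 := by simp [hv]
    rw [this]
    exact hasDerivAt_const _ _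
  have hf0 : f τ₀ = 0 := by simp [hfdef, hcirc]
  have key : f τ₁ = 0 := by
    rcases le_total τ₀ τ₁ with hle | hle
    · have huIcc : Set.uIcc τ₀ τ₁ = Set.Icc τ₀ τ₁ := Set.uIcc_of_le hle
      rw [huIcc] at hfc hfd
      have := ODE_solution_unique_of_mem_Icc_right (v := v) (s := fun _ => Set.univ)
        (fun t _ => hlip t) hfc
        (fun t ht => (hfd t (Set.Ico_subset_Icc_self ht)).hasDerivWithinAt)
        (fun t _ => Set.mem_univ _)
        continuousOn_const
        (fun t _ => (hgd t).hasDerivWithinAt)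
        (fun t _ => Set.mem_univ _) hf0
      exact this (Set.right_mem_Icc.mpr hle)
    · have huIcc : Set.uIcc τ₀ τ₁ = Set.Icc τ₁ τ₀ := Set.uIcc_of_ge hle
      rw [huIcc] at hfc hfd
      have := ODE_solution_unique_of_mem_Icc_left (v := v) (s := fun _ => Set.univ)
        (fun t _ => hlip t) hfc
        (fun t ht => (hfd t (Set.Ioc_subset_Icc_self ht)).hasDerivWithinAt)
        (fun t _ => Set.mem_univ _)
        continuousOn_const
        (fun t _ => (hgd t).hasDerivWithinAt)
        (fun t _ => Set.mem_univ _) hf0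
      exact this (Set.left_mem_Icc.mpr hle)
  have : p τ₁ ^ 2 + q τ₁ ^ 2 - 1 = 0 := key
  linarith
end

section
/- If a solution (p,q) of the planar system on an interval I satisfies (p(τ₀), q(τ₀)) ∈ Ω for some τ₀ ∈ I, then (p(τ), q(τ)) ∈ Ω for all τ ∈ I; that is, the physical phase space Ω is an invariant set of the flow in both time directions. -/
open Set


/-- Zero propagation for a linear scalar ODE `u' = c·u` on an order-connected set. -/
lemma linear_ode_zero {I : Set ℝ} (hI : I.OrdConnected) {u c : ℝ → ℝ}
    (hc : ContinuousOn c I)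
    (hu : ∀ τ ∈ I, HasDerivAt u (c τ * u τ) τ)
    {a b : ℝ} (ha : a ∈ I) (hb : b ∈ I) (hzero : u b = 0) : u a = 0 := by
  have hsub : uIcc a b ⊆ I := hI.uIcc_subset ha hb
  have hcpt : IsCompact (uIcc a b) := isCompact_uIcc
  obtain ⟨C, hC⟩ := hcpt.exists_bound_of_continuousOn (hc.mono hsub)
  set m := a ⊓ b with hm
  set M := a ⊔ b with hM
  have hmM : m ≤ M := inf_le_sup
  set cl : ℝ → ℝ := fun t => c ((t ⊓ M) ⊔ m) with hcl
  have hcl_eq : ∀ t ∈ Icc m M, cl t = c t := by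
    intro t ht
    simp only [hcl]
    rw [inf_eq_left.mpr ht.2, sup_eq_left.mpr ht.1]
  have hcl_bd : ∀ t : ℝ, |cl t| ≤ C := by
    intro t
    have : (t ⊓ M) ⊔ m ∈ uIcc a b := by
      constructor
      · exact le_sup_right
      · exact sup_le (inf_le_right) hmM
    simpa using hC _ this
  set K : NNReal := C.toNNReal with hK
  have hv : ∀ t : ℝ, LipschitzOnWith K (fun x : ℝ => cl t * x) univ := by
    intro t
    apply LipschitzWith.lipschitzOnWith
    apply LipschitzWith.of_dist_le_mul
    intro x y
    have : dist (cl t * x) (cl t * y) = |cl t| * dist x y := by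
      simp [Real.dist_eq, ← mul_sub, abs_mul]
    rw [this]
    gcongr
    exact (hcl_bd t).trans (Real.le_coe_toNNReal C)
  have hucont : ContinuousOn u (Icc m M) := fun t ht =>
    ((hu t (hsub ht)).continuousAt).continuousWithinAt
  rcases le_total a b with hab | hab
  · -- a ≤ b : m = a, M = b, propagate backwards from b
    have hma : m = a := inf_eq_left.mpr hab
    have hMb : M = b := sup_eq_right.mpr hab
    have := ODE_solution_unique_of_mem_Icc_left (v := fun t x => cl t * x)
      (s := fun _ => (univ : Set ℝ)) (f := u) (g := fun _ => (0 : ℝ)) (a := m) (b := M)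
      (fun t _ => hv t) hucont
      (fun t ht => by
        have htI : t ∈ Icc m M := ⟨le_of_lt ht.1, ht.2⟩
        show HasDerivWithinAt u (cl t * u t) (Iic t) t
        rw [hcl_eq t htI]
        exact (hu t (hsub htI)).hasDerivWithinAt)
      (fun t _ => trivial)
      continuousOn_const
      (fun t ht => by simpa using (hasDerivWithinAt_const t (Iic t) (0:ℝ)))
      (fun t _ => trivial)
      (by simp [hMb, hzero])
    have := this (show a ∈ Icc m M by constructor <;> simp [hma, hMb, hab])
    simpa using this
  · -- b ≤ a : m = b, M = a, propagate forwards from b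
    have hmb : m = b := inf_eq_right.mpr hab
    have hMa : M = a := sup_eq_left.mpr hab
    have := ODE_solution_unique_of_mem_Icc_right (v := fun t x => cl t * x)
      (s := fun _ => (univ : Set ℝ)) (f := u) (g := fun _ => (0 : ℝ)) (a := m) (b := M)
      (fun t _ => hv t) hucont
      (fun t ht => by
        have htI : t ∈ Icc m M := ⟨ht.1, le_of_lt ht.2⟩
        show HasDerivWithinAt u (cl t * u t) (Ici t) t
        rw [hcl_eq t htI]
        exact (hu t (hsub htI)).hasDerivWithinAt)
      (fun t _ => trivial)
      continuousOn_const
      (fun t ht => by simpa using (hasDerivWithinAt_const t (Ici t) (0:ℝ)))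
      (fun t _ => trivial)
      (by simp [hmb, hzero])
    have := this (show a ∈ Icc m M by constructor <;> simp [hmb, hMa, hab])
    simpa using this

/-- The physical phase space `Ω = {(p,q) : p > 0 ∧ p² + q² < 1}`. -/
def Omega : Set (ℝ × ℝ) := {x : ℝ × ℝ | 0 < x.1 ∧ x.1 ^ 2 + x.2 ^ 2 < 1}

/-- If a solution `(p,q)` of the planar system on an interval `I` satisfies
`(p(τ₀), q(τ₀)) ∈ Ω` for some `τ₀ ∈ I`, then `(p(τ), q(τ)) ∈ Ω` for all `τ ∈ I`;
the physical phase space `Ω` is invariant in both time directions. -/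
theorem stmt2 (α : ℝ) (hα : 0 < α) (I : Set ℝ) (hI : I.OrdConnected) (p q : ℝ → ℝ)
    (hp : ∀ τ ∈ I, HasDerivAt p (p τ * (q τ) ^ 2 - α * p τ * q τ) τ)
    (hq : ∀ τ ∈ I,
      HasDerivAt q ((q τ) ^ 3 + α * (q τ) ^ 2 - q τ - α + 2 * α * (p τ) ^ 2) τ)
    (τ₀ : ℝ) (hτ₀ : τ₀ ∈ I) (hmem : (p τ₀, q τ₀) ∈ Omega) :
    ∀ τ ∈ I, (p τ, q τ) ∈ Omega := by
  obtain ⟨hp0, hlt0⟩ := hmem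
  set u : ℝ → ℝ := fun τ => p τ ^ 2 + q τ ^ 2 - 1 with hu_def
  have hqc : ∀ τ ∈ I, ContinuousAt q τ := fun τ h => (hq τ h).continuousAt
  have hpc : ∀ τ ∈ I, ContinuousAt p τ := fun τ h => (hp τ h).continuousAt
  -- ODE for p : p' = c₁ p
  set c1 : ℝ → ℝ := fun τ => q τ ^ 2 - α * q τ with hc1_def
  have hc1 : ContinuousOn c1 I := fun τ hτ =>
    (((hqc τ hτ).pow 2).sub (continuousAt_const.mul (hqc τ hτ))).continuousWithinAt
  have hu1 : ∀ τ ∈ I, HasDerivAt p (c1 τ * p τ) τ := by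
    intro τ hτ
    convert hp τ hτ using 1
    simp only [hc1_def]; ring
  -- ODE for u : u' = c₂ u
  set c2 : ℝ → ℝ := fun τ => 2 * (q τ ^ 2 + α * q τ) with hc2_def
  have hc2 : ContinuousOn c2 I := fun τ hτ =>
    (continuousAt_const.mul (((hqc τ hτ).pow 2).add
      (continuousAt_const.mul (hqc τ hτ)))).continuousWithinAt
  have hu2 : ∀ τ ∈ I, HasDerivAt u (c2 τ * u τ) τ := by
    intro τ hτ
    have h : HasDerivAt u _ τ := (((hp τ hτ).pow 2).add ((hq τ hτ).pow 2)).sub_const 1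
    convert h using 1
    simp only [hc2_def, hu_def]; ring
  -- nonvanishing
  have hpne : ∀ τ ∈ I, p τ ≠ 0 := by
    intro τ hτ hz
    have := linear_ode_zero hI hc1 hu1 hτ₀ hτ hz
    linarith
  have hune : ∀ τ ∈ I, u τ ≠ 0 := by
    intro τ hτ hz
    have := linear_ode_zero hI hc2 hu2 hτ₀ hτ hz
    simp only [hu_def] at this
    linarith
  intro τ hτ
  have hsub : uIcc τ₀ τ ⊆ I := hI.uIcc_subset hτ₀ hτ
  constructor
  · -- 0 < p τ
    by_contra h
    push_neg at h
    have hlt : p τ < 0 := lt_of_le_of_ne h (hpne τ hτ)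
    have hcont : ContinuousOn p (uIcc τ₀ τ) := fun s hs =>
      (hpc s (hsub hs)).continuousWithinAt
    have h0 : (0 : ℝ) ∈ uIcc (p τ₀) (p τ) :=
      mem_uIcc.mpr (Or.inr ⟨le_of_lt hlt, le_of_lt hp0⟩)
    obtain ⟨s, hs, hps⟩ := intermediate_value_uIcc hcont h0
    exact hpne s (hsub hs) hps
  · -- p τ ^ 2 + q τ ^ 2 < 1
    by_contra h
    push_neg at h
    have hupos : 0 < u τ := by
      have := hune τ hτ
      simp only [hu_def] at this ⊢
      rcases lt_or_eq_of_le (by linarith : (0:ℝ) ≤ p τ ^ 2 + q τ ^ 2 - 1) with h' | h'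
      · exact h'
      · exact absurd h'.symm this
    have huneg : u τ₀ < 0 := by simp only [hu_def]; linarith
    have hcont : ContinuousOn u (uIcc τ₀ τ) := fun s hs =>
      (((hpc s (hsub hs)).pow 2).add ((hqc s (hsub hs)).pow 2)).sub
        continuousAt_const |>.continuousWithinAt
    have h0 : (0 : ℝ) ∈ uIcc (u τ₀) (u τ) :=
      mem_uIcc.mpr (Or.inl ⟨le_of_lt huneg, le_of_lt hupos⟩)
    obtain ⟨s, hs, hus⟩ := intermediate_value_uIcc hcont h0
    exact hune s (hsub hs) hus
end

section
/- If a solution (p,q) of the planar system on an interval I satisfies p(τ) ≥ 0 and p(τ)² + q(τ)² ≤ 1 for all τ ∈ I, then the function τ ↦ H(p(τ), q(τ)) is monotone nondecreasing on I. -/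
/-- The function `H(p,q) = p² (1 − p² − q²)`. -/
noncomputable def H (p q : ℝ) : ℝ := p ^ 2 * (1 - p ^ 2 - q ^ 2)

/-- If a solution `(p,q)` of the planar system on an interval `I` satisfies `p(τ) ≥ 0` and
`p(τ)² + q(τ)² ≤ 1` for all `τ ∈ I`, then `τ ↦ H(p(τ), q(τ))` is monotone
nondecreasing on `I`. -/
theorem stmt3 (α : ℝ) (hα : 0 < α) (I : Set ℝ) (hI : I.OrdConnected) (p q : ℝ → ℝ)
    (hp : ∀ τ ∈ I, HasDerivAt p (p τ * (q τ) ^ 2 - α * p τ * q τ) τ)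
    (hq : ∀ τ ∈ I,
      HasDerivAt q ((q τ) ^ 3 + α * (q τ) ^ 2 - q τ - α + 2 * α * (p τ) ^ 2) τ)
    (hpos : ∀ τ ∈ I, 0 ≤ p τ) (hle : ∀ τ ∈ I, (p τ) ^ 2 + (q τ) ^ 2 ≤ 1) :
    MonotoneOn (fun τ => H (p τ) (q τ)) I := by
  have hderiv : ∀ τ ∈ I, HasDerivAt (fun τ => H (p τ) (q τ))
      (4 * (p τ) ^ 2 * (q τ) ^ 2 * (1 - (p τ) ^ 2 - (q τ) ^ 2)) τ := by
    intro τ hτ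
    have hp' := hp τ hτ
    have hq' := hq τ hτ
    have h : HasDerivAt (fun τ => H (p τ) (q τ))
        ((2 * p τ ^ 1 * (p τ * (q τ) ^ 2 - α * p τ * q τ)) * (1 - (p τ) ^ 2 - (q τ) ^ 2)
          + (p τ) ^ 2 * (((0 : ℝ) - 2 * p τ ^ 1 * (p τ * (q τ) ^ 2 - α * p τ * q τ))
            - 2 * q τ ^ 1 * ((q τ) ^ 3 + α * (q τ) ^ 2 - q τ - α + 2 * α * (p τ) ^ 2))) τ := by
      unfold H
      exact (hp'.pow 2).mul
        (((hasDerivAt_const τ (1 : ℝ)).sub (hp'.pow 2)).sub (hq'.pow 2))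
    convert h using 1
    ring
  have hconv : Convex ℝ I := convex_iff_ordConnected.mpr hI
  apply monotoneOn_of_deriv_nonneg hconv
  · exact fun τ hτ => (hderiv τ hτ).continuousAt.continuousWithinAt
  · exact fun τ hτ => (hderiv τ (interior_subset hτ)).differentiableAt.differentiableWithinAt
  · intro τ hτ
    rw [(hderiv τ (interior_subset hτ)).deriv]
    have h1 := hle τ (interior_subset hτ)
    have h2 : 0 ≤ 1 - (p τ) ^ 2 - (q τ) ^ 2 := by linarith
    positivity
end

section
/- Assume 0 < α < 1. The set of equilibrium points of the planar system lying in the closed physical region, i.e. the set of (p,q) ∈ ℝ² with p ≥ 0, p² + q² ≤ 1, p q² − α p q = 0 and q³ + α q² − q − α + 2 α p² = 0, is exactly the five-point set {(1/√2, 0), (√(1 − α²), α), (0, 1), (0, −1), (0, −α)}. -/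
/-- For `0 < α < 1`, the set of equilibrium points of the planar system lying
in the closed physical region is exactly the five-point set
`{(1/√2, 0), (√(1 − α²), α), (0, 1), (0, −1), (0, −α)}`. -/
theorem stmt4 (α : ℝ) (hα0 : 0 < α) (hα1 : α < 1) :
    {x : ℝ × ℝ | 0 ≤ x.1 ∧ x.1 ^ 2 + x.2 ^ 2 ≤ 1 ∧
        x.1 * x.2 ^ 2 - α * x.1 * x.2 = 0 ∧
        x.2 ^ 3 + α * x.2 ^ 2 - x.2 - α + 2 * α * x.1 ^ 2 = 0} =
      ({(1 / Real.sqrt 2, 0), (Real.sqrt (1 - α ^ 2), α), (0, 1), (0, -1), (0, -α)} :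
        Set (ℝ × ℝ)) := by
  have h2 : Real.sqrt 2 ^ 2 = 2 := Real.sq_sqrt (by norm_num)
  have h2pos : (0:ℝ) < Real.sqrt 2 := Real.sqrt_pos.mpr (by norm_num)
  have hA : (0:ℝ) ≤ 1 - α ^ 2 := by nlinarith
  have hAs : Real.sqrt (1 - α ^ 2) ^ 2 = 1 - α ^ 2 := Real.sq_sqrt hA
  ext ⟨p, q⟩
  simp only [Set.mem_setOf_eq, Set.mem_insert_iff, Set.mem_singleton_iff, Prod.mk.injEq]
  constructor
  · rintro ⟨hp, hle, e1, e2⟩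
    have e1' : p * (q * (q - α)) = 0 := by linear_combination e1
    rcases mul_eq_zero.mp e1' with hp0 | hq
    · subst hp0
      have : (q - 1) * (q + 1) * (q + α) = 0 := by linear_combination e2
      rcases mul_eq_zero.mp this with h | h
      · rcases mul_eq_zero.mp h with h | h
        · right; right; left; constructor <;> linarith
        · right; right; right; left; constructor <;> linarith
      · right; right; right; right; constructor <;> linarith
    · rcases mul_eq_zero.mp hq with hq0 | hqa
      · subst hq0
        left
        have hsq : p ^ 2 = 1 / 2 := by nlinarith
        have : p = Real.sqrt (1 / 2) := by
          rw [← Real.sqrt_sq hp, hsq]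
        refine ⟨?_, rfl⟩
        rw [this, one_div, one_div, Real.sqrt_inv]
      · have hqa' : q = α := by linarith
        right; left
        have hsq : p ^ 2 = 1 - α ^ 2 := by nlinarith
        exact ⟨by rw [← Real.sqrt_sq hp, hsq], hqa'⟩
  · rintro (⟨hp, hq⟩ | ⟨hp, hq⟩ | ⟨hp, hq⟩ | ⟨hp, hq⟩ | ⟨hp, hq⟩) <;> subst hp <;> subst hq
    · have hps : (1 / Real.sqrt 2) ^ 2 = 1 / 2 := by
        rw [div_pow, h2]; norm_num
      refine ⟨by positivity, by rw [hps]; norm_num, by ring, by rw [hps]; ring⟩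
    · exact ⟨Real.sqrt_nonneg _, by nlinarith, by ring, by nlinarith⟩
    · norm_num
    · refine ⟨le_refl 0, by norm_num, by ring, by ring⟩
    · refine ⟨le_refl 0, by nlinarith, by ring, by ring⟩
end

section
/- Assume α > 1. The set of equilibrium points of the planar system lying in the closed physical region, i.e. the set of (p,q) ∈ ℝ² with p ≥ 0, p² + q² ≤ 1, p q² − α p q = 0 and q³ + α q² − q − α + 2 α p² = 0, is exactly the three-point set {(1/√2, 0), (0, 1), (0, −1)}. -/
/-- For `α > 1`, the set of equilibrium points of the planar system lying in the
closed physical region is exactly the three-point set `{(1/√2, 0), (0, 1), (0, −1)}`. -/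
theorem stmt5 (α : ℝ) (hα : 1 < α) :
    {x : ℝ × ℝ | 0 ≤ x.1 ∧ x.1 ^ 2 + x.2 ^ 2 ≤ 1 ∧
        x.1 * x.2 ^ 2 - α * x.1 * x.2 = 0 ∧
        x.2 ^ 3 + α * x.2 ^ 2 - x.2 - α + 2 * α * x.1 ^ 2 = 0} =
      ({(1 / Real.sqrt 2, 0), (0, 1), (0, -1)} : Set (ℝ × ℝ)) := by
  have hs2 : Real.sqrt 2 > 0 := by positivity
  have hc : (1 / Real.sqrt 2) ^ 2 = 1 / 2 := by
    rw [div_pow, one_pow, Real.sq_sqrt (by norm_num : (2:ℝ) ≥ 0)]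
  have hc0 : (0:ℝ) < 1 / Real.sqrt 2 := by positivity
  ext ⟨p, q⟩
  simp only [Set.mem_setOf_eq, Set.mem_insert_iff, Set.mem_singleton_iff, Prod.mk.injEq]
  constructor
  · rintro ⟨hp, hb, h1, h2⟩
    have h1' : p * q * (q - α) = 0 := by linear_combination h1
    rcases mul_eq_zero.mp h1' with h | hqα
    · rcases mul_eq_zero.mp h with hp0 | hq0
      · subst hp0
        right
        have h2' : (q - 1) * ((q + 1) * (q + α)) = 0 := by linear_combination h2
        rcases mul_eq_zero.mp h2' with h | h
        · left; constructor; rfl; linarith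
        · rcases mul_eq_zero.mp h with h | h
          · right; constructor; rfl; linarith
          · exfalso; nlinarith
      · subst hq0
        left
        refine ⟨?_, rfl⟩
        have hp2 : p ^ 2 = 1 / 2 := by
          have hα0 : (0:ℝ) < α := by linarith
          nlinarith
        nlinarith [hc, hc0, hp, sq_nonneg (p - 1 / Real.sqrt 2)]
    · exfalso
      have : q = α := by linarith
      nlinarith [sq_nonneg p]
  · rintro (⟨hp, hq⟩ | ⟨hp, hq⟩ | ⟨hp, hq⟩) <;> subst hp <;> subst hq <;>
      refine ⟨by positivity, ?_, by ring, ?_⟩ <;> nlinarith [hc, hc0]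
end

section
/- Let (p,q) be a solution of the planar system on [τ₀, ∞) with (p(τ), q(τ)) ∈ Ω for all τ ≥ τ₀. Then (p(τ), q(τ)) → (1/√2, 0) as τ → ∞; that is, the de Sitter equilibrium (1/√2, 0) is a global attractor for all physical trajectories. -/
/-- If `f` has nonnegative derivative on `Ici a`, it is monotone there. -/
lemma monoIci {a : ℝ} {f f' : ℝ → ℝ} (hf : ∀ x ∈ Set.Ici a, HasDerivAt f (f' x) x)
    (h0 : ∀ x ∈ Set.Ici a, 0 ≤ f' x) : MonotoneOn f (Set.Ici a) := by
  apply monotoneOn_of_hasDerivWithinAt_nonneg (convex_Ici a)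
    (fun x hx => (hf x hx).continuousAt.continuousWithinAt)
    (fun x hx => ((hf x (interior_subset hx)).hasDerivWithinAt))
    (fun x hx => h0 x (interior_subset hx))

set_option maxHeartbeats 1600000 in
/-- Every solution of the planar system on `[τ₀, ∞)` lying in `Ω` tends to the
de Sitter equilibrium `(1/√2, 0)` as `τ → ∞`: it is a global attractor for all
physical trajectories. -/
theorem stmt8 (α : ℝ) (hα : 0 < α) (τ₀ : ℝ) (p q : ℝ → ℝ)
    (hp : ∀ τ ∈ Set.Ici τ₀, HasDerivAt p (p τ * (q τ) ^ 2 - α * p τ * q τ) τ)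
    (hq : ∀ τ ∈ Set.Ici τ₀,
      HasDerivAt q ((q τ) ^ 3 + α * (q τ) ^ 2 - q τ - α + 2 * α * (p τ) ^ 2) τ)
    (hΩ : ∀ τ ∈ Set.Ici τ₀, (p τ, q τ) ∈ Omega) :
    Filter.Tendsto (fun τ => (p τ, q τ)) Filter.atTop
      (nhds ((1 / Real.sqrt 2, 0) : ℝ × ℝ)) := by
  have hmem : ∀ τ ∈ Set.Ici τ₀, 0 < p τ ∧ p τ ^ 2 + q τ ^ 2 < 1 := fun τ h => hΩ τ h
  have hp0 : ∀ τ ∈ Set.Ici τ₀, 0 < p τ := fun τ h => (hmem τ h).1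
  have hlt : ∀ τ ∈ Set.Ici τ₀, p τ ^ 2 + q τ ^ 2 < 1 := fun τ h => (hmem τ h).2
  have hq1 : ∀ τ ∈ Set.Ici τ₀, |q τ| ≤ 1 := by
    intro τ h
    rw [abs_le]
    constructor <;> nlinarith [hlt τ h, sq_nonneg (p τ)]
  have hp1 : ∀ τ ∈ Set.Ici τ₀, p τ ^ 2 ≤ 1 := by
    intro τ h; nlinarith [hlt τ h, sq_nonneg (q τ)]
  -- The Lyapunov function `G = (1 - p² - q²) p²` satisfies `G' = 4 q² G`.
  set G : ℝ → ℝ := fun τ => (1 - p τ ^ 2 - q τ ^ 2) * p τ ^ 2 with hGdef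
  have hG' : ∀ τ ∈ Set.Ici τ₀, HasDerivAt G (4 * q τ ^ 2 * G τ) τ := by
    intro τ hτ
    have h1 := hp τ hτ
    have h2 := hq τ hτ
    have := (((hasDerivAt_const τ (1:ℝ)).sub (h1.pow 2)).sub (h2.pow 2)).mul (h1.pow 2)
    refine this.congr_deriv ?_
    simp only [hGdef, Pi.sub_apply, Pi.pow_apply, Pi.mul_apply]
    ring
  have hGpos : ∀ τ ∈ Set.Ici τ₀, 0 < G τ := by
    intro τ h
    exact mul_pos (by nlinarith [hlt τ h]) (pow_pos (hp0 τ h) 2)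
  have hGle : ∀ τ ∈ Set.Ici τ₀, G τ ≤ 1 / 4 := by
    intro τ h
    show (1 - p τ ^ 2 - q τ ^ 2) * p τ ^ 2 ≤ 1 / 4
    nlinarith [sq_nonneg (p τ ^ 2 - 1/2), sq_nonneg (p τ * q τ)]
  have hmono : MonotoneOn G (Set.Ici τ₀) :=
    monoIci hG' (fun τ h => mul_nonneg (by positivity) (hGpos τ h).le)
  have hc : 0 < G τ₀ := hGpos τ₀ Set.self_mem_Ici
  have hGc : ∀ τ ∈ Set.Ici τ₀, G τ₀ ≤ G τ := fun τ h => hmono Set.self_mem_Ici h h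
  -- `G` is monotone and bounded, hence converges to some `L ≤ 1/4`.
  obtain ⟨L, hGL, hGleL, hcL, hLle⟩ :
      ∃ L, Filter.Tendsto G Filter.atTop (nhds L) ∧ (∀ τ ∈ Set.Ici τ₀, G τ ≤ L) ∧
        G τ₀ ≤ L ∧ L ≤ 1 / 4 := by
    set g : ℝ → ℝ := fun τ => G (max τ τ₀) with hgdef
    have hgmono : Monotone g := fun a b hab =>
      hmono (le_max_right a τ₀) (le_max_right b τ₀) (max_le_max hab le_rfl)
    have hgbdd : BddAbove (Set.range g) :=
      ⟨1/4, by rintro x ⟨τ, rfl⟩; exact hGle _ (le_max_right τ τ₀)⟩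
    have hGg : ∀ τ ∈ Set.Ici τ₀, G τ = g τ := by
      intro τ h; simp [hgdef, max_eq_left (show τ₀ ≤ τ from h)]
    refine ⟨⨆ τ, g τ, ?_, ?_, ?_, ?_⟩
    · apply (tendsto_atTop_ciSup hgmono hgbdd).congr'
      filter_upwards [Filter.eventually_ge_atTop τ₀] with τ h
      exact (hGg τ h).symm
    · intro τ h; rw [hGg τ h]; exact le_ciSup hgbdd τ
    · rw [hGg τ₀ Set.self_mem_Ici]; exact le_ciSup hgbdd τ₀
    · exact ciSup_le (fun τ => hGle _ (le_max_right τ τ₀))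
  -- A uniform bound on `q'`.
  obtain ⟨K, hK0, hqd⟩ : ∃ K, 0 < K ∧ ∀ τ ∈ Set.Ici τ₀,
      |q τ ^ 3 + α * q τ ^ 2 - q τ - α + 2 * α * p τ ^ 2| ≤ K := by
    refine ⟨2 + 4 * α, by positivity, fun τ h => ?_⟩
    have h1 := hq1 τ h
    have h2 := hp1 τ h
    have h3 := sq_nonneg (p τ)
    rw [abs_le] at h1 ⊢
    have hq2 : q τ ^ 2 ≤ 1 := by nlinarith [sq_nonneg (q τ)]
    constructor <;>
      nlinarith [mul_nonneg (by linarith [h1.1] : (0:ℝ) ≤ 1 + q τ)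
          (by linarith : (0:ℝ) ≤ 1 - q τ ^ 2),
        mul_nonneg (by linarith [h1.2] : (0:ℝ) ≤ 1 - q τ)
          (by linarith : (0:ℝ) ≤ 1 - q τ ^ 2),
        mul_nonneg hα.le (by linarith : (0:ℝ) ≤ 1 - q τ ^ 2),
        mul_nonneg hα.le h3, mul_nonneg hα.le (by linarith : (0:ℝ) ≤ 1 - p τ ^ 2),
        mul_nonneg hα.le (sq_nonneg (q τ))]
  -- `q` is Lipschitz on `[τ₀, ∞)`.
  have hLip : ∀ a ∈ Set.Ici τ₀, ∀ b, a ≤ b → |q b - q a| ≤ K * (b - a) := by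
    intro a ha b hab
    have hb : b ∈ Set.Ici τ₀ := le_trans ha hab
    have m1 : MonotoneOn (fun t => K * t - q t) (Set.Ici τ₀) := by
      apply monoIci (f' := fun t => K - (q t ^ 3 + α * q t ^ 2 - q t - α + 2 * α * p t ^ 2))
      · intro x hx
        exact (((hasDerivAt_id x).const_mul K).sub (hq x hx)).congr_deriv (by ring)
      · intro x hx; have := hqd x hx; rw [abs_le] at this; linarith [this.2]
    have m2 : MonotoneOn (fun t => K * t + q t) (Set.Ici τ₀) := by
      apply monoIci (f' := fun t => K + (q t ^ 3 + α * q t ^ 2 - q t - α + 2 * α * p t ^ 2))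
      · intro x hx
        exact (((hasDerivAt_id x).const_mul K).add (hq x hx)).congr_deriv (by ring)
      · intro x hx; have := hqd x hx; rw [abs_le] at this; linarith [this.1]
    have e1 := m1 ha hb hab
    have e2 := m2 ha hb hab
    simp only at e1 e2
    rw [abs_le]
    constructor <;> linarith
  -- Barbalat-type argument: `q → 0`.
  have hq0 : Filter.Tendsto q Filter.atTop (nhds 0) := by
    rw [Metric.tendsto_atTop]
    intro ε hε
    obtain ⟨δ, hδ, hδK⟩ : ∃ δ, 0 < δ ∧ K * δ = ε / 2 :=
      ⟨ε / (2 * K), by positivity, by field_simp⟩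
    have hLT : L - ε ^ 2 * G τ₀ * δ < L := by
      have : 0 < ε ^ 2 * G τ₀ * δ := by positivity
      linarith
    have hev := (hGL.eventually (lt_mem_nhds hLT)).and (Filter.eventually_ge_atTop τ₀)
    rw [Filter.eventually_atTop] at hev
    obtain ⟨T, hT⟩ := hev
    refine ⟨max T τ₀, fun τ hτ => ?_⟩
    have hτT : T ≤ τ := le_trans (le_max_left _ _) hτ
    have hτ0 : τ₀ ≤ τ := le_trans (le_max_right _ _) hτ
    rw [Real.dist_eq, sub_zero]
    by_contra hcon
    push_neg at hcon
    have key : ∀ s ∈ Set.Icc τ (τ + δ), ε / 2 ≤ |q s| := by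
      intro s hs
      have h1 : |q s - q τ| ≤ K * (s - τ) := hLip τ hτ0 s hs.1
      have h2 : K * (s - τ) ≤ K * δ :=
        mul_le_mul_of_nonneg_left (by linarith [hs.2]) (le_of_lt hK0)
      have h4 : |q τ| - |q s| ≤ |q s - q τ| := by
        have := abs_sub_abs_le_abs_sub (q τ) (q s)
        rwa [abs_sub_comm] at this
      linarith
    have hgrow : G τ + ε ^ 2 * G τ₀ * δ ≤ G (τ + δ) := by
      have hmon2 : MonotoneOn (fun t => G t - ε ^ 2 * G τ₀ * t) (Set.Icc τ (τ + δ)) := by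
        apply monotoneOn_of_hasDerivWithinAt_nonneg (convex_Icc _ _)
          (f' := fun t => 4 * q t ^ 2 * G t - ε ^ 2 * G τ₀)
        · intro x hx
          have : HasDerivAt (fun t => G t - ε ^ 2 * G τ₀ * t)
              (4 * q x ^ 2 * G x - ε ^ 2 * G τ₀) x := by
            exact ((hG' x (le_trans hτ0 hx.1)).sub
              ((hasDerivAt_id x).const_mul (ε ^ 2 * G τ₀))).congr_deriv (by ring)
          exact this.continuousAt.continuousWithinAt
        · intro x hx
          have hx' := interior_subset hx
          have : HasDerivAt (fun t => G t - ε ^ 2 * G τ₀ * t)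
              (4 * q x ^ 2 * G x - ε ^ 2 * G τ₀) x := by
            exact ((hG' x (le_trans hτ0 hx'.1)).sub
              ((hasDerivAt_id x).const_mul (ε ^ 2 * G τ₀))).congr_deriv (by ring)
          exact this.hasDerivWithinAt
        · intro x hx
          have hx' := interior_subset hx
          have hxI : x ∈ Set.Ici τ₀ := le_trans hτ0 hx'.1
          have h1 : ε / 2 ≤ |q x| := key x hx'
          have h2 : (ε / 2) ^ 2 ≤ q x ^ 2 := by
            rw [← sq_abs (q x)]
            exact pow_le_pow_left₀ (by positivity) h1 2
          have h3 : G τ₀ ≤ G x := hGc x hxI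
          nlinarith [mul_le_mul h2 h3 hc.le (sq_nonneg (q x))]
      have := hmon2 (Set.left_mem_Icc.mpr (by linarith)) (Set.right_mem_Icc.mpr (by linarith))
        (by linarith : τ ≤ τ + δ)
      simp only at this
      nlinarith [this]
    have hup : G (τ + δ) ≤ L := hGleL _ (by simp only [Set.mem_Ici]; linarith)
    have hlow : L - ε ^ 2 * G τ₀ * δ < G τ := (hT τ hτT).1
    linarith
  -- `(1 - p²) p² → L`.
  have hq20 : Filter.Tendsto (fun τ => q τ ^ 2 * p τ ^ 2) Filter.atTop (nhds 0) := by
    have h1 : Filter.Tendsto (fun τ => q τ ^ 2) Filter.atTop (nhds 0) := by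
      have := hq0.mul hq0
      rw [mul_zero] at this
      apply this.congr
      intro τ; ring
    apply squeeze_zero' (g := fun τ => q τ ^ 2)
    · filter_upwards with τ; positivity
    · filter_upwards [Filter.eventually_ge_atTop τ₀] with τ h
      nlinarith [hp1 τ h, sq_nonneg (q τ)]
    · exact h1
  have hfp : Filter.Tendsto (fun τ => (1 - p τ ^ 2) * p τ ^ 2) Filter.atTop (nhds L) := by
    have := hGL.add hq20
    rw [add_zero] at this
    apply this.congr
    intro τ; simp only [hGdef]; ring
  -- `(p² - 1/2)² → 1/4 - L`.
  have hφ2 : Filter.Tendsto (fun τ => (p τ ^ 2 - 1/2) ^ 2) Filter.atTop (nhds (1/4 - L)) := by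
    have h14 : Filter.Tendsto (fun _ : ℝ => (1/4 : ℝ)) Filter.atTop (nhds (1/4)) :=
      tendsto_const_nhds
    apply (h14.sub hfp).congr
    intro τ; ring
  have hr : Filter.Tendsto (fun τ => q τ ^ 3 + α * q τ ^ 2 - q τ) Filter.atTop (nhds 0) := by
    have h3 : Filter.Tendsto (fun τ => q τ ^ 3) Filter.atTop (nhds 0) := by
      have := hq0.pow 3; simpa using this
    have h2 : Filter.Tendsto (fun τ => α * q τ ^ 2) Filter.atTop (nhds 0) := by
      have := (hq0.pow 2).const_mul α; simpa using this
    have := (h3.add h2).sub hq0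
    simpa using this
  -- The limit must be `L = 1/4`, else `q' = (q³+αq²-q) + α(2p²-1)` is eventually
  -- bounded away from `0` and `q` escapes to `±∞`.
  have hL14 : L = 1/4 := by
    by_contra hne
    have hm : 0 < 1/4 - L := by
      rcases lt_or_eq_of_le hLle with h | h
      · linarith
      · exact absurd h hne
    obtain ⟨d, hd, hd2⟩ : ∃ d : ℝ, 0 < d ∧ d ^ 2 = (1/4 - L)/2 :=
      ⟨Real.sqrt ((1/4 - L)/2), Real.sqrt_pos.mpr (by linarith),
        Real.sq_sqrt (by linarith)⟩
    have hev1 : ∀ᶠ τ in Filter.atTop, (1/4 - L)/2 < (p τ ^ 2 - 1/2) ^ 2 :=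
      hφ2.eventually (lt_mem_nhds (by linarith))
    have hev2 : ∀ᶠ τ in Filter.atTop, |q τ ^ 3 + α * q τ ^ 2 - q τ| < α * d := by
      have := hr.eventually
        (Metric.ball_mem_nhds (0:ℝ) (show (0:ℝ) < α * d by positivity))
      filter_upwards [this] with τ h
      simpa [Real.dist_eq] using h
    have hev := (hev1.and hev2).and (Filter.eventually_ge_atTop τ₀)
    rw [Filter.eventually_atTop] at hev
    obtain ⟨T', hT'⟩ := hev
    obtain ⟨T₁, hT₁T, hT₁0⟩ : ∃ T₁, T' ≤ T₁ ∧ τ₀ ≤ T₁ :=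
      ⟨max T' τ₀, le_max_left _ _, le_max_right _ _⟩
    have hbig : ∀ τ ≥ T₁, d < |p τ ^ 2 - 1/2| := by
      intro τ hτ
      have h := (hT' τ (le_trans hT₁T hτ)).1.1
      refine lt_of_pow_lt_pow_left₀ 2 (abs_nonneg _) ?_
      rw [sq_abs]; linarith
    have hrsm : ∀ τ ≥ T₁, |q τ ^ 3 + α * q τ ^ 2 - q τ| < α * d :=
      fun τ hτ => (hT' τ (le_trans hT₁T hτ)).1.2
    have hcont : ∀ a b : ℝ, T₁ ≤ a →
        ContinuousOn (fun t => p t ^ 2 - 1/2) (Set.Icc a b) := by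
      intro a b ha s hs
      have : ContinuousAt (fun t => p t ^ 2 - 1/2) s := by
        have := (hp s (le_trans hT₁0 (le_trans ha hs.1))).continuousAt
        fun_prop
      exact this.continuousWithinAt
    have hne0 : ∀ τ ≥ T₁, p τ ^ 2 - 1/2 ≠ 0 := by
      intro τ hτ h0
      have := hbig τ hτ
      rw [h0] at this
      simp at this
      linarith
    have hsign : (∀ τ ≥ T₁, d < p τ ^ 2 - 1/2) ∨ (∀ τ ≥ T₁, p τ ^ 2 - 1/2 < -d) := by
      have hord : ∀ τ ≥ T₁, (d < p τ ^ 2 - 1/2 ∨ p τ ^ 2 - 1/2 < -d) := by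
        intro τ hτ
        have := hbig τ hτ
        rcases abs_cases (p τ ^ 2 - 1/2) with ⟨he, _⟩ | ⟨he, _⟩
        · left; linarith
        · right; linarith
      rcases hord T₁ le_rfl with hpos | hneg
      · left
        intro τ hτ
        rcases hord τ hτ with h | h
        · exact h
        · exfalso
          have hsub : (0:ℝ) ∈ Set.Icc (p τ ^ 2 - 1/2) (p T₁ ^ 2 - 1/2) :=
            ⟨by linarith, by linarith⟩
          obtain ⟨s, hs, hs0⟩ := intermediate_value_Icc' hτ (hcont T₁ τ le_rfl) hsub
          exact hne0 s hs.1 hs0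
      · right
        intro τ hτ
        rcases hord τ hτ with h | h
        · exfalso
          have hsub : (0:ℝ) ∈ Set.Icc (p T₁ ^ 2 - 1/2) (p τ ^ 2 - 1/2) :=
            ⟨by linarith, by linarith⟩
          obtain ⟨s, hs, hs0⟩ := intermediate_value_Icc hτ (hcont T₁ τ le_rfl) hsub
          exact hne0 s hs.1 hs0
        · exact h
    obtain ⟨b, hb, hab⟩ : ∃ b, T₁ ≤ b ∧ α * d * b = α * d * T₁ + 3 := by
      refine ⟨T₁ + 3 / (α * d), ?_, ?_⟩
      · have : 0 < 3 / (α * d) := by positivity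
        linarith
      · field_simp
    rcases hsign with hpos | hneg
    · have hmon : MonotoneOn (fun t => q t - α * d * t) (Set.Ici T₁) := by
        apply monoIci (f' := fun t =>
          (q t ^ 3 + α * q t ^ 2 - q t - α + 2 * α * p t ^ 2) - α * d)
        · intro x hx
          exact ((hq x (le_trans hT₁0 hx)).sub ((hasDerivAt_id x).const_mul (α * d))).congr_deriv (by ring)
        · intro x hx
          have h1 := hrsm x hx
          have h2 := hpos x hx
          rw [abs_lt] at h1
          nlinarith [mul_lt_mul_of_pos_left h2 hα]
      have hmm := hmon Set.self_mem_Ici hb hb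
      simp only at hmm
      have h1 := hq1 T₁ hT₁0
      have h2 := hq1 b (le_trans hT₁0 hb)
      rw [abs_le] at h1 h2
      nlinarith [h1.1, h2.2]
    · have hmon : MonotoneOn (fun t => -q t - α * d * t) (Set.Ici T₁) := by
        apply monoIci (f' := fun t =>
          -(q t ^ 3 + α * q t ^ 2 - q t - α + 2 * α * p t ^ 2) - α * d)
        · intro x hx
          exact (((hq x (le_trans hT₁0 hx)).neg).sub ((hasDerivAt_id x).const_mul (α * d))).congr_deriv (by ring)
        · intro x hx
          have h1 := hrsm x hx
          have h2 := hneg x hx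
          rw [abs_lt] at h1
          nlinarith [mul_lt_mul_of_pos_left h2 hα]
      have hmm := hmon Set.self_mem_Ici hb hb
      simp only at hmm
      have h1 := hq1 T₁ hT₁0
      have h2 := hq1 b (le_trans hT₁0 hb)
      rw [abs_le] at h1 h2
      nlinarith [h1.2, h2.1]
  -- Conclude `p² → 1/2`, hence `p → 1/√2`.
  rw [hL14] at hφ2
  have hφ0 : Filter.Tendsto (fun τ => (p τ ^ 2 - 1/2) ^ 2) Filter.atTop (nhds 0) := by
    simpa using hφ2
  have habs : Filter.Tendsto (fun τ => |p τ ^ 2 - 1/2|) Filter.atTop (nhds 0) := by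
    have := (Real.continuous_sqrt.tendsto 0).comp hφ0
    simp only [Function.comp_def, Real.sqrt_sq_eq_abs, Real.sqrt_zero] at this
    exact this
  have hsub : Filter.Tendsto (fun τ => p τ ^ 2 - 1/2) Filter.atTop (nhds 0) := by
    rw [tendsto_zero_iff_abs_tendsto_zero]
    exact habs
  have hp2 : Filter.Tendsto (fun τ => p τ ^ 2) Filter.atTop (nhds (1/2)) := by
    have := hsub.add_const (1/2)
    simp only [sub_add_cancel, zero_add] at this
    exact this
  have hpl : Filter.Tendsto p Filter.atTop (nhds (1 / Real.sqrt 2)) := by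
    have h1 := (Real.continuous_sqrt.tendsto (1/2)).comp hp2
    have h2 : Real.sqrt (1/2) = 1 / Real.sqrt 2 := by
      rw [one_div, one_div, Real.sqrt_inv]
    rw [h2] at h1
    apply h1.congr'
    filter_upwards [Filter.eventually_ge_atTop τ₀] with τ h
    exact Real.sqrt_sq (hp0 τ h).le
  exact hpl.prodMk_nhds hq0
end

section
/- Let (p,q) be a solution of the planar system on (−∞, τ₀] with (p(τ), q(τ)) ∈ Ω for all τ ≤ τ₀, and suppose (p,q) is not identically equal to the equilibrium (1/√2, 0). Then H(p(τ), q(τ)) → 0 as τ → −∞; in particular the past-limit set of every non-stationary physical trajectory lies on the boundary ∂Ω of the phase space. -/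
open Filter Set intervalIntegral Real

set_option maxHeartbeats 1000000

/-- For a physical solution on `(−∞, τ₀]` which is not identically the equilibrium
`(1/√2, 0)`, one has `H(p(τ), q(τ)) → 0` as `τ → −∞`: the past-limit set of every
non-stationary physical trajectory lies on the boundary `∂Ω`. -/
theorem stmt9 (α : ℝ) (hα : 0 < α) (τ₀ : ℝ) (p q : ℝ → ℝ)
    (hp : ∀ τ ∈ Set.Iic τ₀, HasDerivAt p (p τ * (q τ) ^ 2 - α * p τ * q τ) τ)
    (hq : ∀ τ ∈ Set.Iic τ₀,
      HasDerivAt q ((q τ) ^ 3 + α * (q τ) ^ 2 - q τ - α + 2 * α * (p τ) ^ 2) τ)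
    (hΩ : ∀ τ ∈ Set.Iic τ₀, (p τ, q τ) ∈ Omega)
    (hne : ¬ ∀ τ ∈ Set.Iic τ₀, (p τ, q τ) = ((1 / Real.sqrt 2, 0) : ℝ × ℝ)) :
    Filter.Tendsto (fun τ => H (p τ) (q τ)) Filter.atBot (nhds 0) := by
  classical
  set U : ℝ → ℝ := fun τ => 1 - p τ ^ 2 - q τ ^ 2 with hU_def
  set h : ℝ → ℝ := fun τ => p τ ^ 2 * U τ with hh_def
  clear_value U h
  -- basic bounds
  have hpos : ∀ τ ∈ Iic τ₀, 0 < p τ := fun τ hτ => (hΩ τ hτ).1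
  have hball : ∀ τ ∈ Iic τ₀, p τ ^ 2 + q τ ^ 2 < 1 := fun τ hτ => (hΩ τ hτ).2
  have hUpos : ∀ τ ∈ Iic τ₀, 0 < U τ := by
    intro τ hτ; have := hball τ hτ; simp only [hU_def]; linarith
  have hp2le : ∀ τ ∈ Iic τ₀, p τ ^ 2 ≤ 1 := by
    intro τ hτ; nlinarith [hball τ hτ, sq_nonneg (q τ)]
  have hq2le : ∀ τ ∈ Iic τ₀, q τ ^ 2 ≤ 1 := by
    intro τ hτ; nlinarith [hball τ hτ, sq_nonneg (p τ)]
  have hqabs : ∀ τ ∈ Iic τ₀, |q τ| ≤ 1 := by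
    intro τ hτ; rw [abs_le]; constructor <;> nlinarith [hq2le τ hτ]
  have hUle : ∀ τ ∈ Iic τ₀, U τ ≤ 1 := by
    intro τ hτ; simp only [hU_def]; nlinarith [sq_nonneg (p τ), sq_nonneg (q τ)]
  have hhpos : ∀ τ ∈ Iic τ₀, 0 < h τ := by
    intro τ hτ; rw [hh_def]; exact mul_pos (pow_pos (hpos τ hτ) 2) (hUpos τ hτ)
  have hhle : ∀ τ ∈ Iic τ₀, h τ ≤ 1 / 4 := by
    intro τ hτ
    simp only [hh_def, hU_def]
    nlinarith [sq_nonneg (p τ ^ 2 - (1 - p τ ^ 2 - q τ ^ 2)), sq_nonneg (q τ),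
      hq2le τ hτ, sq_nonneg (q τ ^ 2)]
  -- continuity
  have hcp : ContinuousOn p (Iic τ₀) := fun τ hτ =>
    ((hp τ hτ).continuousAt).continuousWithinAt
  have hcq : ContinuousOn q (Iic τ₀) := fun τ hτ =>
    ((hq τ hτ).continuousAt).continuousWithinAt
  have hcq2 : ContinuousOn (fun s => 4 * q s ^ 2) (Iic τ₀) :=
    continuousOn_const.mul (hcq.pow 2)
  -- derivative of h
  have hd_h : ∀ τ ∈ Iic τ₀, HasDerivAt h (4 * q τ ^ 2 * h τ) τ := by
    intro τ hτ
    have h1 := hp τ hτ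
    have h2 := hq τ hτ
    have hA : HasDerivAt (fun s => 1 - p s ^ 2 - q s ^ 2)
        (0 - (2 * p τ ^ 1 * (p τ * q τ ^ 2 - α * p τ * q τ))
          - (2 * q τ ^ 1 * (q τ ^ 3 + α * q τ ^ 2 - q τ - α + 2 * α * p τ ^ 2))) τ := by
      exact ((hasDerivAt_const τ (1:ℝ)).sub (h1.pow 2)).sub (h2.pow 2)
    have hB : HasDerivAt (fun s => p s ^ 2)
        (2 * p τ ^ 1 * (p τ * q τ ^ 2 - α * p τ * q τ)) τ := h1.pow 2
    have := hB.mul hA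
    rw [hh_def, hU_def]
    refine this.congr_deriv ?_
    beta_reduce
    ring
  -- h is monotone on Iic τ₀
  have hIntbleH : ∀ a b, a ≤ b → b ≤ τ₀ →
      IntervalIntegrable (fun s => 4 * q s ^ 2 * h s) MeasureTheory.volume a b := by
    intro a b hab hb
    apply ContinuousOn.intervalIntegrable
    have hsub : Set.uIcc a b ⊆ Iic τ₀ := by
      rw [Set.uIcc_of_le hab]; exact fun x hx => le_trans hx.2 hb
    have hch : ContinuousOn h (Iic τ₀) := by
      rw [hh_def, hU_def]
      exact (hcp.pow 2).mul ((continuousOn_const.sub (hcp.pow 2)).sub (hcq.pow 2))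
    exact (continuousOn_const.mul ((hcq.mono hsub).pow 2)).mul (hch.mono hsub)
  have hmono : ∀ a b, a ≤ b → b ≤ τ₀ → h a ≤ h b := by
    intro a b hab hb
    have hFTC : (∫ s in a..b, 4 * q s ^ 2 * h s) = h b - h a := by
      apply intervalIntegral.integral_eq_sub_of_hasDerivAt
      · intro x hx
        rw [Set.uIcc_of_le hab] at hx
        exact hd_h x (le_trans hx.2 hb)
      · exact hIntbleH a b hab hb
    have hnn : 0 ≤ ∫ s in a..b, 4 * q s ^ 2 * h s := by
      apply intervalIntegral.integral_nonneg hab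
      intro u hu
      have hu' : u ∈ Iic τ₀ := le_trans hu.2 hb
      have := (hhpos u hu').le
      positivity
    linarith
  -- the monotone extension f and its limit L
  set f : ℝ → ℝ := fun τ => h (min τ τ₀) with hf_def
  have hfmono : Monotone f := by
    intro a b hab
    exact hmono _ _ (min_le_min_right τ₀ hab) (min_le_right _ _)
  have hfnonneg : ∀ τ, 0 ≤ f τ := fun τ => (hhpos _ (min_le_right τ τ₀)).le
  have hbdd : BddBelow (Set.range f) := ⟨0, by rintro x ⟨τ, rfl⟩; exact hfnonneg τ⟩
  set L : ℝ := ⨅ τ, f τ with hL_def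
  have hftend : Tendsto f atBot (nhds L) := tendsto_atBot_ciInf hfmono hbdd
  have hfeq : f =ᶠ[atBot] h := by
    filter_upwards [eventually_le_atBot τ₀] with τ hτ
    simp [hf_def, min_eq_left hτ]
  have hhtend : Tendsto h atBot (nhds L) := hftend.congr' hfeq
  have hLnonneg : 0 ≤ L := le_ciInf hfnonneg
  have hLle : ∀ τ ∈ Iic τ₀, L ≤ h τ := by
    intro τ hτ
    simpa [hf_def, min_eq_left (Set.mem_Iic.mp hτ)] using ciInf_le hbdd τ
  have hgoal : (fun τ => H (p τ) (q τ)) = h := by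
    rw [hh_def, hU_def]; funext τ; simp [H]
  suffices hL0 : L = 0 by
    rw [hgoal, ← hL0]; exact hhtend
  by_contra hL0
  have hLpos : 0 < L := lt_of_le_of_ne hLnonneg (Ne.symm hL0)
  -- FTC for log h: integral of 4 q² is bounded
  have hInt : ∀ a b, a ≤ b → b ≤ τ₀ →
      (∫ s in a..b, 4 * q s ^ 2) = Real.log (h b) - Real.log (h a) := by
    intro a b hab hb
    apply intervalIntegral.integral_eq_sub_of_hasDerivAt
    · intro x hx
      rw [Set.uIcc_of_le hab] at hx
      have hx' : x ∈ Iic τ₀ := le_trans hx.2 hb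
      have := (hd_h x hx').log (ne_of_gt (hhpos x hx'))
      refine this.congr_deriv ?_
      rw [mul_div_assoc, div_self (ne_of_gt (hhpos x hx')), mul_one]
    · apply ContinuousOn.intervalIntegrable
      apply hcq2.mono
      rw [Set.uIcc_of_le hab]
      exact fun x hx => le_trans hx.2 hb
  have hIntC : ∀ a b, a ≤ b → b ≤ τ₀ →
      (∫ s in a..b, 4 * q s ^ 2) ≤ Real.log (1/4) - Real.log L := by
    intro a b hab hb
    rw [hInt a b hab hb]
    have h1 : Real.log (h b) ≤ Real.log (1/4) :=
      Real.log_le_log (hhpos b hb) (hhle b hb)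
    have h2 : Real.log L ≤ Real.log (h a) :=
      Real.log_le_log hLpos (hLle a (le_trans hab hb))
    linarith
  have hIntNN : ∀ a b, a ≤ b → b ≤ τ₀ → 0 ≤ ∫ s in a..b, 4 * q s ^ 2 := by
    intro a b hab hb
    exact intervalIntegral.integral_nonneg hab (fun u _ => by positivity)
  have hIntble : ∀ a b, a ≤ b → b ≤ τ₀ →
      IntervalIntegrable (fun s => 4 * q s ^ 2) MeasureTheory.volume a b := by
    intro a b hab hb
    apply ContinuousOn.intervalIntegrable
    apply hcq2.mono
    rw [Set.uIcc_of_le hab]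
    exact fun x hx => le_trans hx.2 hb
  -- Lipschitz bound for q
  have hqLip : ∀ s ∈ Iic τ₀, ∀ t ∈ Iic τ₀, |q s - q t| ≤ (2 + 4*α) * |s - t| := by
    have hbd : ∀ x ∈ Iic τ₀,
        ‖q x ^ 3 + α * q x ^ 2 - q x - α + 2 * α * p x ^ 2‖ ≤ 2 + 4*α := by
      intro x hx
      rw [Real.norm_eq_abs, abs_le]
      have h1 := hq2le x hx
      have h2 := hp2le x hx
      have h4 := abs_le.mp (hqabs x hx)
      have h5 : q x ^ 2 - q x ^ 3 ≥ 0 := by nlinarith [sq_nonneg (q x)]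
      have h6 : q x ^ 3 + q x ^ 2 ≥ 0 := by nlinarith [sq_nonneg (q x)]
      constructor <;> nlinarith [mul_nonneg hα.le (sub_nonneg.2 h1),
        mul_nonneg hα.le (sq_nonneg (q x)), mul_nonneg hα.le (sq_nonneg (p x)),
        mul_nonneg hα.le (sub_nonneg.2 h2)]
    intro s hs t ht
    have key := Convex.norm_image_sub_le_of_norm_hasDerivWithin_le
      (f := q) (f' := fun x => q x ^ 3 + α * q x ^ 2 - q x - α + 2 * α * p x ^ 2)
      (fun x hx => (hq x hx).hasDerivWithinAt) hbd (convex_Iic τ₀) ht hs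
    simpa [Real.norm_eq_abs] using key
  -- Barbalat: q → 0 at -∞
  have hqtend : Tendsto q atBot (nhds 0) := by
    rw [Metric.tendsto_nhds]
    intro ε hε
    rw [Filter.eventually_atBot]
    by_contra hcon
    push_neg at hcon
    set ε' := min ε 1 with hε'
    have hε'pos : 0 < ε' := lt_min hε one_pos
    set δ := ε' / (2 * (2 + 4*α)) with hδ
    have hδpos : 0 < δ := by positivity
    have hpick : ∀ A : ℝ, ∃ τ, τ ≤ A ∧ τ ≤ τ₀ ∧ ε' ≤ |q τ| := by
      intro A
      obtain ⟨τ, hτA, hτd⟩ := hcon (min A τ₀)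
      refine ⟨τ, le_trans hτA (min_le_left _ _), le_trans hτA (min_le_right _ _), ?_⟩
      rw [Real.dist_eq, sub_zero] at hτd
      exact le_trans (min_le_left _ _) hτd
    choose pick hpick1 hpick2 hpick3 using hpick
    set t : ℕ → ℝ := fun n => Nat.rec (pick τ₀) (fun _ tn => pick (tn - δ)) n with ht_def
    have htS : ∀ n, t (n+1) = pick (t n - δ) := fun n => rfl
    have ht0 : ∀ n, t n ≤ τ₀ := by
      intro n; cases n with
      | zero => exact hpick2 τ₀
      | succ m => rw [htS]; exact hpick2 _
    have htq : ∀ n, ε' ≤ |q (t n)| := by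
      intro n; cases n with
      | zero => exact hpick3 τ₀
      | succ m => rw [htS]; exact hpick3 _
    have htstep : ∀ n, t (n+1) ≤ t n - δ := fun n => by rw [htS]; exact hpick1 _
    have hblock : ∀ n, ε' ^ 2 * δ ≤ ∫ s in (t n - δ)..(t n), 4 * q s ^ 2 := by
      intro n
      have hab : t n - δ ≤ t n := by linarith
      have hbound : ∀ s ∈ Icc (t n - δ) (t n), ε' ^ 2 ≤ 4 * q s ^ 2 := by
        intro s hs
        have hsτ : s ∈ Iic τ₀ := le_trans hs.2 (ht0 n)
        have hd : |q s - q (t n)| ≤ (2 + 4*α) * |s - t n| :=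
          hqLip s hsτ (t n) (ht0 n)
        have h1 : |s - t n| ≤ δ := by
          rw [abs_le]; constructor
          · linarith [hs.1]
          · linarith [hs.2]
        have h2 : |q s - q (t n)| ≤ ε' / 2 := by
          calc |q s - q (t n)| ≤ (2 + 4*α) * |s - t n| := hd
            _ ≤ (2 + 4*α) * δ := by nlinarith
            _ = ε' / 2 := by rw [hδ]; field_simp
        have h3 : ε' / 2 ≤ |q s| := by
          have haa := abs_sub_abs_le_abs_sub (q (t n)) (q s)
          have h4 := htq n
          rw [abs_sub_comm] at h2
          linarith
        have h5 : (ε'/2)^2 ≤ q s ^ 2 := by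
          rw [← sq_abs (q s)]
          exact pow_le_pow_left₀ (by positivity) h3 2
        nlinarith
      calc ε' ^ 2 * δ = ∫ _s in (t n - δ)..(t n), ε' ^ 2 := by
            rw [intervalIntegral.integral_const, smul_eq_mul]; ring
        _ ≤ ∫ s in (t n - δ)..(t n), 4 * q s ^ 2 :=
            intervalIntegral.integral_mono_on hab intervalIntegrable_const
              (hIntble _ _ hab (ht0 n)) hbound
    have hsum : ∀ n : ℕ, (n+1 : ℝ) * (ε'^2 * δ) ≤ ∫ s in (t n - δ)..τ₀, 4 * q s ^ 2 := by
      intro n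
      induction n with
      | zero =>
        have hadd := intervalIntegral.integral_add_adjacent_intervals
          (hIntble (t 0 - δ) (t 0) (by linarith) (ht0 0))
          (hIntble (t 0) τ₀ (ht0 0) le_rfl)
        have hnn := hIntNN (t 0) τ₀ (ht0 0) le_rfl
        have hb := hblock 0
        push_cast
        linarith [hadd, hnn, hb]
      | succ m ih =>
        have hab : t (m+1) - δ ≤ t (m+1) := by linarith
        have hbc : t (m+1) ≤ t m - δ := htstep m
        have hcτ : t m - δ ≤ τ₀ := by linarith [ht0 m]
        have hadd1 := intervalIntegral.integral_add_adjacent_intervals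
          (hIntble (t (m+1) - δ) (t (m+1)) hab (le_trans (ht0 (m+1)) le_rfl))
          (hIntble (t (m+1)) (t m - δ) hbc hcτ)
        have hadd2 := intervalIntegral.integral_add_adjacent_intervals
          (hIntble (t (m+1) - δ) (t m - δ) (le_trans hab hbc) hcτ)
          (hIntble (t m - δ) τ₀ hcτ le_rfl)
        have hnn := hIntNN (t (m+1)) (t m - δ) hbc hcτ
        have hb := hblock (m+1)
        push_cast
        push_cast at ih
        linarith [hadd1, hadd2, hnn, hb, ih]
    obtain ⟨n, hn⟩ := exists_nat_gt ((Real.log (1/4) - Real.log L) / (ε'^2 * δ))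
    have hx : (0:ℝ) < ε'^2 * δ := by positivity
    rw [div_lt_iff₀ hx] at hn
    have h1 := hsum n
    have h2 := hIntC (t n - δ) τ₀ (by linarith [ht0 n]) le_rfl
    nlinarith [hx]
  -- U → 1/2 at -∞
  have hcU : ContinuousOn U (Iic τ₀) := by
    rw [hU_def]
    exact (continuousOn_const.sub (hcp.pow 2)).sub (hcq.pow 2)
  have hcq' : ContinuousOn
      (fun s => q s ^ 3 + α * q s ^ 2 - q s - α + 2 * α * p s ^ 2) (Iic τ₀) :=
    ((((hcq.pow 3).add (continuousOn_const.mul (hcq.pow 2))).sub hcq).sub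
      continuousOn_const).add (continuousOn_const.mul (hcp.pow 2))
  have hd_U : ∀ τ ∈ Iic τ₀, HasDerivAt U (2 * q τ * (q τ + α) * U τ) τ := by
    intro τ hτ
    have h1 := hp τ hτ
    have h2 := hq τ hτ
    have hA : HasDerivAt (fun s => 1 - p s ^ 2 - q s ^ 2)
        (0 - (2 * p τ ^ 1 * (p τ * q τ ^ 2 - α * p τ * q τ))
          - (2 * q τ ^ 1 * (q τ ^ 3 + α * q τ ^ 2 - q τ - α + 2 * α * p τ ^ 2))) τ :=
      ((hasDerivAt_const τ (1:ℝ)).sub (h1.pow 2)).sub (h2.pow 2)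
    rw [hU_def]
    convert hA using 1
    simp only [hU_def]
    ring
  -- smallness of the remainder r(q) = q³ - αq² - q
  have hrem : ∀ s ∈ Iic τ₀, |q s ^ 3 - α * q s ^ 2 - q s| ≤ (2 + α) * |q s| := by
    intro s hs
    have habs : |q s| ≤ 1 := hqabs s hs
    have e0 := abs_nonneg (q s)
    have e1 : q s ^ 2 ≤ |q s| := by nlinarith [sq_abs (q s)]
    have e2 : |q s| ^ 3 ≤ |q s| := by nlinarith [sq_nonneg (|q s|), mul_nonneg e0 (sub_nonneg.2 habs)]
    have e3 : |q s ^ 3| ≤ |q s| := by rw [abs_pow]; exact e2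
    have e4 := abs_le.mp e3
    have e5 := abs_le.mp habs
    rw [abs_le]
    constructor <;> nlinarith [le_abs_self (q s), neg_abs_le (q s),
      mul_nonneg hα.le (sub_nonneg.2 e1)]
  have hUtend : Tendsto U atBot (nhds (1/2 : ℝ)) := by
    by_contra hcon
    rw [Metric.tendsto_nhds] at hcon
    push_neg at hcon
    obtain ⟨ε, hε, hfreq⟩ := hcon
    have hfr : ∀ A : ℝ, ∃ τ ≤ A, ε ≤ |U τ - 1/2| := by
      intro A
      obtain ⟨τ, hτA, hτd⟩ := Filter.frequently_atBot.mp hfreq A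
      refine ⟨τ, hτA, ?_⟩
      rw [Real.dist_eq] at hτd
      linarith [hτd]
    set T : ℝ := 6 / (α * ε) with hT
    have hTpos : 0 < T := by positivity
    set η : ℝ := min (α * ε / (2 * (2 + α))) (ε / (8 * T * (1 + α))) with hη
    have hηpos : 0 < η := lt_min (by positivity) (by positivity)
    have hq' := Metric.tendsto_nhds.mp hqtend η hηpos
    rw [Filter.eventually_atBot] at hq'
    obtain ⟨A₂, hA₂⟩ := hq'
    have hA₂' : ∀ τ ≤ A₂, |q τ| < η := by
      intro τ hτ
      have := hA₂ τ hτ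
      rwa [Real.dist_eq, sub_zero] at this
    set A₁ : ℝ := min A₂ τ₀ with hA₁
    obtain ⟨t, htA₁, htd⟩ := hfr A₁
    have htτ₀ : t ≤ τ₀ := le_trans htA₁ (min_le_right _ _)
    -- bound on U' on Iic A₁
    have hUder : ∀ x ∈ Iic A₁, HasDerivWithinAt U (2 * q x * (q x + α) * U x) (Iic A₁) x := by
      intro x hx
      exact (hd_U x (Set.mem_Iic.mpr (le_trans (Set.mem_Iic.mp hx)
        (min_le_right A₂ τ₀)))).hasDerivWithinAt
    have hUbd : ∀ x ∈ Iic A₁, ‖2 * q x * (q x + α) * U x‖ ≤ ε / (2 * T) := by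
      intro x hx
      have hxτ : x ∈ Iic τ₀ := Set.mem_Iic.mpr (le_trans (Set.mem_Iic.mp hx)
        (min_le_right A₂ τ₀))
      have hxq : |q x| < η := hA₂' x (le_trans (Set.mem_Iic.mp hx) (min_le_left A₂ τ₀))
      have h1 : |q x + α| ≤ 1 + α := by
        have := abs_le.mp (hqabs x hxτ)
        rw [abs_le]; constructor <;> linarith
      have h2 : |U x| ≤ 1 := by
        rw [abs_le]; exact ⟨by linarith [hUpos x hxτ], hUle x hxτ⟩
      have hηle : η ≤ ε / (8 * T * (1 + α)) := min_le_right _ _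
      rw [Real.norm_eq_abs, abs_mul, abs_mul, abs_mul]
      have : |(2:ℝ)| = 2 := by norm_num
      rw [this]
      calc 2 * |q x| * |q x + α| * |U x| ≤ 2 * η * (1 + α) * 1 := by
            apply mul_le_mul _ h2 (abs_nonneg _) (by positivity)
            apply mul_le_mul _ h1 (abs_nonneg _) (by positivity)
            nlinarith [abs_nonneg (q x)]
        _ ≤ ε / (2 * T) := by
            rw [le_div_iff₀ (by positivity : (0:ℝ) < 8 * T * (1 + α))] at hηle
            rw [le_div_iff₀ (by positivity : (0:ℝ) < 2 * T)]
            nlinarith [mul_nonneg (mul_nonneg hηpos.le hTpos.le)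
              (by linarith : (0:ℝ) ≤ 1 + α)]
    have hwin : ∀ s ∈ Icc (t - T) t, |U s - U t| ≤ ε / 2 := by
      intro s hs
      have hsA₁ : s ∈ Iic A₁ := le_trans hs.2 htA₁
      have key := Convex.norm_image_sub_le_of_norm_hasDerivWithin_le hUder hUbd
        (convex_Iic A₁) (Set.mem_Iic.mpr htA₁) hsA₁
      rw [Real.norm_eq_abs, Real.norm_eq_abs] at key
      have h1 : |s - t| ≤ T := by
        rw [abs_le]; constructor
        · linarith [hs.1]
        · linarith [hs.2]
      calc |U s - U t| ≤ ε / (2 * T) * |s - t| := key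
        _ ≤ ε / (2 * T) * T := by
            apply mul_le_mul_of_nonneg_left h1 (by positivity)
        _ = ε / 2 := by field_simp
    -- FTC for q on the window
    have hTsub : t - T ≤ t := by linarith
    have hwinτ : ∀ s ∈ Icc (t - T) t, s ∈ Iic τ₀ := fun s hs => le_trans hs.2 htτ₀
    have hqFTC : (∫ s in (t - T)..t,
        (q s ^ 3 + α * q s ^ 2 - q s - α + 2 * α * p s ^ 2)) = q t - q (t - T) := by
      apply intervalIntegral.integral_eq_sub_of_hasDerivAt
      · intro x hx
        rw [Set.uIcc_of_le hTsub] at hx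
        exact hq x (hwinτ x hx)
      · apply ContinuousOn.intervalIntegrable
        apply hcq'.mono
        rw [Set.uIcc_of_le hTsub]
        exact hwinτ
    have hq'bd : ∀ s ∈ Icc (t - T) t,
        |q s ^ 3 - α * q s ^ 2 - q s| ≤ α * ε / 2 := by
      intro s hs
      have hsτ := hwinτ s hs
      have hsq : |q s| < η := hA₂' s (le_trans hs.2 (le_trans htA₁ (min_le_left _ _)))
      have hηle : η ≤ α * ε / (2 * (2 + α)) := min_le_left _ _
      calc |q s ^ 3 - α * q s ^ 2 - q s| ≤ (2 + α) * |q s| := hrem s hsτ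
        _ ≤ (2 + α) * η := by nlinarith [abs_nonneg (q s)]
        _ ≤ α * ε / 2 := by
            have h2 : (0:ℝ) < 2 * (2 + α) := by positivity
            rw [le_div_iff₀ h2] at hηle
            rw [le_div_iff₀ (by norm_num : (0:ℝ) < 2)]
            nlinarith
    have hb1 := abs_le.mp (hqabs t htτ₀)
    have hb2 := abs_le.mp (hqabs (t - T) (hwinτ _ ⟨le_refl _, hTsub⟩))
    have hT3 : α * ε / 2 * T = 3 := by
      rw [hT]; field_simp; ring
    rcases le_abs.mp htd with hcase | hcase
    · -- U t ≥ 1/2 + ε : q' ≤ -αε/2 on window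
      have hptw : ∀ s ∈ Icc (t - T) t,
          q s ^ 3 + α * q s ^ 2 - q s - α + 2 * α * p s ^ 2 ≤ -(α * ε / 2) := by
        intro s hs
        have hUs : 1/2 + ε/2 ≤ U s := by
          have := abs_le.mp (hwin s hs)
          linarith
        have hid : q s ^ 3 + α * q s ^ 2 - q s - α + 2 * α * p s ^ 2
            = α * (1 - 2 * U s) + (q s ^ 3 - α * q s ^ 2 - q s) := by
          simp only [hU_def]; ring
        rw [hid]
        have h1 : α * (1 - 2 * U s) ≤ α * (-ε) :=
          mul_le_mul_of_nonneg_left (by linarith) hα.le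
        have h2 := (abs_le.mp (hq'bd s hs)).2
        nlinarith [mul_pos hα hε]
      have hle : q t - q (t - T) ≤ -(α * ε / 2) * T := by
        rw [← hqFTC]
        calc (∫ s in (t - T)..t, (q s ^ 3 + α * q s ^ 2 - q s - α + 2 * α * p s ^ 2))
            ≤ ∫ _s in (t - T)..t, (-(α * ε / 2)) := by
              apply intervalIntegral.integral_mono_on hTsub _ intervalIntegrable_const hptw
              apply ContinuousOn.intervalIntegrable
              apply hcq'.mono
              rw [Set.uIcc_of_le hTsub]
              exact hwinτ
          _ = -(α * ε / 2) * T := by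
              rw [intervalIntegral.integral_const, smul_eq_mul]; ring
      rw [neg_mul, hT3] at hle
      linarith
    · -- U t ≤ 1/2 - ε : q' ≥ αε/2 on window
      have hptw : ∀ s ∈ Icc (t - T) t,
          α * ε / 2 ≤ q s ^ 3 + α * q s ^ 2 - q s - α + 2 * α * p s ^ 2 := by
        intro s hs
        have hUs : U s ≤ 1/2 - ε/2 := by
          have := abs_le.mp (hwin s hs)
          linarith
        have hid : q s ^ 3 + α * q s ^ 2 - q s - α + 2 * α * p s ^ 2
            = α * (1 - 2 * U s) + (q s ^ 3 - α * q s ^ 2 - q s) := by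
          simp only [hU_def]; ring
        rw [hid]
        have h1 : α * ε ≤ α * (1 - 2 * U s) :=
          mul_le_mul_of_nonneg_left (by linarith) hα.le
        have h2 := (abs_le.mp (hq'bd s hs)).1
        nlinarith [mul_pos hα hε]
      have hle : α * ε / 2 * T ≤ q t - q (t - T) := by
        rw [← hqFTC]
        calc (α * ε / 2) * T = ∫ _s in (t - T)..t, (α * ε / 2) := by
              rw [intervalIntegral.integral_const, smul_eq_mul]; ring
          _ ≤ ∫ s in (t - T)..t, (q s ^ 3 + α * q s ^ 2 - q s - α + 2 * α * p s ^ 2) := by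
              apply intervalIntegral.integral_mono_on hTsub intervalIntegrable_const _ hptw
              apply ContinuousOn.intervalIntegrable
              apply hcq'.mono
              rw [Set.uIcc_of_le hTsub]
              exact hwinτ
      rw [hT3] at hle
      linarith
  -- hence h → 1/4, so L = 1/4
  have hh14 : Tendsto h atBot (nhds (1/4 : ℝ)) := by
    have hp2t : Tendsto (fun τ => p τ ^ 2) atBot (nhds ((1:ℝ) - 1/2 - 0)) := by
      have : (fun τ => p τ ^ 2) = fun τ => 1 - U τ - q τ ^ 2 := by
        funext τ; simp [hU_def]; ring
      rw [this]
      exact (tendsto_const_nhds.sub hUtend).sub (by simpa using hqtend.pow 2)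
    have := hp2t.mul hUtend
    rw [hh_def]
    norm_num at this ⊢
    exact this
  have hL14 : L = 1/4 := tendsto_nhds_unique hhtend hh14
  -- then h ≡ 1/4 and the solution is the equilibrium
  apply hne
  intro τ hτ
  have h1 : h τ ≤ 1/4 := hhle τ hτ
  have h2 : (1:ℝ)/4 ≤ h τ := hL14 ▸ hLle τ hτ
  have heq : p τ ^ 2 * (1 - p τ ^ 2 - q τ ^ 2) = 1/4 := by
    have : h τ = 1/4 := le_antisymm h1 h2
    simpa [hh_def, hU_def] using this
  have hq0 : q τ = 0 := by
    have hq2 : q τ ^ 2 ≤ 0 := by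
      nlinarith [sq_nonneg (p τ ^ 2 - (1 - p τ ^ 2 - q τ ^ 2)), hball τ hτ, sq_nonneg (q τ)]
    have := sq_nonneg (q τ)
    nlinarith [sq_nonneg (q τ)]
  have hp2 : p τ ^ 2 = 1/2 := by nlinarith [heq, hq0]
  have hpv : p τ = 1 / Real.sqrt 2 := by
    have hs := Real.sqrt_sq (hpos τ hτ).le
    rw [← hs, hp2, show (1:ℝ)/2 = 2⁻¹ by norm_num, Real.sqrt_inv, one_div]
  rw [Prod.ext_iff]
  exact ⟨hpv, hq0⟩
end

section
/- Assume α > 1. (a) If a solution (p,q) of the planar system on an interval I satisfies p(τ) > 0 and p(τ)² + q(τ)² = 1 for all τ ∈ I, then q'(τ) = (q(τ) − α)(q(τ)² − 1) > 0 for all τ ∈ I, so q is strictly increasing on I. (b) If a solution satisfies p(τ) = 0 and −1 < q(τ) < 1 for all τ ∈ I, then q'(τ) = (q(τ) + α)(q(τ)² − 1) < 0 for all τ ∈ I, so q is strictly decreasing on I. (Thus for α > 1 the boundary of the phase space is a heteroclinic cycle joining (0,−1) to (0,1) along the circle arc and (0,1) to (0,−1) along the q-axis.) -/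
/-- Assume `α > 1`.
(a) If a solution `(p,q)` of the planar system on an interval `I` satisfies `p(τ) > 0` and
`p(τ)² + q(τ)² = 1` for all `τ ∈ I`, then `q'(τ) = (q(τ) − α)(q(τ)² − 1) > 0` on `I`,
so `q` is strictly increasing on `I`.
(b) If a solution satisfies `p(τ) = 0` and `−1 < q(τ) < 1` for all `τ ∈ I`, then
`q'(τ) = (q(τ) + α)(q(τ)² − 1) < 0` on `I`, so `q` is strictly decreasing on `I`. -/
theorem stmt11 (α : ℝ) (hα : 1 < α) :
    (∀ (I : Set ℝ), I.OrdConnected → ∀ p q : ℝ → ℝ,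
      (∀ τ ∈ I, HasDerivAt p (p τ * (q τ) ^ 2 - α * p τ * q τ) τ) →
      (∀ τ ∈ I,
        HasDerivAt q ((q τ) ^ 3 + α * (q τ) ^ 2 - q τ - α + 2 * α * (p τ) ^ 2) τ) →
      (∀ τ ∈ I, 0 < p τ ∧ (p τ) ^ 2 + (q τ) ^ 2 = 1) →
      (∀ τ ∈ I,
        (q τ) ^ 3 + α * (q τ) ^ 2 - q τ - α + 2 * α * (p τ) ^ 2
          = (q τ - α) * ((q τ) ^ 2 - 1) ∧
        0 < (q τ - α) * ((q τ) ^ 2 - 1)) ∧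
      StrictMonoOn q I) ∧
    (∀ (I : Set ℝ), I.OrdConnected → ∀ p q : ℝ → ℝ,
      (∀ τ ∈ I, HasDerivAt p (p τ * (q τ) ^ 2 - α * p τ * q τ) τ) →
      (∀ τ ∈ I,
        HasDerivAt q ((q τ) ^ 3 + α * (q τ) ^ 2 - q τ - α + 2 * α * (p τ) ^ 2) τ) →
      (∀ τ ∈ I, p τ = 0 ∧ -1 < q τ ∧ q τ < 1) →
      (∀ τ ∈ I,
        (q τ) ^ 3 + α * (q τ) ^ 2 - q τ - α + 2 * α * (p τ) ^ 2
          = (q τ + α) * ((q τ) ^ 2 - 1) ∧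
        (q τ + α) * ((q τ) ^ 2 - 1) < 0) ∧
      StrictAntiOn q I) := by

  constructor
  · intro I hI p q hp hq hcond
    have key : ∀ τ ∈ I,
        (q τ) ^ 3 + α * (q τ) ^ 2 - q τ - α + 2 * α * (p τ) ^ 2
          = (q τ - α) * ((q τ) ^ 2 - 1) ∧
        0 < (q τ - α) * ((q τ) ^ 2 - 1) := by
      intro τ hτ
      obtain ⟨hp0, hcirc⟩ := hcond τ hτ
      have hq2 : (q τ) ^ 2 < 1 := by nlinarith
      constructor
      · nlinarith
      · have h1 : q τ - α < 0 := by nlinarith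
        nlinarith
    refine ⟨key, ?_⟩
    have hconv : Convex ℝ I := hI.convex
    apply StrictMonoOn.mono (s := I) ?_ le_rfl
    apply strictMonoOn_of_deriv_pos hconv
    · intro τ hτ
      exact ((hq τ hτ).continuousAt).continuousWithinAt
    · intro τ hτ
      have hτI : τ ∈ I := interior_subset hτ
      have := (hq τ hτI).deriv
      rw [this]
      have := key τ hτI
      linarith [this.2, this.1 ▸ this.2]
  · intro I hI p q hp hq hcond
    have key : ∀ τ ∈ I,
        (q τ) ^ 3 + α * (q τ) ^ 2 - q τ - α + 2 * α * (p τ) ^ 2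
          = (q τ + α) * ((q τ) ^ 2 - 1) ∧
        (q τ + α) * ((q τ) ^ 2 - 1) < 0 := by
      intro τ hτ
      obtain ⟨hp0, hq1, hq2⟩ := hcond τ hτ
      constructor
      · rw [hp0]; ring
      · have h1 : 0 < q τ + α := by linarith
        have h2 : (q τ) ^ 2 - 1 < 0 := by nlinarith
        nlinarith
    refine ⟨key, ?_⟩
    have hconv : Convex ℝ I := hI.convex
    apply strictAntiOn_of_deriv_neg hconv
    · intro τ hτ
      exact ((hq τ hτ).continuousAt).continuousWithinAt
    · intro τ hτ
      have hτI : τ ∈ I := interior_subset hτ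
      rw [(hq τ hτI).deriv]
      have h := key τ hτI
      rw [h.1]; exact h.2
end

section
/- Assume α > 1. Let (p,q) be a solution of the planar system on (−∞, τ₀] with (p(τ), q(τ)) ∈ Ω for all τ ≤ τ₀, not identically equal to the equilibrium (1/√2, 0). Then exp(−4τ) · H(p(τ), q(τ)) → ∞ as τ → −∞; that is, H tends to zero strictly more slowly than exp(4τ) in the approach to the initial singularity. -/
set_option maxHeartbeats 2000000

open Filter Set Real

/-- For `α > 1`, along every non-stationary physical solution on `(−∞, τ₀]` one has
`exp(−4τ) · H(p(τ), q(τ)) → ∞` as `τ → −∞`: `H` tends to zero strictly more slowly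
than `exp(4τ)` in the approach to the initial singularity. -/
theorem stmt14 (α : ℝ) (hα : 1 < α) (τ₀ : ℝ) (p q : ℝ → ℝ)
    (hp : ∀ τ ∈ Set.Iic τ₀, HasDerivAt p (p τ * (q τ) ^ 2 - α * p τ * q τ) τ)
    (hq : ∀ τ ∈ Set.Iic τ₀,
      HasDerivAt q ((q τ) ^ 3 + α * (q τ) ^ 2 - q τ - α + 2 * α * (p τ) ^ 2) τ)
    (hΩ : ∀ τ ∈ Set.Iic τ₀, (p τ, q τ) ∈ Omega)
    (hne : ¬ ∀ τ ∈ Set.Iic τ₀, (p τ, q τ) = ((1 / Real.sqrt 2, 0) : ℝ × ℝ)) :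
    Filter.Tendsto (fun τ => Real.exp (-4 * τ) * H (p τ) (q τ))
      Filter.atBot Filter.atTop := by
  have hα0 : (0:ℝ) < α := by linarith
  -- basic pointwise facts
  have hpos : ∀ τ ∈ Set.Iic τ₀, 0 < p τ := fun τ hτ => (hΩ τ hτ).1
  have hball : ∀ τ ∈ Set.Iic τ₀, p τ ^ 2 + q τ ^ 2 < 1 := fun τ hτ => (hΩ τ hτ).2
  have hq2 : ∀ τ ∈ Set.Iic τ₀, q τ ^ 2 < 1 := by
    intro τ hτ
    nlinarith [hpos τ hτ, hball τ hτ, sq_nonneg (p τ)]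
  have hp2 : ∀ τ ∈ Set.Iic τ₀, p τ ^ 2 < 1 := by
    intro τ hτ
    nlinarith [hball τ hτ, sq_nonneg (q τ)]
  have hHpos : ∀ τ ∈ Set.Iic τ₀, 0 < H (p τ) (q τ) := by
    intro τ hτ
    have h1 := hpos τ hτ; have h2 := hball τ hτ
    simp only [H]
    have h3 : 0 < 1 - p τ ^ 2 - q τ ^ 2 := by linarith
    positivity
  have hHle : ∀ τ ∈ Set.Iic τ₀, H (p τ) (q τ) ≤ p τ ^ 2 := by
    intro τ hτ
    simp only [H]
    nlinarith [sq_nonneg (p τ), sq_nonneg (q τ), sq_nonneg (p τ ^ 2 + q τ ^ 2)]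
  -- derivative of H along the flow: H' = 4 q² H
  have hHd : ∀ τ ∈ Set.Iic τ₀, HasDerivAt (fun t => H (p t) (q t))
      (4 * (q τ) ^ 2 * H (p τ) (q τ)) τ := by
    intro τ hτ
    have h1 := hp τ hτ
    have h2 := hq τ hτ
    have hd := (h1.pow 2).mul (((hasDerivAt_const τ (1:ℝ)).sub (h1.pow 2)).sub (h2.pow 2))
    simp only [H]
    refine hd.congr_deriv ?_
    simp only [Pi.pow_apply, Pi.sub_apply]
    push_cast
    ring
  set G : ℝ → ℝ := fun τ => Real.exp (-4 * τ) * H (p τ) (q τ) with hGdef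
  have hGd : ∀ τ ∈ Set.Iic τ₀, HasDerivAt G (4 * ((q τ) ^ 2 - 1) * G τ) τ := by
    intro τ hτ
    have he : HasDerivAt (fun t : ℝ => Real.exp (-4 * t)) (Real.exp (-4 * τ) * (-4)) τ := by
      have h0 : HasDerivAt (fun t : ℝ => -4 * t) ((-4 : ℝ)) τ := by
        simpa using (hasDerivAt_id τ).const_mul (-4 : ℝ)
      exact h0.exp
    have := he.mul (hHd τ hτ)
    rw [hGdef]
    refine this.congr_deriv ?_
    simp only [hGdef]
    ring
  have hGpos : ∀ τ ∈ Set.Iic τ₀, 0 < G τ :=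
    fun τ hτ => mul_pos (Real.exp_pos _) (hHpos τ hτ)
  -- G is antitone on Iic τ₀
  have hGanti : AntitoneOn G (Set.Iic τ₀) := by
    apply antitoneOn_of_hasDerivWithinAt_nonpos (f' := fun τ => 4 * ((q τ) ^ 2 - 1) * G τ)
      (convex_Iic τ₀)
    · exact fun τ hτ => (hGd τ hτ).continuousAt.continuousWithinAt
    · intro x hx
      rw [interior_Iic] at hx
      exact ((hGd x (Set.mem_Iic.2 (le_of_lt hx))).hasDerivWithinAt)
    · intro x hx
      rw [interior_Iic] at hx
      have h1 := hq2 x (Set.mem_Iic.2 (le_of_lt hx))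
      have h2 := hGpos x (Set.mem_Iic.2 (le_of_lt hx))
      nlinarith
  by_contra hcon
  rw [tendsto_atTop] at hcon
  push_neg at hcon
  obtain ⟨M, hM⟩ := hcon
  rw [frequently_atBot] at hM
  have hMb : ∀ τ ∈ Set.Iic τ₀, G τ < M := by
    intro τ hτ
    obtain ⟨s, hs, hsM⟩ := hM τ
    exact lt_of_le_of_lt (hGanti (Set.mem_Iic.2 (hs.trans hτ)) hτ hs) hsM
  set ε : ℝ := G τ₀ with hεdef
  have hε : 0 < ε := hGpos τ₀ (Set.mem_Iic.2 (le_refl _))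
  have hεle : ∀ τ ∈ Set.Iic τ₀, ε ≤ G τ := fun τ hτ => hGanti hτ (le_refl τ₀) hτ
  have hM0 : 0 < M := lt_trans hε (hMb τ₀ (Set.mem_Iic.2 (le_refl _)))
  -- φ = log G
  set φ : ℝ → ℝ := fun τ => Real.log (G τ) with hφdef
  have hφd : ∀ τ ∈ Set.Iic τ₀, HasDerivAt φ (4 * ((q τ) ^ 2 - 1)) τ := by
    intro τ hτ
    have := (hGd τ hτ).log (ne_of_gt (hGpos τ hτ))
    rw [hφdef]
    convert this using 1
    rw [mul_div_assoc, div_self (ne_of_gt (hGpos τ hτ)), mul_one]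
  have hφub : ∀ τ ∈ Set.Iic τ₀, φ τ ≤ Real.log M :=
    fun τ hτ => Real.log_le_log (hGpos τ hτ) (le_of_lt (hMb τ hτ))
  have hφlb : ∀ τ ∈ Set.Iic τ₀, Real.log ε ≤ φ τ :=
    fun τ hτ => Real.log_le_log hε (hεle τ hτ)
  have hφanti : ∀ s ∈ Set.Iic τ₀, ∀ t ∈ Set.Iic τ₀, s ≤ t → φ t ≤ φ s :=
    fun s hs t ht hst => Real.log_le_log (hGpos t ht) (hGanti hs ht hst)
  -- Lipschitz bound for 1 - q²
  set L : ℝ := 4 + 8 * α with hLdef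
  have hL : 0 < L := by rw [hLdef]; linarith
  set Q' : ℝ → ℝ := fun τ => (q τ) ^ 3 + α * (q τ) ^ 2 - q τ - α + 2 * α * (p τ) ^ 2 with hQ'def
  have hqLip : ∀ s ∈ Set.Iic τ₀, ∀ t ∈ Set.Iic τ₀,
      |(1 - q t ^ 2) - (1 - q s ^ 2)| ≤ L * |t - s| := by
    intro s hs t ht
    have hder : ∀ x ∈ Set.Iic τ₀,
        HasDerivWithinAt (fun τ => 1 - q τ ^ 2) (-(2 * q x * Q' x)) (Set.Iic τ₀) x := by
      intro x hx
      have := ((hasDerivAt_const x (1:ℝ)).sub ((hq x hx).pow 2)).hasDerivWithinAt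
        (s := Set.Iic τ₀)
      refine this.congr_deriv ?_
      rw [hQ'def]
      push_cast
      ring
    have hbound : ∀ x ∈ Set.Iic τ₀, ‖-(2 * q x * Q' x)‖ ≤ L := by
      intro x hx
      have h1 : q x ^ 2 ≤ 1 := le_of_lt (hq2 x hx)
      have h2 : p x ^ 2 ≤ 1 := le_of_lt (hp2 x hx)
      have h3 : -1 ≤ q x := by nlinarith
      have h4 : q x ≤ 1 := by nlinarith
      have h5 : 0 ≤ p x ^ 2 := sq_nonneg _
      have hq4 : q x ^ 4 ≤ 1 := by nlinarith
      have hq3u : q x ^ 3 ≤ 1 := by nlinarith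
      have hq3l : -1 ≤ q x ^ 3 := by nlinarith
      have hqp1 : q x * p x ^ 2 ≤ 1 := by nlinarith
      have hqp2 : -1 ≤ q x * p x ^ 2 := by nlinarith
      have a1 : 0 ≤ α * (1 - q x ^ 3) := mul_nonneg (le_of_lt hα0) (by linarith)
      have a2 : 0 ≤ α * (1 + q x ^ 3) := mul_nonneg (le_of_lt hα0) (by linarith)
      have a3 : 0 ≤ α * (1 - q x) := mul_nonneg (le_of_lt hα0) (by linarith)
      have a4 : 0 ≤ α * (1 + q x) := mul_nonneg (le_of_lt hα0) (by linarith)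
      have a5 : 0 ≤ α * (1 - q x * p x ^ 2) := mul_nonneg (le_of_lt hα0) (by linarith)
      have a6 : 0 ≤ α * (1 + q x * p x ^ 2) := mul_nonneg (le_of_lt hα0) (by linarith)
      rw [Real.norm_eq_abs, abs_le]
      constructor <;> · simp only [hQ'def, hLdef]; nlinarith [sq_nonneg (q x)]
    have key := Convex.norm_image_sub_le_of_norm_hasDerivWithin_le hder hbound (convex_Iic τ₀) hs ht
    simpa using key
  -- key smallness lemma: 1 - q² → 0 as τ → -∞
  have hsmall : ∀ δ : ℝ, 0 < δ → ∀ᶠ τ in atBot, 1 - q τ ^ 2 < δ := by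
    intro δ hδ
    by_contra hcon2
    rw [Filter.not_eventually] at hcon2
    push_neg at hcon2
    rw [frequently_atBot] at hcon2
    set w : ℝ := δ / (2 * L) with hwdef
    have hw : 0 < w := by rw [hwdef]; positivity
    set D : ℝ := 2 * δ * w with hDdef
    have hD : 0 < D := by rw [hDdef]; positivity
    -- a "bump" at s costs at least 2δw of decrease of φ
    have bump : ∀ s ∈ Set.Iic τ₀, δ ≤ 1 - q s ^ 2 → φ s + D ≤ φ (s - w) := by
      intro s hs hδs
      have hsub : Set.Icc (s - w) s ⊆ Set.Iic τ₀ := fun x hx => le_trans hx.2 hs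
      have hchi : AntitoneOn (fun τ => φ τ + 2 * δ * τ) (Set.Icc (s - w) s) := by
        apply antitoneOn_of_hasDerivWithinAt_nonpos
          (f' := fun τ => 4 * ((q τ) ^ 2 - 1) + 2 * δ) (convex_Icc _ _)
        · intro x hx
          exact ((hφd x (hsub hx)).add
            ((hasDerivAt_id x).const_mul (2 * δ))).continuousAt.continuousWithinAt
        · intro x hx
          rw [interior_Icc] at hx
          have hx' : x ∈ Set.Iic τ₀ := hsub ⟨le_of_lt hx.1, le_of_lt hx.2⟩
          have := ((hφd x hx').add ((hasDerivAt_id x).const_mul (2 * δ))).hasDerivWithinAt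
            (s := interior (Set.Icc (s - w) s))
          refine this.congr_deriv ?_
          ring
        · intro x hx
          rw [interior_Icc] at hx
          have hx' : x ∈ Set.Iic τ₀ := hsub ⟨le_of_lt hx.1, le_of_lt hx.2⟩
          have hlip := hqLip s hs x hx'
          have hxs : |x - s| ≤ w := by
            rw [abs_le]; constructor <;> [linarith [hx.1]; linarith [hx.2]]
          have : |(1 - q x ^ 2) - (1 - q s ^ 2)| ≤ L * w :=
            le_trans hlip (by nlinarith)
          have hLw : L * w = δ / 2 := by
            rw [hwdef]; field_simp
          rw [hLw, abs_le] at this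
          linarith [this.1]
      have h1 : s - w ∈ Set.Icc (s - w) s := ⟨le_refl _, by linarith⟩
      have h2 : s ∈ Set.Icc (s - w) s := ⟨by linarith, le_refl _⟩
      have := hchi h1 h2 (by linarith)
      simp only at this
      rw [hDdef]
      linarith
    -- chain of bumps
    have chain : ∀ n : ℕ, ∃ t ∈ Set.Iic τ₀, φ τ₀ + n * D ≤ φ t := by
      intro n
      induction n with
      | zero => exact ⟨τ₀, Set.mem_Iic.2 (le_refl _), by simp⟩
      | succ n ih =>
        obtain ⟨t, ht, hφt⟩ := ih
        obtain ⟨s, hst, hsδ⟩ := hcon2 t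
        have hs : s ∈ Set.Iic τ₀ := Set.mem_Iic.2 (le_trans hst (Set.mem_Iic.1 ht))
        have h1 := bump s hs hsδ
        have h2 : φ t ≤ φ s := hφanti s hs t ht hst
        refine ⟨s - w, Set.mem_Iic.2 (le_trans (by linarith : s - w ≤ s) (Set.mem_Iic.1 hs)), ?_⟩
        push_cast
        linarith
    obtain ⟨n, hn⟩ := exists_nat_gt ((Real.log M - Real.log ε) / D)
    obtain ⟨t, ht, hφt⟩ := chain n
    have hn2 : Real.log M - Real.log ε < n * D := by
      rw [div_lt_iff₀ hD] at hn
      linarith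
    have := hφub t ht
    have := hφlb τ₀ (Set.mem_Iic.2 (le_refl _))
    linarith
  -- choose δ₀ via m
  set m : ℝ := min ((α - 1) / (2 * (2 + α))) (1 / 2) with hmdef
  have hm0 : 0 < m := by
    rw [hmdef]
    apply lt_min
    · exact div_pos (by linarith) (by linarith)
    · norm_num
  have hm12 : m ≤ 1 / 2 := min_le_right _ _
  have hmα : m ≤ (α - 1) / (2 * (2 + α)) := min_le_left _ _
  set s0 : ℝ := 1 - m with hs0def
  have hs0l : (1:ℝ) / 2 ≤ s0 := by rw [hs0def]; linarith
  have hs0u : s0 < 1 := by rw [hs0def]; linarith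
  have hs0pos : 0 < s0 := by linarith
  have hmul : m * (2 * (2 + α)) ≤ α - 1 :=
    (le_div_iff₀ (by linarith : (0:ℝ) < 2 * (2 + α))).1 hmα
  have hαs0 : 1 < α * s0 := by
    rw [hs0def]
    nlinarith
  set c : ℝ := 2 + (α - 1) / 2 with hcdef
  have hcs0 : c ≤ s0 ^ 2 + α * s0 := by
    rw [hcdef, hs0def]
    nlinarith [sq_nonneg m]
  set δ0 : ℝ := 1 - s0 ^ 2 with hδ0def
  have hδ0 : 0 < δ0 := by rw [hδ0def]; nlinarith
  obtain ⟨T1, hT1⟩ := eventually_atBot.mp (hsmall δ0 hδ0)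
  set T : ℝ := min T1 τ₀ with hTdef
  have hTτ₀ : T ≤ τ₀ := min_le_right _ _
  have hqbig : ∀ τ ≤ T, s0 ^ 2 < q τ ^ 2 := by
    intro τ hτ
    have := hT1 τ (le_trans hτ (min_le_left _ _))
    rw [hδ0def] at this
    linarith
  have hqT0 : q T ≠ 0 := by
    intro h0
    have := hqbig T (le_refl _)
    rw [h0] at this
    nlinarith
  have hqcont : ContinuousOn q (Set.Iic τ₀) :=
    fun τ hτ => (hq τ hτ).continuousAt.continuousWithinAt
  have hqne : ∀ τ ≤ T, q τ ≠ 0 := by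
    intro τ hτ h0
    have := hqbig τ hτ
    rw [h0] at this
    nlinarith
  -- constant sign of q on Iic T
  have hsign : (∀ τ ≤ T, q τ < 0) ∨ (∀ τ ≤ T, 0 < q τ) := by
    rcases lt_or_gt_of_ne hqT0 with hneg | hposq
    · left
      intro τ hτ
      by_contra hge
      push_neg at hge
      have hτpos : 0 < q τ := lt_of_le_of_ne hge (Ne.symm (hqne τ hτ))
      have hcont : ContinuousOn q (Set.Icc τ T) :=
        hqcont.mono (fun x hx => le_trans hx.2 hTτ₀)
      have : (0:ℝ) ∈ Set.Icc (q T) (q τ) := ⟨le_of_lt hneg, le_of_lt hτpos⟩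
      obtain ⟨x, hx, hx0⟩ := intermediate_value_Icc' hτ hcont this
      exact hqne x hx.2 hx0
    · right
      intro τ hτ
      by_contra hge
      push_neg at hge
      have hτneg : q τ < 0 := lt_of_le_of_ne hge (hqne τ hτ)
      have hcont : ContinuousOn q (Set.Icc τ T) :=
        hqcont.mono (fun x hx => le_trans hx.2 hTτ₀)
      have : (0:ℝ) ∈ Set.Icc (q τ) (q T) := ⟨le_of_lt hτneg, le_of_lt hposq⟩
      obtain ⟨x, hx, hx0⟩ := intermediate_value_Icc hτ hcont this
      exact hqne x hx.2 hx0
  rcases hsign with hneg | hposq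
  · -- q < -s0 case: p decays too fast
    have hqs0 : ∀ τ ≤ T, q τ < -s0 := by
      intro τ hτ
      have h1 := hqbig τ hτ
      have h2 := hneg τ hτ
      nlinarith
    have hcoef : ∀ τ ≤ T, c ≤ q τ ^ 2 - α * q τ := by
      intro τ hτ
      have h1 := hqs0 τ hτ
      nlinarith [hcs0]
    -- f = p * exp(-c τ) is monotone on Iic T
    have hfd : ∀ τ ∈ Set.Iic T, HasDerivAt (fun t => p t * Real.exp (-c * t))
        (Real.exp (-c * τ) * p τ * (q τ ^ 2 - α * q τ - c)) τ := by
      intro τ hτ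
      have hτ' : τ ∈ Set.Iic τ₀ := le_trans hτ hTτ₀
      have he : HasDerivAt (fun t : ℝ => Real.exp (-c * t)) (Real.exp (-c * τ) * (-c)) τ := by
        have h0 : HasDerivAt (fun t : ℝ => -c * t) ((-c : ℝ)) τ := by
          simpa using (hasDerivAt_id τ).const_mul (-c : ℝ)
        exact h0.exp
      have := (hp τ hτ').mul he
      refine this.congr_deriv ?_
      ring
    have hfmono : MonotoneOn (fun t => p t * Real.exp (-c * t)) (Set.Iic T) := by
      apply monotoneOn_of_hasDerivWithinAt_nonneg
        (f' := fun τ => Real.exp (-c * τ) * p τ * (q τ ^ 2 - α * q τ - c)) (convex_Iic T)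
      · exact fun τ hτ => (hfd τ hτ).continuousAt.continuousWithinAt
      · intro x hx
        rw [interior_Iic] at hx
        exact (hfd x (Set.mem_Iic.2 (le_of_lt hx))).hasDerivWithinAt
      · intro x hx
        rw [interior_Iic] at hx
        have h1 := hcoef x (le_of_lt hx)
        have h2 := hpos x (Set.mem_Iic.2 (le_trans (le_of_lt hx) hTτ₀))
        have h3 := Real.exp_pos (-c * x)
        exact mul_nonneg (mul_nonneg h3.le h2.le) (by linarith)
    set K : ℝ := p T * Real.exp (-c * T) with hKdef
    have hK : 0 < K := mul_pos (hpos T (Set.mem_Iic.2 hTτ₀)) (Real.exp_pos _)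
    have hpbound : ∀ τ ≤ T, p τ ≤ K * Real.exp (c * τ) := by
      intro τ hτ
      have := hfmono (Set.mem_Iic.2 hτ) (Set.mem_Iic.2 (le_refl T)) hτ
      have hexp : Real.exp (-c * τ) * Real.exp (c * τ) = 1 := by
        rw [← Real.exp_add]; ring_nf; exact Real.exp_zero
      calc p τ = p τ * Real.exp (-c * τ) * Real.exp (c * τ) := by
            rw [mul_assoc, hexp, mul_one]
        _ ≤ K * Real.exp (c * τ) := by
            apply mul_le_mul_of_nonneg_right _ (le_of_lt (Real.exp_pos _))
            rw [hKdef]; exact this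
    -- ε e^{4τ} ≤ H ≤ K² e^{2cτ}
    have hfinal : ∀ τ ≤ T, ε ≤ K ^ 2 * Real.exp ((α - 1) * τ) := by
      intro τ hτ
      have hτ' : τ ∈ Set.Iic τ₀ := le_trans hτ hTτ₀
      have h1 : ε ≤ G τ := hεle τ hτ'
      have h2 : H (p τ) (q τ) ≤ p τ ^ 2 := hHle τ hτ'
      have h3 : p τ ^ 2 ≤ (K * Real.exp (c * τ)) ^ 2 := by
        have := hpbound τ hτ
        have hp0 := hpos τ hτ'
        nlinarith
      have h4 : ε * Real.exp (4 * τ) ≤ H (p τ) (q τ) := by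
        have hGτ : ε ≤ Real.exp (-4 * τ) * H (p τ) (q τ) := h1
        have he4 : (0:ℝ) < Real.exp (4 * τ) := Real.exp_pos _
        have hexp : Real.exp (-4 * τ) * Real.exp (4 * τ) = 1 := by
          rw [← Real.exp_add]; ring_nf; exact Real.exp_zero
        calc ε * Real.exp (4 * τ) ≤ (Real.exp (-4 * τ) * H (p τ) (q τ)) * Real.exp (4 * τ) :=
              mul_le_mul_of_nonneg_right hGτ (le_of_lt he4)
          _ = H (p τ) (q τ) := by rw [mul_comm (Real.exp (-4*τ)) _, mul_assoc, hexp, mul_one]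
      have h5 : (K * Real.exp (c * τ)) ^ 2 = K ^ 2 * Real.exp ((α - 1) * τ) * Real.exp (4 * τ) := by
        rw [mul_pow, sq (Real.exp (c * τ)), ← Real.exp_add, mul_assoc, ← Real.exp_add]
        congr 2
        rw [hcdef]; ring
      have h6 : ε * Real.exp (4 * τ) ≤ K ^ 2 * Real.exp ((α - 1) * τ) * Real.exp (4 * τ) := by
        calc ε * Real.exp (4 * τ) ≤ H (p τ) (q τ) := h4
          _ ≤ p τ ^ 2 := h2
          _ ≤ (K * Real.exp (c * τ)) ^ 2 := h3
          _ = _ := h5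
      have he4 : (0:ℝ) < Real.exp (4 * τ) := Real.exp_pos _
      exact le_of_mul_le_mul_right h6 he4
    have htend : Tendsto (fun τ => K ^ 2 * Real.exp ((α - 1) * τ)) atBot (nhds 0) := by
      have h1 : Tendsto (fun τ : ℝ => (α - 1) * τ) atBot atBot :=
        (tendsto_const_mul_atBot_of_pos (by linarith : (0:ℝ) < α - 1)).2 tendsto_id
      have h2 : Tendsto (fun τ => Real.exp ((α - 1) * τ)) atBot (nhds 0) :=
        Real.tendsto_exp_atBot.comp h1
      simpa using h2.const_mul (K ^ 2)
    have := (htend.eventually_lt_const hε).and (eventually_le_atBot T)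
    obtain ⟨τ, hτ1, hτ2⟩ := this.exists
    exact absurd (hfinal τ hτ2) (not_le.2 hτ1)
  · -- q > s0 case: p is nonincreasing, contradicting p → 0
    have hqs0 : ∀ τ ≤ T, s0 < q τ := by
      intro τ hτ
      have h1 := hqbig τ hτ
      have h2 := hposq τ hτ
      nlinarith
    have hcoef : ∀ τ ≤ T, q τ ^ 2 - α * q τ < 0 := by
      intro τ hτ
      have h1 := hqs0 τ hτ
      have h2 := hq2 τ (Set.mem_Iic.2 (le_trans hτ hTτ₀))
      nlinarith [hαs0]
    have hpanti : AntitoneOn p (Set.Iic T) := by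
      apply antitoneOn_of_hasDerivWithinAt_nonpos
        (f' := fun τ => p τ * q τ ^ 2 - α * p τ * q τ) (convex_Iic T)
      · exact fun τ hτ => (hp τ (Set.mem_Iic.2 (le_trans hτ hTτ₀))).continuousAt.continuousWithinAt
      · intro x hx
        rw [interior_Iic] at hx
        exact (hp x (Set.mem_Iic.2 (le_trans (le_of_lt hx) hTτ₀))).hasDerivWithinAt
      · intro x hx
        rw [interior_Iic] at hx
        have h1 := hcoef x (le_of_lt hx)
        have h2 := hpos x (Set.mem_Iic.2 (le_trans (le_of_lt hx) hTτ₀))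
        nlinarith
    have hpT : 0 < p T := hpos T (Set.mem_Iic.2 hTτ₀)
    obtain ⟨T2, hT2⟩ := eventually_atBot.mp (hsmall (p T ^ 2) (by positivity))
    set τ' : ℝ := min T2 T with hτ'def
    have hτ'T : τ' ≤ T := min_le_right _ _
    have h1 : 1 - q τ' ^ 2 < p T ^ 2 := hT2 τ' (min_le_left _ _)
    have h2 : p T ≤ p τ' := hpanti (Set.mem_Iic.2 hτ'T) (Set.mem_Iic.2 (le_refl T)) hτ'T
    have h3 : p τ' ^ 2 + q τ' ^ 2 < 1 := hball τ' (Set.mem_Iic.2 (le_trans hτ'T hTτ₀))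
    nlinarith
end

section
/- (Theorem 1: existence of an initial singularity.) For every λ > 0 and every t₀ ∈ ℝ there is no non-trivial scalar field cosmology defined on the whole interval (−∞, t₀]. Equivalently: if K, φ : ℝ → ℝ satisfy, for all t ≤ t₀, K'(t) = −(3/2) φ'(t)², φ''(t) = −K(t) φ'(t) − λ(exp(λ φ(t)) − exp(−λ φ(t))), K(t)² = 3(exp(λ φ(t)) + exp(−λ φ(t))) + (3/2) φ'(t)² and K(t) > 0, and if φ'(t₁) ≠ 0 for some t₁ ≤ t₀, then a contradiction follows. Hence every non-trivial expanding solution has a past interval of existence that is bounded below (an initial space-time singularity is reached after finite proper time). -/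
open Real Set

set_option maxHeartbeats 1000000

private lemma anti_of_deriv {f f' : ℝ → ℝ} {a b : ℝ} (hab : a ≤ b)
    (hd : ∀ s ∈ Set.Icc a b, HasDerivAt f (f' s) s)
    (hle : ∀ s ∈ Set.Icc a b, f' s ≤ 0) : f b ≤ f a := by
  have hc : ContinuousOn f (Set.Icc a b) :=
    fun s hs => (hd s hs).continuousAt.continuousWithinAt
  have hdiff : DifferentiableOn ℝ f (interior (Set.Icc a b)) := fun s hs =>
    ((hd s (interior_subset hs)).differentiableAt).differentiableWithinAt
  have h := antitoneOn_of_deriv_nonpos (convex_Icc a b) hc hdiff (fun s hs => by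
    rw [(hd s (interior_subset hs)).deriv]; exact hle s (interior_subset hs))
  exact h (Set.left_mem_Icc.2 hab) (Set.right_mem_Icc.2 hab) hab

private lemma mono_of_deriv {f f' : ℝ → ℝ} {a b : ℝ} (hab : a ≤ b)
    (hd : ∀ s ∈ Set.Icc a b, HasDerivAt f (f' s) s)
    (hle : ∀ s ∈ Set.Icc a b, 0 ≤ f' s) : f a ≤ f b := by
  have hc : ContinuousOn f (Set.Icc a b) :=
    fun s hs => (hd s hs).continuousAt.continuousWithinAt
  have hdiff : DifferentiableOn ℝ f (interior (Set.Icc a b)) := fun s hs =>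
    ((hd s (interior_subset hs)).differentiableAt).differentiableWithinAt
  have h := monotoneOn_of_deriv_nonneg (convex_Icc a b) hc hdiff (fun s hs => by
    rw [(hd s (interior_subset hs)).deriv]; exact hle s (interior_subset hs))
  exact h (Set.left_mem_Icc.2 hab) (Set.right_mem_Icc.2 hab) hab

/-- (Theorem 1: existence of an initial singularity.) For every `λ > 0` and `t₀`, there
is no non-trivial scalar field cosmology with potential `V(φ) = exp(λφ) + exp(−λφ)`
defined on the whole interval `(−∞, t₀]`: if `K, φ` (with `ψ = φ'`) satisfy the field
equations, the Friedmann constraint and `K > 0` for all `t ≤ t₀`, and `ψ(t₁) ≠ 0` for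
some `t₁ ≤ t₀`, then a contradiction follows. Hence every non-trivial expanding solution
has a past interval of existence bounded below (an initial singularity is reached after
finite proper time). -/
theorem stmt15 (lam : ℝ) (hlam : 0 < lam) (t₀ : ℝ) (K φ ψ : ℝ → ℝ)
    (hφ : ∀ t ≤ t₀, HasDerivAt φ (ψ t) t)
    (hψ : ∀ t ≤ t₀, HasDerivAt ψ
      (-K t * ψ t - lam * (Real.exp (lam * φ t) - Real.exp (-(lam * φ t)))) t)
    (hK : ∀ t ≤ t₀, HasDerivAt K (-(3 / 2) * (ψ t) ^ 2) t)
    (hcon : ∀ t ≤ t₀,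
      (K t) ^ 2 = 3 * (Real.exp (lam * φ t) + Real.exp (-(lam * φ t)))
        + (3 / 2) * (ψ t) ^ 2)
    (hKpos : ∀ t ≤ t₀, 0 < K t)
    (hnt : ∃ t₁ ≤ t₀, ψ t₁ ≠ 0) :
    False := by
  obtain ⟨t₁, ht₁, hnz⟩ := hnt
  -- `exp x + exp (-x) ≥ 2`
  have hexp2 : ∀ a : ℝ, 2 ≤ Real.exp a + Real.exp (-a) := by
    intro a
    have hm : Real.exp a * Real.exp (-a) = 1 := by
      rw [← Real.exp_add]; simp
    nlinarith [Real.exp_pos a, Real.exp_pos (-a), sq_nonneg (Real.exp a - Real.exp (-a))]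
  -- basic bound `K ≥ 2`
  have hbase : ∀ t, t ≤ t₀ → 2 ≤ K t := by
    intro t ht
    have h1 := hcon t ht
    have h2 := hexp2 (lam * φ t)
    have h3 := hKpos t ht
    nlinarith [sq_nonneg (ψ t)]
  set t₂ := t₁ - 1 with ht₂def
  have ht₂t₀ : t₂ ≤ t₀ := by linarith
  have ht₂lt : t₂ < t₀ := by linarith
  -- K is antitone on (-∞, t₀]
  have hKanti : ∀ {s s' : ℝ}, s ≤ s' → s' ≤ t₀ → K s' ≤ K s := by
    intro s s' hss hs'
    exact anti_of_deriv (f' := fun r => -(3/2) * (ψ r)^2) hss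
      (fun r hr => hK r (le_trans hr.2 hs'))
      (fun r hr => by nlinarith [sq_nonneg (ψ r)])
  set K₂ := K t₂ with hK₂def
  clear_value t₂
  have hK₂2 : 2 ≤ K₂ := hbase t₂ ht₂t₀
  have hK₂pos : 0 < K₂ := by linarith
  have hK₂sq : 6 < K₂^2 := by
    have h1 : K t₁ ≤ K₂ := by rw [hK₂def]; exact hKanti (by linarith) ht₁
    have h2 := hcon t₁ ht₁
    have h3 := hexp2 (lam * φ t₁)
    have h4 := hKpos t₁ ht₁
    have h5 : 0 < (ψ t₁)^2 := by positivity
    nlinarith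
  have hK₂le : ∀ s, s ≤ t₂ → K₂ ≤ K s := fun s hs => by
    rw [hK₂def]; exact hKanti hs ht₂t₀
  clear_value K₂
  clear hK₂def
  -- constants
  set P := K₂^2/6 with hPdef
  have hP1 : 1 < P := by rw [hPdef]; linarith
  have hPpos : 0 < P := by linarith
  have hPid : K₂^2 = 6*P := by rw [hPdef]; ring
  clear_value P
  set β := (1 - 1/P)/2 with hβdef
  have hβpos : 0 < β := by
    have : 1/P < 1 := by rw [div_lt_one hPpos]; exact hP1
    rw [hβdef]; linarith
  have hβhalf : β ≤ 1/2 := by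
    have : 0 < 1/P := by positivity
    rw [hβdef]; linarith
  have hβid : (1-β)*(6*P) = 3*(P+1) := by
    rw [hβdef]; field_simp; ring
  clear_value β
  have h1β : 0 < 1 - β := by linarith
  set u₀ := Real.log P with hu₀def
  have hu₀pos : 0 < u₀ := Real.log_pos hP1
  clear_value u₀
  set cP := (P-1)/(P+1) with hcPdef
  have hcPpos : 0 < cP := div_pos (by linarith) (by linarith)
  have hcPid : (1 - cP)*(P+1) = 2 := by
    rw [hcPdef]; field_simp; norm_num
  clear_value cP
  set κ₀ := lam*cP*(1-β)/6 with hκ₀def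
  have hκ₀pos : 0 < κ₀ := by
    rw [hκ₀def]
    have := mul_pos (mul_pos hlam hcPpos) h1β
    linarith
  have hκcP : κ₀ ≤ lam*cP/6 := by
    rw [hκ₀def]
    have h := mul_pos hlam hcPpos
    nlinarith [hβpos]
  have hκ₀id : κ₀ = lam*cP*(1-β)/6 := hκ₀def
  clear_value κ₀
  clear hκ₀def
  set D₀ := 1 + lam/3 with hD₀def
  have hD₀pos : 0 < D₀ := by rw [hD₀def]; linarith
  have hD₀id : D₀ = 1 + lam/3 := hD₀def
  clear_value D₀
  clear hD₀def
  obtain ⟨ε, hεpos, hεβ, hεκ, hεW, hεw⟩ :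
      ∃ ε : ℝ, 0 < ε ∧ (3/2)*ε^2 ≤ β ∧ ε ≤ κ₀ ∧ 4*lam*ε^2 ≤ κ₀*u₀ ∧ 2*lam*ε^2 ≤ D₀*u₀ := by
    refine ⟨min (min (Real.sqrt (2*β/3)) κ₀)
      (min (Real.sqrt (κ₀*u₀/(4*lam))) (Real.sqrt (D₀*u₀/(2*lam)))), ?_, ?_, ?_, ?_, ?_⟩
    · apply lt_min
      · exact lt_min (Real.sqrt_pos.2 (by positivity)) hκ₀pos
      · exact lt_min (Real.sqrt_pos.2 (by positivity)) (Real.sqrt_pos.2 (by positivity))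
    · have h1 : min (min (Real.sqrt (2*β/3)) κ₀)
          (min (Real.sqrt (κ₀*u₀/(4*lam))) (Real.sqrt (D₀*u₀/(2*lam)))) ≤ Real.sqrt (2*β/3) :=
        le_trans (min_le_left _ _) (min_le_left _ _)
      have h0 : (0:ℝ) ≤ min (min (Real.sqrt (2*β/3)) κ₀)
          (min (Real.sqrt (κ₀*u₀/(4*lam))) (Real.sqrt (D₀*u₀/(2*lam)))) := by
        apply le_min (le_min (Real.sqrt_nonneg _) (le_of_lt hκ₀pos))
          (le_min (Real.sqrt_nonneg _) (Real.sqrt_nonneg _))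
      have h2 := Real.sq_sqrt (by positivity : (0:ℝ) ≤ 2*β/3)
      nlinarith [mul_self_le_mul_self h0 h1, h2]
    · exact le_trans (min_le_left _ _) (min_le_right _ _)
    · have h1 : min (min (Real.sqrt (2*β/3)) κ₀)
          (min (Real.sqrt (κ₀*u₀/(4*lam))) (Real.sqrt (D₀*u₀/(2*lam)))) ≤ Real.sqrt (κ₀*u₀/(4*lam)) :=
        le_trans (min_le_right _ _) (min_le_left _ _)
      have h0 : (0:ℝ) ≤ min (min (Real.sqrt (2*β/3)) κ₀)
          (min (Real.sqrt (κ₀*u₀/(4*lam))) (Real.sqrt (D₀*u₀/(2*lam)))) := by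
        apply le_min (le_min (Real.sqrt_nonneg _) (le_of_lt hκ₀pos))
          (le_min (Real.sqrt_nonneg _) (Real.sqrt_nonneg _))
      have h2 := Real.sq_sqrt (by positivity : (0:ℝ) ≤ κ₀*u₀/(4*lam))
      have h3 : (min (min (Real.sqrt (2*β/3)) κ₀)
          (min (Real.sqrt (κ₀*u₀/(4*lam))) (Real.sqrt (D₀*u₀/(2*lam)))))^2 ≤ κ₀*u₀/(4*lam) := by
        nlinarith [mul_self_le_mul_self h0 h1, h2]
      rw [le_div_iff₀ (by positivity : (0:ℝ) < 4*lam)] at h3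
      linarith
    · have h1 : min (min (Real.sqrt (2*β/3)) κ₀)
          (min (Real.sqrt (κ₀*u₀/(4*lam))) (Real.sqrt (D₀*u₀/(2*lam)))) ≤ Real.sqrt (D₀*u₀/(2*lam)) :=
        le_trans (min_le_right _ _) (min_le_right _ _)
      have h0 : (0:ℝ) ≤ min (min (Real.sqrt (2*β/3)) κ₀)
          (min (Real.sqrt (κ₀*u₀/(4*lam))) (Real.sqrt (D₀*u₀/(2*lam)))) := by
        apply le_min (le_min (Real.sqrt_nonneg _) (le_of_lt hκ₀pos))
          (le_min (Real.sqrt_nonneg _) (Real.sqrt_nonneg _))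
      have h2 := Real.sq_sqrt (by positivity : (0:ℝ) ≤ D₀*u₀/(2*lam))
      have h3 : (min (min (Real.sqrt (2*β/3)) κ₀)
          (min (Real.sqrt (κ₀*u₀/(4*lam))) (Real.sqrt (D₀*u₀/(2*lam)))))^2 ≤ D₀*u₀/(2*lam) := by
        nlinarith [mul_self_le_mul_self h0 h1, h2]
      rw [le_div_iff₀ (by positivity : (0:ℝ) < 2*lam)] at h3
      linarith
  obtain ⟨W, hWpos, hWid⟩ : ∃ W : ℝ, 0 < W ∧ lam*ε*W = u₀/2 := by
    have h : lam*ε ≠ 0 := by positivity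
    refine ⟨u₀/(2*lam*ε), by positivity, ?_⟩
    field_simp
  obtain ⟨w, hwpos, hwid⟩ : ∃ w : ℝ, 0 < w ∧ D₀*w = ε/2 := by
    have h : D₀ ≠ 0 := ne_of_gt hD₀pos
    refine ⟨ε/(2*D₀), by positivity, ?_⟩
    field_simp
  have hWw : 2*w ≤ W := by
    have hpos : 0 < lam*ε*D₀ := by positivity
    rw [← mul_le_mul_iff_right₀ hpos]
    calc lam*ε*D₀*(2*w) = lam*ε*ε := by linear_combination (2*lam*ε)*hwid
      _ ≤ D₀*u₀/2 := by nlinarith [hεw]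
      _ = lam*ε*D₀*W := by linear_combination (-D₀)*hWid
  have hcross : 2*ε ≤ κ₀*W := by
    have hpos2 : 0 < lam*ε := by positivity
    rw [← mul_le_mul_iff_right₀ hpos2]
    calc lam*ε*(2*ε) = 2*(lam*ε^2) := by ring
      _ ≤ κ₀*u₀/2 := by linarith [hεW]
      _ = lam*ε*(κ₀*W) := by linear_combination (-κ₀)*hWid
  set γ := (3*ε^2/8)*w with hγdef
  have hγpos : 0 < γ := by rw [hγdef]; positivity
  clear_value γ
  -- the weight function F
  set F : ℝ → ℝ := fun s => ∫ r in s..t₂, K r with hFdef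
  have hKc : ∀ r, r ≤ t₀ → ContinuousAt K r := fun r hr => (hK r hr).continuousAt
  have hFderiv : ∀ s, s ≤ t₂ → HasDerivAt F (-(K s)) s := by
    intro s hs
    have hs0 : s < t₀ := lt_of_le_of_lt hs ht₂lt
    apply intervalIntegral.integral_hasDerivAt_left
    · apply ContinuousOn.intervalIntegrable
      intro r hr
      rw [Set.uIcc_of_le hs] at hr
      exact (hKc r (le_trans hr.2 ht₂t₀)).continuousWithinAt
    · exact ⟨Set.Iio t₀, Iio_mem_nhds hs0,
        ContinuousOn.aestronglyMeasurable
          (fun r hr => (hKc r (le_of_lt hr)).continuousWithinAt) measurableSet_Iio⟩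
    · exact hKc s (le_of_lt hs0)
  have hFt₂ : F t₂ = 0 := by rw [hFdef]; exact intervalIntegral.integral_same
  clear_value F
  clear hFdef
  have hFanti : ∀ {s s' : ℝ}, s ≤ s' → s' ≤ t₂ → F s' ≤ F s := by
    intro s s' hss hs'
    exact anti_of_deriv (f' := fun r => -(K r)) hss
      (fun r hr => hFderiv r (le_trans hr.2 hs'))
      (fun r hr => by
        have := hbase r (le_trans (le_trans hr.2 hs') ht₂t₀)
        show -(K r) ≤ 0
        linarith)
  have hFlow : ∀ s, s ≤ t₂ → 2*(t₂ - s) ≤ F s := by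
    intro s hs
    have h := anti_of_deriv (f := fun r => F r + 2*r) (f' := fun r => -(K r) + 2) hs
      (fun r hr => by
        have h1 : HasDerivAt (fun r => F r + 2*r) (-(K r) + 2*1) r :=
          (hFderiv r hr.2).add ((hasDerivAt_id r).const_mul 2)
        convert h1 using 1
        ring)
      (fun r hr => by
        have := hbase r (le_trans hr.2 ht₂t₀)
        show -(K r) + 2 ≤ 0
        linarith)
    have := hFt₂
    linarith
  -- x = ψ / K and its derivative
  set x : ℝ → ℝ := fun s => ψ s / K s with hxdef
  set xd : ℝ → ℝ := fun s =>
      ((-K s * ψ s - lam*(Real.exp (lam*φ s) - Real.exp (-(lam*φ s))))*(K s)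
        - ψ s * (-(3/2)*(ψ s)^2)) / (K s)^2 with hxddef
  have hx : ∀ s, s ≤ t₀ → HasDerivAt x (xd s) s := by
    intro s hs
    rw [hxdef, hxddef]
    exact (hψ s hs).div (hK s hs) (ne_of_gt (hKpos s hs))
  have hxval : ∀ s, x s = ψ s / K s := fun s => by rw [hxdef]
  have hxdval : ∀ s, xd s =
      ((-K s * ψ s - lam*(Real.exp (lam*φ s) - Real.exp (-(lam*φ s))))*(K s)
        - ψ s * (-(3/2)*(ψ s)^2)) / (K s)^2 := fun s => by rw [hxddef]
  clear_value x xd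
  clear hxdef hxddef
  -- pointwise smallness consequence: potential dominates
  have hVK : ∀ s, s ≤ t₂ → |ψ s| ≤ ε*K s →
      (1-β)*(K s)^2 ≤ 3*(Real.exp (lam*φ s) + Real.exp (-(lam*φ s))) ∧
      P + 1 ≤ Real.exp (lam*φ s) + Real.exp (-(lam*φ s)) := by
    intro s hs hsm
    have hs0 : s ≤ t₀ := le_trans hs ht₂t₀
    have hKp := hKpos s hs0
    have hc := hcon s hs0
    have hK₂s := hK₂le s hs
    have hψsq : (ψ s)^2 ≤ ε^2*(K s)^2 := by
      nlinarith only [sq_abs (ψ s), mul_self_le_mul_self (abs_nonneg (ψ s)) hsm]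
    have h1 : (3/2)*(ψ s)^2 ≤ β*(K s)^2 := by
      linarith only [hψsq, mul_le_mul_of_nonneg_right hεβ (sq_nonneg (K s))]
    have h2 : (1-β)*(K s)^2 ≤ 3*(Real.exp (lam*φ s) + Real.exp (-(lam*φ s))) := by
      linarith only [hc, h1]
    refine ⟨h2, ?_⟩
    have h3 : K₂^2 ≤ (K s)^2 := by
      linarith only [mul_self_le_mul_self hK₂pos.le hK₂s]
    have h4 : (1-β)*K₂^2 ≤ (1-β)*(K s)^2 :=
      mul_le_mul_of_nonneg_left h3 (le_of_lt h1β)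
    have h5 : (1-β)*K₂^2 = 3*(P+1) := by linear_combination (1-β)*hPid + hβid
    linarith only [h2, h4, h5]
  -- dichotomy for the scalar field when kinetic part is small
  have L4 : ∀ s, s ≤ t₂ → |ψ s| ≤ ε*K s → u₀ ≤ lam*φ s ∨ lam*φ s ≤ -u₀ := by
    intro s hs hsm
    obtain ⟨-, hV⟩ := hVK s hs hsm
    rcases le_or_gt 0 (lam*φ s) with hsgn | hsgn
    · left
      have hB1 : Real.exp (-(lam*φ s)) ≤ 1 := Real.exp_le_one_iff.2 (by linarith)
      have hA : P ≤ Real.exp (lam*φ s) := by linarith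
      rw [hu₀def]
      exact (Real.log_le_iff_le_exp hPpos).2 hA
    · right
      have hA1 : Real.exp (lam*φ s) ≤ 1 := Real.exp_le_one_iff.2 (by linarith)
      have hB : P ≤ Real.exp (-(lam*φ s)) := by linarith
      have := (Real.log_le_iff_le_exp hPpos).2 hB
      rw [hu₀def]; linarith
  -- global bound on the slope of x
  have L1 : ∀ s, s ≤ t₂ → -(D₀ * K s) ≤ xd s ∧ xd s ≤ D₀ * K s := by
    intro s hs
    have hs0 : s ≤ t₀ := le_trans hs ht₂t₀
    have hKp := hKpos s hs0
    have hc := hcon s hs0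
    have hA := Real.exp_pos (lam*φ s)
    have hB := Real.exp_pos (-(lam*φ s))
    have hexp := hexp2 (lam*φ s)
    have hψK : (ψ s)^2 ≤ (K s)^2 := by
      linarith only [hc, hA.le, hB.le, sq_nonneg (ψ s)]
    have hψle : -(K s) ≤ ψ s ∧ ψ s ≤ K s := by
      constructor
      · nlinarith only [hψK, hKp, sq_nonneg (ψ s + K s)]
      · nlinarith only [hψK, hKp, sq_nonneg (ψ s - K s)]
    have hnum : (-K s * ψ s - lam*(Real.exp (lam*φ s) - Real.exp (-(lam*φ s))))*(K s)
        - ψ s * (-(3/2)*(ψ s)^2)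
        = -(3*(Real.exp (lam*φ s) + Real.exp (-(lam*φ s))))*(ψ s)
          - lam*(Real.exp (lam*φ s) - Real.exp (-(lam*φ s)))*(K s) := by
      linear_combination (-(ψ s))*hc
    have h3V : 3*(Real.exp (lam*φ s) + Real.exp (-(lam*φ s))) ≤ (K s)^2 := by
      linarith only [hc, sq_nonneg (ψ s)]
    have e3 := mul_le_mul_of_nonneg_right h3V (le_of_lt hKp)
    have e4 := mul_le_mul_of_nonneg_left e3 (show (0:ℝ) ≤ lam/3 by positivity)
    constructor
    · rw [hxdval, le_div_iff₀ (by positivity : (0:ℝ) < (K s)^2), hnum, hD₀id]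
      have e1 : -(3*(Real.exp (lam*φ s) + Real.exp (-(lam*φ s))))*(K s)
          ≤ -(3*(Real.exp (lam*φ s) + Real.exp (-(lam*φ s))))*(ψ s) := by
        linarith only [mul_nonneg (by positivity : (0:ℝ) ≤ 3*(Real.exp (lam*φ s) + Real.exp (-(lam*φ s)))) (by linarith only [hψle.2] : (0:ℝ) ≤ K s - ψ s)]
      have e2 : -(lam*(Real.exp (lam*φ s) + Real.exp (-(lam*φ s))))*(K s)
          ≤ -(lam*(Real.exp (lam*φ s) - Real.exp (-(lam*φ s))))*(K s) := by
        linarith only [mul_nonneg (mul_nonneg (le_of_lt hlam) (le_of_lt hB)) (le_of_lt hKp)]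
      linarith only [e1, e2, e3, e4]
    · rw [hxdval, div_le_iff₀ (by positivity : (0:ℝ) < (K s)^2), hnum, hD₀id]
      have e1 : -(3*(Real.exp (lam*φ s) + Real.exp (-(lam*φ s))))*(ψ s)
          ≤ 3*(Real.exp (lam*φ s) + Real.exp (-(lam*φ s)))*(K s) := by
        linarith only [mul_nonneg (by positivity : (0:ℝ) ≤ 3*(Real.exp (lam*φ s) + Real.exp (-(lam*φ s)))) (by linarith only [hψle.1] : (0:ℝ) ≤ K s + ψ s)]
      have e2 : -(lam*(Real.exp (lam*φ s) - Real.exp (-(lam*φ s))))*(K s)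
          ≤ lam*(Real.exp (lam*φ s) + Real.exp (-(lam*φ s)))*(K s) := by
        linarith only [mul_nonneg (mul_nonneg (le_of_lt hlam) (le_of_lt hA)) (le_of_lt hKp)]
      linarith only [e1, e2, e3, e4]
  -- strong slope bounds in the small-kinetic regime
  have hcP1 : 0 < 1 - cP := by nlinarith only [hcPid, hPpos]
  have L2 : ∀ s, s ≤ t₂ → |ψ s| ≤ ε*K s → u₀/2 ≤ lam*φ s → xd s ≤ -(κ₀ * K s) := by
    intro s hs hsm hu
    have hs0 : s ≤ t₀ := le_trans hs ht₂t₀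
    have hKp := hKpos s hs0
    have hc := hcon s hs0
    have hA := Real.exp_pos (lam*φ s)
    have hB := Real.exp_pos (-(lam*φ s))
    obtain ⟨hV1, hV2⟩ := hVK s hs hsm
    have hB1 : Real.exp (-(lam*φ s)) ≤ 1 := Real.exp_le_one_iff.2 (by linarith only [hu, hu₀pos])
    have hAB : cP*(Real.exp (lam*φ s) + Real.exp (-(lam*φ s)))
        ≤ Real.exp (lam*φ s) - Real.exp (-(lam*φ s)) := by
      have h2' : 2 ≤ (1-cP)*(Real.exp (lam*φ s) + Real.exp (-(lam*φ s))) := by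
        nlinarith only [hV2, hcP1, hcPid, mul_le_mul_of_nonneg_left hV2 hcP1.le]
      linarith only [h2', hB1]
    have hψub := (abs_le.1 hsm).1
    have hnum : (-K s * ψ s - lam*(Real.exp (lam*φ s) - Real.exp (-(lam*φ s))))*(K s)
        - ψ s * (-(3/2)*(ψ s)^2)
        = -(3*(Real.exp (lam*φ s) + Real.exp (-(lam*φ s))))*(ψ s)
          - lam*(Real.exp (lam*φ s) - Real.exp (-(lam*φ s)))*(K s) := by
      linear_combination (-(ψ s))*hc
    rw [hxdval, div_le_iff₀ (by positivity : (0:ℝ) < (K s)^2), hnum, hκ₀id]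
    have e1 : -(3*(Real.exp (lam*φ s) + Real.exp (-(lam*φ s))))*(ψ s)
        ≤ 3*(Real.exp (lam*φ s) + Real.exp (-(lam*φ s)))*(ε*K s) := by
      linarith only [mul_nonneg
        (by positivity : (0:ℝ) ≤ 3*(Real.exp (lam*φ s) + Real.exp (-(lam*φ s))))
        (by linarith only [hψub] : (0:ℝ) ≤ ε*K s + ψ s)]
    have e2 := mul_le_mul_of_nonneg_left hAB
      (mul_nonneg hlam.le hKp.le)
    have hε6 : 3*ε - lam*cP ≤ -(lam*cP/2) := by linarith only [hεκ, hκcP, hεpos, hκ₀pos]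
    have e3 := mul_le_mul_of_nonneg_left hε6
      (mul_nonneg (by positivity : (0:ℝ) ≤ Real.exp (lam*φ s) + Real.exp (-(lam*φ s))) hKp.le)
    have e4 := mul_le_mul_of_nonneg_left hV1
      (by positivity : (0:ℝ) ≤ lam*cP*(K s)/6)
    nlinarith only [e1, e2, e3, e4]
  have L2' : ∀ s, s ≤ t₂ → |ψ s| ≤ ε*K s → lam*φ s ≤ -(u₀/2) → κ₀ * K s ≤ xd s := by
    intro s hs hsm hu
    have hs0 : s ≤ t₀ := le_trans hs ht₂t₀
    have hKp := hKpos s hs0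
    have hc := hcon s hs0
    have hA := Real.exp_pos (lam*φ s)
    have hB := Real.exp_pos (-(lam*φ s))
    obtain ⟨hV1, hV2⟩ := hVK s hs hsm
    have hA1 : Real.exp (lam*φ s) ≤ 1 := Real.exp_le_one_iff.2 (by linarith only [hu, hu₀pos])
    have hAB : cP*(Real.exp (lam*φ s) + Real.exp (-(lam*φ s)))
        ≤ Real.exp (-(lam*φ s)) - Real.exp (lam*φ s) := by
      have h2' : 2 ≤ (1-cP)*(Real.exp (lam*φ s) + Real.exp (-(lam*φ s))) := by
        nlinarith only [hV2, hcP1, hcPid, mul_le_mul_of_nonneg_left hV2 hcP1.le]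
      linarith only [h2', hA1]
    have hψub := (abs_le.1 hsm).2
    have hnum : (-K s * ψ s - lam*(Real.exp (lam*φ s) - Real.exp (-(lam*φ s))))*(K s)
        - ψ s * (-(3/2)*(ψ s)^2)
        = -(3*(Real.exp (lam*φ s) + Real.exp (-(lam*φ s))))*(ψ s)
          - lam*(Real.exp (lam*φ s) - Real.exp (-(lam*φ s)))*(K s) := by
      linear_combination (-(ψ s))*hc
    rw [hxdval, le_div_iff₀ (by positivity : (0:ℝ) < (K s)^2), hnum, hκ₀id]
    have e1 : -(3*(Real.exp (lam*φ s) + Real.exp (-(lam*φ s))))*(ε*K s)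
        ≤ -(3*(Real.exp (lam*φ s) + Real.exp (-(lam*φ s))))*(ψ s) := by
      linarith only [mul_nonneg
        (by positivity : (0:ℝ) ≤ 3*(Real.exp (lam*φ s) + Real.exp (-(lam*φ s))))
        (by linarith only [hψub] : (0:ℝ) ≤ ε*K s - ψ s)]
    have e2 := mul_le_mul_of_nonneg_left hAB
      (mul_nonneg hlam.le hKp.le)
    have hε6 : 3*ε - lam*cP ≤ -(lam*cP/2) := by linarith only [hεκ, hκcP, hεpos, hκ₀pos]
    have e3 := mul_le_mul_of_nonneg_left hε6
      (mul_nonneg (by positivity : (0:ℝ) ≤ Real.exp (lam*φ s) + Real.exp (-(lam*φ s))) hKp.le)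
    have e4 := mul_le_mul_of_nonneg_left hV1
      (by positivity : (0:ℝ) ≤ lam*cP*(K s)/6)
    nlinarith only [e1, e2, e3, e4]
  -- derivative of weighted gap functions
  have hGd : ∀ (aa c r : ℝ), r ≤ t₂ → HasDerivAt (fun q => c*(F aa - F q)) (c*(K r)) r := by
    intro aa c r hr
    have h : HasDerivAt (fun q => c*(F aa - F q)) (c * -(-(K r))) r :=
      (HasDerivAt.const_sub (F aa) (hFderiv r hr)).const_mul c
    convert h using 1
    ring
  -- THE WINDOW LEMMA
  have win : ∀ a b : ℝ, a ≤ b → b ≤ t₂ → F a = F b + W →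
      ∃ p ∈ Set.Icc a b, ε * K p ≤ |ψ p| := by
    intro a b hab hb2 hFW
    by_contra hcnt
    push_neg at hcnt
    have ha2 : a ≤ t₂ := le_trans hab hb2
    have hFgapub : ∀ s ∈ Set.Icc a b, F a - F s ≤ W := by
      intro s hs
      have h1 : F b ≤ F s := hFanti hs.2 hb2
      linarith only [h1, hFW]
    rcases L4 a ha2 (le_of_lt (hcnt a (Set.left_mem_Icc.2 hab))) with hua | hua
    · -- the case `lam*φ a ≥ u₀`
      have hus : ∀ s ∈ Set.Icc a b, u₀/2 ≤ lam*φ s := by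
        intro s hsI
        have hmono := mono_of_deriv (a := a) (b := s) hsI.1
          (f := fun r => lam*φ r + lam*ε*(F a - F r))
          (f' := fun r => lam*ψ r + lam*ε*(K r))
          (fun r hr => by
            have hr2 : r ≤ t₂ := le_trans (le_trans hr.2 hsI.2) hb2
            exact ((hφ r (le_trans hr2 ht₂t₀)).const_mul lam).add (hGd a (lam*ε) r hr2))
          (fun r hr => by
            have hrI : r ∈ Set.Icc a b := ⟨hr.1, le_trans hr.2 hsI.2⟩
            have h1 := (abs_le.1 (le_of_lt (hcnt r hrI))).1
            show 0 ≤ lam*ψ r + lam*ε*(K r)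
            linarith only [mul_nonneg hlam.le
              (by linarith only [h1] : (0:ℝ) ≤ ψ r + ε*(K r))])
        have h3 : lam*φ a + lam*ε*(F a - F a) ≤ lam*φ s + lam*ε*(F a - F s) := hmono
        simp only [sub_self, mul_zero, add_zero] at h3
        have h4 := hFgapub s hsI
        have h5 : lam*ε*(F a - F s) ≤ lam*ε*W := by
          have := mul_le_mul_of_nonneg_left h4 (by positivity : (0:ℝ) ≤ lam*ε)
          linarith only [this]
        linarith only [h3, h5, hWid, hua]
      have hanti := anti_of_deriv (a := a) (b := b) hab
        (f := fun r => x r + κ₀*(F a - F r))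
        (f' := fun r => xd r + κ₀*(K r))
        (fun r hr => by
          have hr2 : r ≤ t₂ := le_trans hr.2 hb2
          exact (hx r (le_trans hr2 ht₂t₀)).add (hGd a κ₀ r hr2))
        (fun r hr => by
          have hr2 : r ≤ t₂ := le_trans hr.2 hb2
          have h1 := L2 r hr2 (le_of_lt (hcnt r hr)) (hus r hr)
          show xd r + κ₀*(K r) ≤ 0
          linarith only [h1])
      have h7 : x b + κ₀*(F a - F b) ≤ x a + κ₀*(F a - F a) := hanti
      simp only [sub_self, mul_zero, add_zero] at h7
      have h8 : F a - F b = W := by linarith only [hFW]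
      rw [h8] at h7
      have hxa : x a < ε := by
        have h9 := hcnt a (Set.left_mem_Icc.2 hab)
        have hKa := hKpos a (le_trans ha2 ht₂t₀)
        rw [hxval, div_lt_iff₀ hKa]
        calc ψ a ≤ |ψ a| := le_abs_self _
          _ < ε * K a := h9
      have hxb : -ε < x b := by
        have h9 := hcnt b (Set.right_mem_Icc.2 hab)
        have hKb := hKpos b (le_trans hb2 ht₂t₀)
        rw [hxval, lt_div_iff₀ hKb]
        have := (abs_lt.1 h9).1
        linarith only [this]
      linarith only [h7, hxa, hxb, hcross]
    · -- the case `lam*φ a ≤ -u₀`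
      have hus : ∀ s ∈ Set.Icc a b, lam*φ s ≤ -(u₀/2) := by
        intro s hsI
        have hanti2 := anti_of_deriv (a := a) (b := s) hsI.1
          (f := fun r => lam*φ r - lam*ε*(F a - F r))
          (f' := fun r => lam*ψ r - lam*ε*(K r))
          (fun r hr => by
            have hr2 : r ≤ t₂ := le_trans (le_trans hr.2 hsI.2) hb2
            exact ((hφ r (le_trans hr2 ht₂t₀)).const_mul lam).sub (hGd a (lam*ε) r hr2))
          (fun r hr => by
            have hrI : r ∈ Set.Icc a b := ⟨hr.1, le_trans hr.2 hsI.2⟩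
            have h1 := (abs_le.1 (le_of_lt (hcnt r hrI))).2
            show lam*ψ r - lam*ε*(K r) ≤ 0
            linarith only [mul_nonneg hlam.le
              (by linarith only [h1] : (0:ℝ) ≤ ε*(K r) - ψ r)])
        have h3 : lam*φ s - lam*ε*(F a - F s) ≤ lam*φ a - lam*ε*(F a - F a) := hanti2
        simp only [sub_self, mul_zero, sub_zero] at h3
        have h4 := hFgapub s hsI
        have h5 : lam*ε*(F a - F s) ≤ lam*ε*W := by
          have := mul_le_mul_of_nonneg_left h4 (by positivity : (0:ℝ) ≤ lam*ε)
          linarith only [this]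
        linarith only [h3, h5, hWid, hua]
      have hmono2 := mono_of_deriv (a := a) (b := b) hab
        (f := fun r => x r - κ₀*(F a - F r))
        (f' := fun r => xd r - κ₀*(K r))
        (fun r hr => by
          have hr2 : r ≤ t₂ := le_trans hr.2 hb2
          exact (hx r (le_trans hr2 ht₂t₀)).sub (hGd a κ₀ r hr2))
        (fun r hr => by
          have hr2 : r ≤ t₂ := le_trans hr.2 hb2
          have h1 := L2' r hr2 (le_of_lt (hcnt r hr)) (hus r hr)
          show 0 ≤ xd r - κ₀*(K r)
          linarith only [h1])
      have h7 : x a - κ₀*(F a - F a) ≤ x b - κ₀*(F a - F b) := hmono2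
      simp only [sub_self, mul_zero, sub_zero] at h7
      have h8 : F a - F b = W := by linarith only [hFW]
      rw [h8] at h7
      have hxb : x b < ε := by
        have h9 := hcnt b (Set.right_mem_Icc.2 hab)
        have hKb := hKpos b (le_trans hb2 ht₂t₀)
        rw [hxval, div_lt_iff₀ hKb]
        calc ψ b ≤ |ψ b| := le_abs_self _
          _ < ε * K b := h9
      have hxa : -ε < x a := by
        have h9 := hcnt a (Set.left_mem_Icc.2 hab)
        have hKa := hKpos a (le_trans ha2 ht₂t₀)
        rw [hxval, lt_div_iff₀ hKa]
        have := (abs_lt.1 h9).1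
        linarith only [this]
      linarith only [h7, hxa, hxb, hcross]
  -- monotonicity of log K
  have hloganti : ∀ {s s' : ℝ}, s ≤ s' → s' ≤ t₂ → Real.log (K s') ≤ Real.log (K s) := by
    intro s s' hss hs'
    exact Real.log_le_log (hKpos s' (le_trans hs' ht₂t₀)) (hKanti hss (le_trans hs' ht₂t₀))
  -- log-drop on an interval where the kinetic term is large, with F-gap w
  have key : ∀ c₁ c₂ : ℝ, c₁ ≤ c₂ → c₂ ≤ t₂ → F c₁ - F c₂ = w →
      (∀ s' ∈ Set.Icc c₁ c₂, ε/2*(K s') ≤ |ψ s'|) →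
      Real.log (K c₂) + γ ≤ Real.log (K c₁) := by
    intro c₁ c₂ h12 h2t hgap habs
    have hanti := anti_of_deriv (a := c₁) (b := c₂) h12
      (f := fun r => Real.log (K r) + (3*ε^2/8)*(F c₁ - F r))
      (f' := fun r => (-(3/2)*(ψ r)^2)/(K r) + (3*ε^2/8)*(K r))
      (fun r hr => by
        have hr2 : r ≤ t₂ := le_trans hr.2 h2t
        have hr0 : r ≤ t₀ := le_trans hr2 ht₂t₀
        exact ((hK r hr0).log (ne_of_gt (hKpos r hr0))).add (hGd c₁ (3*ε^2/8) r hr2))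
      (fun r hr => by
        have hr0 : r ≤ t₀ := le_trans (le_trans hr.2 h2t) ht₂t₀
        have hKr := hKpos r hr0
        have h1 := habs r hr
        have h2 : (ε/2*(K r))^2 ≤ (ψ r)^2 := by
          nlinarith only [mul_self_le_mul_self (by positivity : (0:ℝ) ≤ ε/2*(K r)) h1,
            sq_abs (ψ r)]
        have h3 : (3*ε^2/8)*(K r)*(K r) ≤ (3/2)*(ψ r)^2 := by nlinarith only [h2]
        have h4 : (3*ε^2/8)*(K r) ≤ ((3/2)*(ψ r)^2)/(K r) := by
          rw [le_div_iff₀ hKr]; linarith only [h3]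
        have h5 : (-(3/2)*(ψ r)^2)/(K r) = -(((3/2)*(ψ r)^2)/(K r)) := by ring
        show (-(3/2)*(ψ r)^2)/(K r) + (3*ε^2/8)*(K r) ≤ 0
        rw [h5]; linarith only [h4])
    have h6 : Real.log (K c₂) + (3*ε^2/8)*(F c₁ - F c₂)
        ≤ Real.log (K c₁) + (3*ε^2/8)*(F c₁ - F c₁) := hanti
    simp only [sub_self, mul_zero, add_zero] at h6
    rw [hgap] at h6
    rw [hγdef]
    linarith only [h6]
  -- THE DROP LEMMA
  have drop : ∀ a b : ℝ, a ≤ b → b ≤ t₂ → F a = F b + W →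
      Real.log (K b) + γ ≤ Real.log (K a) := by
    intro a b hab hb2 hFW
    obtain ⟨p, hpI, hψp⟩ := win a b hab hb2 hFW
    have ha2 : a ≤ t₂ := le_trans hab hb2
    have hp2 : p ≤ t₂ := le_trans hpI.2 hb2
    have hKp := hKpos p (le_trans hp2 ht₂t₀)
    have hxp : ε ≤ |x p| := by
      have : |x p| = |ψ p| / (K p) := by rw [hxval, abs_div, abs_of_pos hKp]
      rw [this, le_div_iff₀ hKp]
      linarith only [hψp]
    rcases le_or_gt w (F p - F b) with hside | hside
    · -- sub-window to the right of p
      have hcontF : ContinuousOn F (Set.Icc p b) := fun r hr =>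
        ((hFderiv r (le_trans hr.2 hb2)).continuousAt).continuousWithinAt
      have hsub : F p - w ∈ Set.Icc (F b) (F p) :=
        ⟨by linarith only [hside], by linarith only [hwpos]⟩
      obtain ⟨c, hcI, hFc⟩ := intermediate_value_Icc' hpI.2 hcontF hsub
      have hc2 : c ≤ t₂ := le_trans hcI.2 hb2
      have hnear : ∀ s' ∈ Set.Icc p c, ε/2*(K s') ≤ |ψ s'| := by
        intro s' hs'
        have hs'2 : s' ≤ t₂ := le_trans hs'.2 hc2
        have hKs' := hKpos s' (le_trans hs'2 ht₂t₀)
        have hg1 : F s' ≤ F p := hFanti hs'.1 hs'2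
        have hg2 : F c ≤ F s' := hFanti hs'.2 hc2
        have hm1 := mono_of_deriv (a := p) (b := s') hs'.1
          (f := fun r => x r + D₀*(F p - F r)) (f' := fun r => xd r + D₀*(K r))
          (fun r hr => by
            have hr2 : r ≤ t₂ := le_trans (le_trans hr.2 hs'.2) hc2
            exact (hx r (le_trans hr2 ht₂t₀)).add (hGd p D₀ r hr2))
          (fun r hr => by
            have hr2 : r ≤ t₂ := le_trans (le_trans hr.2 hs'.2) hc2
            have := (L1 r hr2).1
            show 0 ≤ xd r + D₀*(K r); linarith only [this])
        have hm2 := anti_of_deriv (a := p) (b := s') hs'.1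
          (f := fun r => x r - D₀*(F p - F r)) (f' := fun r => xd r - D₀*(K r))
          (fun r hr => by
            have hr2 : r ≤ t₂ := le_trans (le_trans hr.2 hs'.2) hc2
            exact (hx r (le_trans hr2 ht₂t₀)).sub (hGd p D₀ r hr2))
          (fun r hr => by
            have hr2 : r ≤ t₂ := le_trans (le_trans hr.2 hs'.2) hc2
            have := (L1 r hr2).2
            show xd r - D₀*(K r) ≤ 0; linarith only [this])
        have e1 : x p + D₀*(F p - F p) ≤ x s' + D₀*(F p - F s') := hm1
        have e2 : x s' - D₀*(F p - F s') ≤ x p - D₀*(F p - F p) := hm2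
        simp only [sub_self, mul_zero, add_zero, sub_zero] at e1 e2
        have e3 : D₀*(F p - F s') ≤ ε/2 := by
          have h' : F p - F s' ≤ w := by linarith only [hg2, hFc]
          have := mul_le_mul_of_nonneg_left h' hD₀pos.le
          linarith only [this, hwid]
        have e5 : ε/2 ≤ |x s'| := by
          rcases le_abs.1 hxp with hpp | hpn
          · have : ε/2 ≤ x s' := by linarith only [e1, e3, hpp]
            exact le_trans this (le_abs_self _)
          · have : x s' ≤ -(ε/2) := by
              have e4 : 0 ≤ D₀*(F p - F s') :=
                mul_nonneg hD₀pos.le (by linarith only [hg1])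
              linarith only [e2, e3, hpn]
            calc ε/2 ≤ -(x s') := by linarith only [this]
              _ ≤ |x s'| := neg_le_abs _
        have : |x s'| = |ψ s'| / (K s') := by rw [hxval, abs_div, abs_of_pos hKs']
        rw [this, le_div_iff₀ hKs'] at e5
        linarith only [e5]
      have hkey := key p c hcI.1 hc2 (by linarith only [hFc]) hnear
      have h1 : Real.log (K b) ≤ Real.log (K c) := hloganti hcI.2 hb2
      have h2 : Real.log (K p) ≤ Real.log (K a) := hloganti hpI.1 hp2
      linarith only [hkey, h1, h2]
    · -- sub-window to the left of p
      have hwa : w ≤ F a - F p := by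
        have h1 : F b ≤ F p := hFanti hpI.2 hb2
        linarith only [hFW, hside, hWw, h1]
      have hcontF : ContinuousOn F (Set.Icc a p) := fun r hr =>
        ((hFderiv r (le_trans hr.2 hp2)).continuousAt).continuousWithinAt
      have hsub : F p + w ∈ Set.Icc (F p) (F a) :=
        ⟨by linarith only [hwpos], by linarith only [hwa]⟩
      obtain ⟨c, hcI, hFc⟩ := intermediate_value_Icc' hpI.1 hcontF hsub
      have hc2 : c ≤ t₂ := le_trans hcI.2 hp2
      have hnear : ∀ s' ∈ Set.Icc c p, ε/2*(K s') ≤ |ψ s'| := by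
        intro s' hs'
        have hs'2 : s' ≤ t₂ := le_trans hs'.2 hp2
        have hKs' := hKpos s' (le_trans hs'2 ht₂t₀)
        have hg1 : F s' ≤ F c := hFanti hs'.1 hs'2
        have hg2 : F p ≤ F s' := hFanti hs'.2 hp2
        have hm1 := mono_of_deriv (a := s') (b := p) hs'.2
          (f := fun r => x r + D₀*(F s' - F r)) (f' := fun r => xd r + D₀*(K r))
          (fun r hr => by
            have hr2 : r ≤ t₂ := le_trans hr.2 hp2
            exact (hx r (le_trans hr2 ht₂t₀)).add (hGd s' D₀ r hr2))
          (fun r hr => by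
            have hr2 : r ≤ t₂ := le_trans hr.2 hp2
            have := (L1 r hr2).1
            show 0 ≤ xd r + D₀*(K r); linarith only [this])
        have hm2 := anti_of_deriv (a := s') (b := p) hs'.2
          (f := fun r => x r - D₀*(F s' - F r)) (f' := fun r => xd r - D₀*(K r))
          (fun r hr => by
            have hr2 : r ≤ t₂ := le_trans hr.2 hp2
            exact (hx r (le_trans hr2 ht₂t₀)).sub (hGd s' D₀ r hr2))
          (fun r hr => by
            have hr2 : r ≤ t₂ := le_trans hr.2 hp2
            have := (L1 r hr2).2
            show xd r - D₀*(K r) ≤ 0; linarith only [this])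
        have e1 : x s' + D₀*(F s' - F s') ≤ x p + D₀*(F s' - F p) := hm1
        have e2 : x p - D₀*(F s' - F p) ≤ x s' - D₀*(F s' - F s') := hm2
        simp only [sub_self, mul_zero, add_zero, sub_zero] at e1 e2
        have e3 : D₀*(F s' - F p) ≤ ε/2 := by
          have h' : F s' - F p ≤ w := by linarith only [hg1, hFc]
          have := mul_le_mul_of_nonneg_left h' hD₀pos.le
          linarith only [this, hwid]
        have e5 : ε/2 ≤ |x s'| := by
          rcases le_abs.1 hxp with hpp | hpn
          · have : ε/2 ≤ x s' := by linarith only [e2, e3, hpp]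
            exact le_trans this (le_abs_self _)
          · have : x s' ≤ -(ε/2) := by
              have e4 : 0 ≤ D₀*(F s' - F p) :=
                mul_nonneg hD₀pos.le (by linarith only [hg2])
              linarith only [e1, e3, hpn]
            calc ε/2 ≤ -(x s') := by linarith only [this]
              _ ≤ |x s'| := neg_le_abs _
        have : |x s'| = |ψ s'| / (K s') := by rw [hxval, abs_div, abs_of_pos hKs']
        rw [this, le_div_iff₀ hKs'] at e5
        linarith only [e5]
      have hkey := key c p hcI.2 hp2 (by linarith only [hFc]) hnear
      have h1 : Real.log (K b) ≤ Real.log (K p) := hloganti hpI.2 hb2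
      have h2 : Real.log (K c) ≤ Real.log (K a) := hloganti hcI.1 hc2
      linarith only [hkey, h1, h2]
  -- existence of the next chop point
  have Ex : ∀ r : ℝ, r ≤ t₂ → ∃ r', r' ≤ r ∧ F r' = F r + W := by
    intro r hr
    have hFl := hFlow r hr
    have h0 : 0 ≤ F r := by linarith only [hFl, hr]
    have hlo2 : t₂ - (F r + W)/2 - 1 ≤ t₂ := by linarith only [h0, hWpos]
    have hlolt : t₂ - (F r + W)/2 - 1 ≤ r := by linarith only [hFl, hWpos]
    have hcontF : ContinuousOn F (Set.Icc (t₂ - (F r + W)/2 - 1) r) := fun q hq =>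
      ((hFderiv q (le_trans hq.2 hr)).continuousAt).continuousWithinAt
    have hFlo : F r + W ≤ F (t₂ - (F r + W)/2 - 1) := by
      have h1 := hFlow (t₂ - (F r + W)/2 - 1) hlo2
      linarith only [h1]
    have hmem : F r + W ∈ Set.Icc (F r) (F (t₂ - (F r + W)/2 - 1)) :=
      ⟨by linarith only [hWpos], hFlo⟩
    obtain ⟨r', hr'I, hFr'⟩ := intermediate_value_Icc' hlolt hcontF hmem
    exact ⟨r', hr'I.2, hFr'⟩
  have hqpos : (0:ℝ) < Real.exp (-γ) := Real.exp_pos _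
  have hq1 : Real.exp (-γ) < 1 := Real.exp_lt_one_iff.2 (by linarith only [hγpos])
  -- the recursively chopped sequence, as an induction
  have seq : ∀ n : ℕ, ∃ r : ℝ, r ≤ t₂ ∧ F r = W*n ∧
      Real.log K₂ + γ*n ≤ Real.log (K r) ∧
      t₂ - r ≤ (W/K₂)*(1 - (Real.exp (-γ))^n)/(1 - Real.exp (-γ)) := by
    intro n
    induction n with
    | zero =>
      refine ⟨t₂, le_rfl, by rw [hFt₂]; norm_num, ?_, by norm_num⟩
      have h1 := hK₂le t₂ le_rfl
      have h2 := Real.log_le_log hK₂pos h1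
      push_cast
      linarith only [h2]
    | succ n ih =>
      obtain ⟨r, hr2, hFr, hlog, hd⟩ := ih
      obtain ⟨r', hr'le, hFr'⟩ := Ex r hr2
      have hr'2 : r' ≤ t₂ := le_trans hr'le hr2
      have hdrop := drop r' r hr'le hr2 hFr'
      have hKrpos := hKpos r (le_trans hr2 ht₂t₀)
      have hKrlb : K₂*Real.exp (γ*n) ≤ K r := by
        have h1 : Real.log (K₂*Real.exp (γ*n)) = Real.log K₂ + γ*n := by
          rw [Real.log_mul (ne_of_gt hK₂pos) (ne_of_gt (Real.exp_pos _)), Real.log_exp]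
        have h2 : Real.log (K₂*Real.exp (γ*n)) ≤ Real.log (K r) := by
          rw [h1]; exact hlog
        have h3 := Real.exp_le_exp.2 h2
        rwa [Real.exp_log (by positivity), Real.exp_log hKrpos] at h3
      have hgap : K r * (r - r') ≤ W := by
        have hanti := anti_of_deriv (a := r') (b := r) hr'le
          (f := fun s => F s + K r * s) (f' := fun s => -(K s) + K r)
          (fun s hs => by
            have hs2 : s ≤ t₂ := le_trans hs.2 hr2
            have h : HasDerivAt (fun s => F s + K r * s) (-(K s) + K r * 1) s :=
              (hFderiv s hs2).add ((hasDerivAt_id s).const_mul (K r))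
            convert h using 1
            ring)
          (fun s hs => by
            have h4 : K r ≤ K s := hKanti hs.2 (le_trans hr2 ht₂t₀)
            show -(K s) + K r ≤ 0
            linarith only [h4])
        have h5 : F r + K r * r ≤ F r' + K r * r' := hanti
        linarith only [h5, hFr']
      have hstep : r - r' ≤ (W/K₂)*(Real.exp (-γ))^n := by
        have hKlb2 : (0:ℝ) < K₂*Real.exp (γ*n) := by positivity
        have hrr' : 0 ≤ r - r' := by linarith only [hr'le]
        have h6 : (K₂*Real.exp (γ*n))*(r - r') ≤ W :=
          le_trans (mul_le_mul_of_nonneg_right hKrlb hrr') hgap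
        have h7 : r - r' ≤ W/(K₂*Real.exp (γ*n)) := by
          rw [le_div_iff₀ hKlb2]; linarith only [h6]
        have h8 : W/(K₂*Real.exp (γ*n)) = (W/K₂)*(Real.exp (-γ))^n := by
          rw [← Real.exp_nat_mul, show ((n:ℝ))*(-γ) = -(γ*n) by ring, Real.exp_neg]
          field_simp
        rw [h8] at h7
        exact h7
      refine ⟨r', hr'2, ?_, ?_, ?_⟩
      · rw [hFr', hFr]; push_cast; ring
      · push_cast
        push_cast at hlog
        linarith only [hdrop, hlog]
      · have h9 : (1:ℝ) - Real.exp (-γ) ≠ 0 :=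
          ne_of_gt (by linarith only [hq1] : (0:ℝ) < 1 - Real.exp (-γ))
        have hS : (W/K₂)*(1 - (Real.exp (-γ))^(n+1))/(1 - Real.exp (-γ))
            = (W/K₂)*(1 - (Real.exp (-γ))^n)/(1 - Real.exp (-γ)) + (W/K₂)*(Real.exp (-γ))^n := by
          field_simp
          ring
        push_cast
        rw [hS]
        linarith only [hd, hstep]
  -- endgame: K along the sequence is bounded yet grows geometrically
  have hM : ∀ n : ℕ, K₂*Real.exp (γ*n) ≤ K (t₂ - (W/K₂)/(1 - Real.exp (-γ))) := by
    intro n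
    obtain ⟨r, hr2, hFr, hlog, hd⟩ := seq n
    have hqn : (0:ℝ) ≤ (Real.exp (-γ))^n := by positivity
    have h3 : (0:ℝ) < 1 - Real.exp (-γ) := by linarith only [hq1]
    have h1 : (W/K₂)*(1 - (Real.exp (-γ))^n)/(1 - Real.exp (-γ))
        ≤ (W/K₂)/(1 - Real.exp (-γ)) := by
      have h2 : (W/K₂)*(1 - (Real.exp (-γ))^n) ≤ (W/K₂) := by
        have := mul_le_mul_of_nonneg_left (by linarith only [hqn] : 1 - (Real.exp (-γ))^n ≤ 1)
          (by positivity : (0:ℝ) ≤ W/K₂)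
        linarith only [this]
      exact (div_le_div_iff_of_pos_right h3).2 h2
    have hrge : t₂ - (W/K₂)/(1 - Real.exp (-γ)) ≤ r := by linarith only [hd, h1]
    have h5 : K r ≤ K (t₂ - (W/K₂)/(1 - Real.exp (-γ))) :=
      hKanti hrge (le_trans hr2 ht₂t₀)
    have hKrpos := hKpos r (le_trans hr2 ht₂t₀)
    have hKrlb : K₂*Real.exp (γ*n) ≤ K r := by
      have ha : Real.log (K₂*Real.exp (γ*n)) = Real.log K₂ + γ*n := by
        rw [Real.log_mul (ne_of_gt hK₂pos) (ne_of_gt (Real.exp_pos _)), Real.log_exp]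
      have hb : Real.log (K₂*Real.exp (γ*n)) ≤ Real.log (K r) := by
        rw [ha]; exact hlog
      have hc' := Real.exp_le_exp.2 hb
      rwa [Real.exp_log (by positivity), Real.exp_log hKrpos] at hc'
    linarith only [h5, hKrlb]
  obtain ⟨n, hn⟩ := exists_nat_gt ((K (t₂ - (W/K₂)/(1 - Real.exp (-γ))) - K₂)/(K₂*γ))
  have hexpn := Real.add_one_le_exp (γ*n)
  have h6 : (K (t₂ - (W/K₂)/(1 - Real.exp (-γ))) - K₂)/(K₂*γ) < (n:ℝ) := hn
  rw [div_lt_iff₀ (by positivity)] at h6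
  have h7 := mul_le_mul_of_nonneg_left hexpn hK₂pos.le
  linarith only [hM n, h6, h7]
end

section
/- (General solution for the massless scalar field.) Let I ⊆ ℝ be a nonempty open interval and let K, φ : ℝ → ℝ, with K differentiable and φ twice differentiable on I, satisfy for all t ∈ I: K'(t) = −(3/2) φ'(t)², φ''(t) = −K(t) φ'(t), the constraint K(t)² = (3/2) φ'(t)², and K(t) > 0. Then there exist a real number t' with t' < t for all t ∈ I, a constant c > 0, and a sign ε ∈ {1, −1} such that K(t) = 1/(t − t') and φ(t) = ε √(2/3) · ln((t − t')/c) for all t ∈ I. -/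
set_option linter.unusedRCasesPattern false in
lemma const_of_deriv_zero (I : Set ℝ) (hconv : Convex ℝ I) (hIopen : IsOpen I)
    (f : ℝ → ℝ) (hf : ∀ t ∈ I, HasDerivAt f 0 t) {x y : ℝ} (hx : x ∈ I) (hy : y ∈ I) :
    f x = f y := by
  apply hconv.is_const_of_fderivWithin_eq_zero (𝕜 := ℝ)
      (fun t ht => ((hf t ht).differentiableAt).differentiableWithinAt) _ hx hy
  intro t ht
  rw [fderivWithin_of_isOpen hIopen ht, (hf t ht).hasFDerivAt.fderiv]
  ext v; simp

/-- (General solution for the massless scalar field.) If `K, φ` (with `ψ = φ'`) solve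
the massless FRW equations `K' = −(3/2) φ'²`, `φ'' = −K φ'`, with constraint
`K² = (3/2) φ'²` and `K > 0`, on a nonempty open interval `I`, then there are
`t' < I`, `c > 0` and a sign `ε ∈ {1, −1}` with `K(t) = 1/(t − t')` and
`φ(t) = ε √(2/3) ln((t − t')/c)` on `I`. -/
theorem stmt17 (I : Set ℝ) (hI : I.OrdConnected) (hIopen : IsOpen I)
    (hIne : I.Nonempty) (K φ ψ : ℝ → ℝ)
    (hφ : ∀ t ∈ I, HasDerivAt φ (ψ t) t)
    (hψ : ∀ t ∈ I, HasDerivAt ψ (-K t * ψ t) t)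
    (hK : ∀ t ∈ I, HasDerivAt K (-(3 / 2) * (ψ t) ^ 2) t)
    (hcon : ∀ t ∈ I, (K t) ^ 2 = (3 / 2) * (ψ t) ^ 2)
    (hKpos : ∀ t ∈ I, 0 < K t) :
    ∃ t' : ℝ, (∀ t ∈ I, t' < t) ∧
      ∃ c > (0 : ℝ), ∃ ε : ℝ, (ε = 1 ∨ ε = -1) ∧
        ∀ t ∈ I, K t = 1 / (t - t') ∧
          φ t = ε * Real.sqrt (2 / 3) * Real.log ((t - t') / c) := by
  obtain ⟨t0, ht0⟩ := hIne
  have hconv : Convex ℝ I := hI.convex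
  set s : ℝ := Real.sqrt (2 / 3) with hs
  have hspos : 0 < s := Real.sqrt_pos.mpr (by norm_num)
  have hssq : s ^ 2 = 2 / 3 := Real.sq_sqrt (by norm_num)
  -- K part
  have hginv : ∀ t ∈ I, HasDerivAt (fun u => (K u)⁻¹ - u) 0 t := by
    intro t ht
    have h1 : HasDerivAt K (-(K t) ^ 2) t := by
      have := hK t ht
      have e : -(3 / 2 : ℝ) * (ψ t) ^ 2 = -(K t) ^ 2 := by rw [hcon t ht]; ring
      rwa [e] at this
    have hKne : K t ≠ 0 := ne_of_gt (hKpos t ht)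
    have h2 := (h1.inv hKne).sub (hasDerivAt_id t)
    have e2 : -(-(K t) ^ 2) / K t ^ 2 - 1 = 0 := by
      rw [neg_neg, div_self (pow_ne_zero 2 hKne)]; ring
    rwa [e2] at h2
  set t' : ℝ := t0 - (K t0)⁻¹ with ht'
  have hKt : ∀ t ∈ I, (K t)⁻¹ = t - t' := by
    intro t ht
    have := const_of_deriv_zero I hconv hIopen _ hginv ht ht0
    simp only [ht']
    linarith [this]
  have htt' : ∀ t ∈ I, 0 < t - t' := by
    intro t ht
    rw [← hKt t ht]
    exact inv_pos.mpr (hKpos t ht)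
  have hKeq : ∀ t ∈ I, K t = 1 / (t - t') := by
    intro t ht
    rw [← hKt t ht, one_div, inv_inv]
  -- sign of ψ
  have hψne : ∀ t ∈ I, ψ t ≠ 0 := by
    intro t ht h0
    have := hcon t ht
    rw [h0] at this
    nlinarith [hKpos t ht]
  have hsame : ∀ t ∈ I, 0 < ψ t0 * ψ t := by
    intro t ht
    by_contra h
    push_neg at h
    have hsub : Set.uIcc t0 t ⊆ I := hI.uIcc_subset ht0 ht
    have hcont : ContinuousOn ψ (Set.uIcc t0 t) := fun u hu =>
      ((hψ u (hsub hu)).continuousAt).continuousWithinAt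
    have h0mem : (0 : ℝ) ∈ Set.uIcc (ψ t0) (ψ t) := by
      rcases mul_nonpos_iff.mp h with ⟨ha, hb⟩ | ⟨ha, hb⟩ <;>
        · rw [Set.mem_uIcc]; tauto
    obtain ⟨u, hu, hu0⟩ := intermediate_value_uIcc hcont h0mem
    exact hψne u (hsub hu) hu0
  set ε : ℝ := if 0 < ψ t0 then 1 else -1 with hε
  have hεor : ε = 1 ∨ ε = -1 := by rw [hε]; split_ifs <;> simp
  have hψeq : ∀ t ∈ I, ψ t = ε * s * K t := by
    intro t ht
    have hsq : ψ t ^ 2 = (s * K t) ^ 2 := by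
      have := hcon t ht
      nlinarith [hssq]
    have hfac : (ψ t - s * K t) * (ψ t + s * K t) = 0 := by nlinarith
    have hsK : 0 < s * K t := mul_pos hspos (hKpos t ht)
    have hsgn := hsame t ht
    rcases mul_eq_zero.mp hfac with h | h
    · -- ψ t = s K t > 0, so ψ t0 > 0, ε = 1
      have hψt : ψ t = s * K t := by linarith
      have hψtpos : 0 < ψ t := by rw [hψt]; exact hsK
      have hpos : 0 < ψ t0 := by
        rcases mul_pos_iff.mp hsgn with ⟨h1, _⟩ | ⟨_, h2⟩
        · exact h1
        · linarith
      rw [hε, if_pos hpos, hψt]; ring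
    · have hψt : ψ t = -(s * K t) := by linarith
      have hψtneg : ψ t < 0 := by rw [hψt]; linarith
      have hneg : ¬ 0 < ψ t0 := by
        intro hpos
        nlinarith
      rw [hε, if_neg hneg, hψt]; ring
  -- φ part
  have hεsq : ε * ε = 1 := by rcases hεor with h | h <;> rw [h] <;> norm_num
  have hf : ∀ t ∈ I, HasDerivAt (fun u => φ u - ε * s * Real.log (u - t')) 0 t := by
    intro t ht
    have hlog : HasDerivAt (fun u => Real.log (u - t')) (1 / (t - t')) t := by
      have h1 : HasDerivAt (fun u : ℝ => u - t') 1 t := (hasDerivAt_id t).sub_const t'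
      have := (Real.hasDerivAt_log (ne_of_gt (htt' t ht))).comp t h1
      simpa [one_div, Function.comp_def] using this
    have h2 := (hφ t ht).sub ((hlog.const_mul (ε * s)))
    have e2 : ψ t - ε * s * (1 / (t - t')) = 0 := by
      rw [hψeq t ht, hKeq t ht]; ring
    rwa [e2] at h2
  set C : ℝ := φ t0 - ε * s * Real.log (t0 - t') with hC
  have hfc : ∀ t ∈ I, φ t - ε * s * Real.log (t - t') = C := fun t ht =>
    const_of_deriv_zero I hconv hIopen _ hf ht ht0
  refine ⟨t', fun t ht => by linarith [htt' t ht], Real.exp (-(ε * C / s)), Real.exp_pos _, ε, hεor, ?_⟩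
  intro t ht
  refine ⟨hKeq t ht, ?_⟩
  have hfct := hfc t ht
  rw [Real.log_div (ne_of_gt (htt' t ht)) (ne_of_gt (Real.exp_pos _)), Real.log_exp]
  have hsne : s ≠ 0 := ne_of_gt hspos
  rw [mul_sub, mul_neg, sub_neg_eq_add, show ε * s * (ε * C / s) = ε * ε * C by field_simp]
  linear_combination hfct - C * hεsq
end

section
/- Let λ > √6 and let (K, φ) be a non-trivial scalar field cosmology on (0, t₀] such that K(t) → ∞ as t → 0⁺. Define the spatial volume element v(t) = exp(−∫_t^{t₀} K(u) du), so that v'(t) = K(t) v(t) and v(t₀) = 1. Then v(t)/t → 0 as t → 0⁺; that is, near the singularity the volume element expands strictly more slowly than linearly in proper time. -/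
open Set intervalIntegral

lemma subIoc19 {t₀ a b : ℝ} (ha : a ∈ Ioc (0:ℝ) t₀) (hb : b ∈ Ioc (0:ℝ) t₀) (hab : a ≤ b) :
    Set.uIcc a b ⊆ Ioc (0:ℝ) t₀ := by
  rw [Set.uIcc_of_le hab]
  exact fun x hx => ⟨lt_of_lt_of_le ha.1 hx.1, le_trans hx.2 hb.2⟩

lemma intble19 {t₀ a b : ℝ} {f : ℝ → ℝ} (hf : ContinuousOn f (Ioc (0:ℝ) t₀))
    (ha : a ∈ Ioc (0:ℝ) t₀) (hb : b ∈ Ioc (0:ℝ) t₀) (hab : a ≤ b) :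
    IntervalIntegrable f MeasureTheory.volume a b :=
  (hf.mono (subIoc19 ha hb hab)).intervalIntegrable

lemma ftc19 {t₀ a b : ℝ} {F F' : ℝ → ℝ}
    (hF : ∀ x ∈ Ioc (0:ℝ) t₀, HasDerivAt F (F' x) x)
    (hF' : ContinuousOn F' (Ioc (0:ℝ) t₀))
    (ha : a ∈ Ioc (0:ℝ) t₀) (hb : b ∈ Ioc (0:ℝ) t₀) (hab : a ≤ b) :
    ∫ u in a..b, F' u = F b - F a :=
  integral_eq_sub_of_hasDerivAt (fun x hx => hF x (subIoc19 ha hb hab hx))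
    (intble19 hF' ha hb hab)

lemma invCont19 {t₀ : ℝ} : ContinuousOn (fun u:ℝ => u⁻¹) (Ioc (0:ℝ) t₀) :=
  ContinuousOn.inv₀ continuousOn_id (fun u hu => ne_of_gt hu.1)

-- pointwise inequality lemma: c (1 - |1 - (3/2)x^2|) ≤ lam x for x > 0, c = lam√(2/3)
lemma ptwise19 {lam x : ℝ} (hlam : Real.sqrt 6 < lam) (hx : 0 < x) :
    lam * Real.sqrt (2/3) * (1 - |1 - (3/2) * x^2|) ≤ lam * x := by
  have hs6 : (0:ℝ) < Real.sqrt 6 := Real.sqrt_pos.mpr (by norm_num)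
  have hlam0 : 0 < lam := lt_trans hs6 hlam
  set s := Real.sqrt (2/3) with hsdef
  have hs2 : s^2 = 2/3 := Real.sq_sqrt (by norm_num)
  have hs0 : 0 < s := Real.sqrt_pos.mpr (by norm_num)
  rcases le_or_gt ((3/2) * x^2) 1 with h | h
  · rw [abs_of_nonneg (by linarith)]
    have hxs : x ≤ s := by nlinarith
    have h5 : 0 ≤ lam * x * s * (s - x) := by
      have := sub_nonneg.2 hxs
      positivity
    have h6 : lam * x * s * (s - x) = lam * x * s^2 - lam * s * x^2 := by ring
    have h7 : lam * x * s^2 = 2/3 * (lam * x) := by rw [hs2]; ring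
    nlinarith
  · rw [abs_of_neg (by linarith)]
    have hxs : s ≤ x := by nlinarith
    have h5 : 0 ≤ lam * (x - s) * (1 + (3/2) * s * x) := by
      have h5a := sub_nonneg.2 hxs
      have h5b : 0 ≤ (3/2) * s * x := by positivity
      have := mul_nonneg hlam0.le h5a
      nlinarith
    have h6 : lam * (x - s) * (1 + (3/2)*s*x) =
        lam*x - lam*s + (3/2)*lam*s*x^2 - (3/2)*lam*x*s^2 := by ring
    have h7 : (3/2)*lam*x*s^2 = lam * x := by rw [hs2]; ring
    nlinarith

lemma key19 (lam t₁ A₂ M : ℝ) (hlam : Real.sqrt 6 < lam) (ht₁ : 0 < t₁) (hM : 0 < M)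
    (φ ψ : ℝ → ℝ)
    (hφ : ∀ t ∈ Ioc (0:ℝ) t₁, HasDerivAt φ (ψ t) t)
    (hψc : ContinuousOn ψ (Ioc (0:ℝ) t₁))
    (hpos : ∀ t ∈ Ioc (0:ℝ) t₁, 0 < ψ t)
    (hInt : ∀ t ∈ Ioc (0:ℝ) t₁, (∫ u in t..t₁, |1 - (3/2)*(u*ψ u)^2| / u) ≤ A₂)
    (hW : ∀ t ∈ Ioc (0:ℝ) t₁, 3*t^2*Real.exp (-(lam * φ t)) ≤ M) : False := by
  have hs6 : (0:ℝ) < Real.sqrt 6 := Real.sqrt_pos.mpr (by norm_num)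
  have hlam0 : 0 < lam := lt_trans hs6 hlam
  set s := Real.sqrt (2/3) with hsdef
  have hs0 : 0 < s := Real.sqrt_pos.mpr (by norm_num)
  set c := lam * s with hcdef
  have hc2 : 2 < c := by
    have h1 : Real.sqrt 6 * s < lam * s := mul_lt_mul_of_pos_right hlam hs0
    have h2 : Real.sqrt 6 * s = 2 := by
      rw [hsdef, ← Real.sqrt_mul (by norm_num : (0:ℝ) ≤ 6)]
      rw [show (6:ℝ) * (2/3) = 4 by norm_num, show (4:ℝ) = 2^2 by norm_num,
        Real.sqrt_sq (by norm_num : (0:ℝ) ≤ 2)]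
    linarith
  have hc0 : 0 < c := by linarith
  have ht₁m : t₁ ∈ Ioc (0:ℝ) t₁ := ⟨ht₁, le_refl _⟩
  have hA₂0 : 0 ≤ A₂ := by
    have := hInt t₁ ht₁m
    rwa [integral_same] at this
  have hDc : ContinuousOn (fun u => |1 - (3/2)*(u*ψ u)^2| / u) (Ioc (0:ℝ) t₁) := by
    refine ContinuousOn.div ?_ continuousOn_id (fun u hu => ne_of_gt hu.1)
    exact (continuousOn_const.sub ((continuousOn_const.mul
      ((continuousOn_id.mul hψc).pow 2)))).abs
  -- the main estimate
  have main : ∀ t ∈ Ioc (0:ℝ) t₁,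
      lam * φ t ≤ lam * φ t₁ - c * (Real.log t₁ - Real.log t) + c * A₂ := by
    intro t ht
    have hFd : ∀ u ∈ Ioc (0:ℝ) t₁,
        HasDerivAt (fun x => 2 * Real.log x - lam * φ x) (2 * u⁻¹ - lam * ψ u) u := by
      intro u hu
      exact ((Real.hasDerivAt_log (ne_of_gt hu.1)).const_mul 2).sub ((hφ u hu).const_mul lam)
    have hF'c : ContinuousOn (fun u => 2 * u⁻¹ - lam * ψ u) (Ioc (0:ℝ) t₁) :=
      (continuousOn_const.mul invCont19).sub (continuousOn_const.mul hψc)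
    have hftc : (∫ u in t..t₁, (2 * u⁻¹ - lam * ψ u)) =
        (2 * Real.log t₁ - lam * φ t₁) - (2 * Real.log t - lam * φ t) :=
      ftc19 hFd hF'c ht ht₁m ht.2
    have habs : ContinuousOn (fun u => (2-c) * u⁻¹ + c * (|1 - (3/2)*(u*ψ u)^2| / u))
        (Ioc (0:ℝ) t₁) :=
      (continuousOn_const.mul invCont19).add (continuousOn_const.mul hDc)
    have hmono : (∫ u in t..t₁, (2 * u⁻¹ - lam * ψ u)) ≤
        ∫ u in t..t₁, ((2-c) * u⁻¹ + c * (|1 - (3/2)*(u*ψ u)^2| / u)) := by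
      refine integral_mono_on ht.2 (intble19 hF'c ht ht₁m ht.2)
        (intble19 habs ht ht₁m ht.2) ?_
      intro u hu
      have huS : u ∈ Ioc (0:ℝ) t₁ := ⟨lt_of_lt_of_le ht.1 hu.1, le_trans hu.2 ht₁m.2⟩
      have hu0 : 0 < u := huS.1
      have hx : 0 < u * ψ u := mul_pos hu0 (hpos u huS)
      have hp := ptwise19 hlam hx
      rw [← hcdef] at hp
      have h1 : c * (1 - |1 - (3/2)*(u*ψ u)^2|) / u ≤ lam * ψ u := by
        rw [div_le_iff₀ hu0]
        calc c * (1 - |1 - (3/2)*(u*ψ u)^2|) ≤ lam * (u * ψ u) := hp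
        _ = lam * ψ u * u := by ring
      have h2 : c * (1 - |1 - (3/2)*(u*ψ u)^2|) / u
          = c * u⁻¹ - c * (|1 - (3/2)*(u*ψ u)^2| / u) := by
        field_simp
      rw [h2] at h1
      linarith
    have hsplit : (∫ u in t..t₁, ((2-c) * u⁻¹ + c * (|1 - (3/2)*(u*ψ u)^2| / u)))
        = (2-c) * (Real.log t₁ - Real.log t)
          + c * ∫ u in t..t₁, |1 - (3/2)*(u*ψ u)^2| / u := by
      have h1 : ContinuousOn (fun u:ℝ => (2-c) * u⁻¹) (Ioc (0:ℝ) t₁) :=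
        continuousOn_const.mul invCont19
      have h2 : ContinuousOn (fun u => c * (|1 - (3/2)*(u*ψ u)^2| / u)) (Ioc (0:ℝ) t₁) :=
        continuousOn_const.mul hDc
      rw [integral_add (intble19 h1 ht ht₁m ht.2) (intble19 h2 ht ht₁m ht.2),
        integral_const_mul, integral_const_mul, integral_inv_of_pos ht.1 ht₁,
        Real.log_div (ne_of_gt ht₁) (ne_of_gt ht.1)]
    have hIb : c * (∫ u in t..t₁, |1 - (3/2)*(u*ψ u)^2| / u) ≤ c * A₂ :=
      mul_le_mul_of_nonneg_left (hInt t ht) hc0.le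
    rw [hftc, hsplit] at hmono
    nlinarith
  -- now pick t small
  obtain ⟨C₁, hC₁⟩ : ∃ x:ℝ, x = -(lam * φ t₁) - c * A₂ := ⟨_, rfl⟩
  obtain ⟨X, hX⟩ : ∃ x:ℝ, x = Real.log M - Real.log (3*t₁^2) - C₁ := ⟨_, rfl⟩
  have hcne : c - 2 ≠ 0 := by linarith
  obtain ⟨L, hLdef⟩ : ∃ x:ℝ, x = 1 + |X| / (c-2) := ⟨_, rfl⟩
  have hL0 : 0 ≤ L := by
    have h := div_nonneg (abs_nonneg X) (by linarith : (0:ℝ) ≤ c - 2)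
    rw [hLdef]; linarith
  obtain ⟨t, htdef⟩ : ∃ x:ℝ, x = t₁ * Real.exp (-L) := ⟨_, rfl⟩
  have he1 : Real.exp (-L) ≤ 1 := Real.exp_le_one_iff.mpr (by linarith)
  have ht : t ∈ Ioc (0:ℝ) t₁ := by
    rw [htdef]
    constructor
    · positivity
    · nlinarith [Real.exp_pos (-L)]
  have hlogt : Real.log t = Real.log t₁ - L := by
    rw [htdef, Real.log_mul (ne_of_gt ht₁) (Real.exp_ne_zero _), Real.log_exp]
    ring
  have hmt := main t ht
  rw [hlogt] at hmt
  have hge : c*L + C₁ ≤ -(lam * φ t) := by rw [hC₁]; linarith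
  have hexp : 3*t₁^2 * Real.exp ((c-2)*L + C₁) ≤ 3*t^2*Real.exp (-(lam * φ t)) := by
    have h1 : Real.exp (c*L + C₁) ≤ Real.exp (-(lam*φ t)) := Real.exp_le_exp.mpr hge
    have h2 : (3:ℝ)*t^2 = 3*t₁^2 * Real.exp (-(2*L)) := by
      rw [htdef]
      have he2 : Real.exp (-(2*L)) = Real.exp (-L) * Real.exp (-L) := by
        rw [← Real.exp_add]; ring_nf
      rw [he2]; ring
    have h3 : 3*t₁^2 * Real.exp ((c-2)*L + C₁)
        = 3*t₁^2 * Real.exp (-(2*L)) * Real.exp (c*L + C₁) := by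
      have he3 : (c-2)*L + C₁ = (-(2*L)) + (c*L + C₁) := by ring
      rw [he3, Real.exp_add]; ring
    rw [h3, h2]
    exact mul_le_mul_of_nonneg_left h1 (by positivity)
  have hbig : M < 3*t₁^2 * Real.exp ((c-2)*L + C₁) := by
    have h3 : X < (c-2)*L := by
      have he4 : (c-2)*L = (c-2) + |X| := by
        rw [hLdef]; field_simp
      rw [he4]
      have := le_abs_self X
      linarith
    rw [hX] at h3
    have h4 : Real.exp (Real.log M - Real.log (3*t₁^2)) < Real.exp ((c-2)*L + C₁) :=
      Real.exp_lt_exp.mpr (by linarith)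
    rw [Real.exp_sub, Real.exp_log hM, Real.exp_log (by positivity : (0:ℝ) < 3*t₁^2)] at h4
    rw [div_lt_iff₀ (by positivity : (0:ℝ) < 3*t₁^2)] at h4
    linarith [h4]
  have := hW t ht
  linarith

set_option maxHeartbeats 4000000 in
open intervalIntegral in
/-- Let `λ > √6` and let `(K, φ)` (with `ψ = φ'`) be a non-trivial scalar field cosmology
with potential `V(φ) = exp(λφ) + exp(−λφ)` on `(0, t₀]` such that `K(t) → ∞` as `t → 0⁺`.
With the volume element `v(t) = exp(−∫_t^{t₀} K(u) du)`, one has `v(t)/t → 0` as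
`t → 0⁺`: near the singularity the volume element expands strictly more slowly than
linearly in proper time. -/
theorem stmt19 (lam : ℝ) (hlam : Real.sqrt 6 < lam) (t₀ : ℝ) (ht₀ : 0 < t₀)
    (K φ ψ : ℝ → ℝ)
    (hφ : ∀ t ∈ Set.Ioc (0 : ℝ) t₀, HasDerivAt φ (ψ t) t)
    (hψ : ∀ t ∈ Set.Ioc (0 : ℝ) t₀, HasDerivAt ψ
      (-K t * ψ t - lam * (Real.exp (lam * φ t) - Real.exp (-(lam * φ t)))) t)
    (hK : ∀ t ∈ Set.Ioc (0 : ℝ) t₀, HasDerivAt K (-(3 / 2) * (ψ t) ^ 2) t)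
    (hcon : ∀ t ∈ Set.Ioc (0 : ℝ) t₀,
      (K t) ^ 2 = 3 * (Real.exp (lam * φ t) + Real.exp (-(lam * φ t)))
        + (3 / 2) * (ψ t) ^ 2)
    (hKpos : ∀ t ∈ Set.Ioc (0 : ℝ) t₀, 0 < K t)
    (hnt : ∃ t ∈ Set.Ioc (0 : ℝ) t₀, ψ t ≠ 0)
    (hsing : Filter.Tendsto K (nhdsWithin 0 (Set.Ioi 0)) Filter.atTop) :
    Filter.Tendsto (fun t => Real.exp (-∫ u in t..t₀, K u) / t)
      (nhdsWithin 0 (Set.Ioi 0)) (nhds 0) := by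
  have hs6 : (0:ℝ) < Real.sqrt 6 := Real.sqrt_pos.mpr (by norm_num)
  have hlam0 : 0 < lam := lt_trans hs6 hlam
  have ht₀S : t₀ ∈ Ioc (0:ℝ) t₀ := ⟨ht₀, le_refl _⟩
  have cK : ContinuousOn K (Ioc (0:ℝ) t₀) :=
    fun u hu => ((hK u hu).continuousAt).continuousWithinAt
  have cψ : ContinuousOn ψ (Ioc (0:ℝ) t₀) :=
    fun u hu => ((hψ u hu).continuousAt).continuousWithinAt
  have cφ : ContinuousOn φ (Ioc (0:ℝ) t₀) :=
    fun u hu => ((hφ u hu).continuousAt).continuousWithinAt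
  have cE : ContinuousOn (fun u => Real.exp (lam * φ u)) (Ioc (0:ℝ) t₀) :=
    Real.continuous_exp.comp_continuousOn (continuousOn_const.mul cφ)
  have cE' : ContinuousOn (fun u => Real.exp (-(lam * φ u))) (Ioc (0:ℝ) t₀) :=
    Real.continuous_exp.comp_continuousOn ((continuousOn_const.mul cφ).neg)
  have cV : ContinuousOn (fun u => Real.exp (lam * φ u) + Real.exp (-(lam * φ u)))
      (Ioc (0:ℝ) t₀) := cE.add cE'
  have hD : ∀ u ∈ Ioc (0:ℝ) t₀, (3/2)*(ψ u)^2 ≤ (K u)^2 := by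
    intro u hu
    nlinarith [hcon u hu, Real.exp_pos (lam * φ u), Real.exp_pos (-(lam * φ u))]
  have hkpos : ∀ u ∈ Ioc (0:ℝ) t₀, (0:ℝ) < u * K u :=
    fun u hu => mul_pos hu.1 (hKpos u hu)
  -- Step 1 : 1 ≤ t K t
  have hk1 : ∀ u ∈ Ioc (0:ℝ) t₀, 1 ≤ u * K u := by
    have hfd : ∀ u ∈ Ioc (0:ℝ) t₀,
        HasDerivAt (fun x => (K x)⁻¹) ((3/2)*(ψ u)^2/(K u)^2) u := by
      intro u hu
      have h : HasDerivAt (fun x => (K x)⁻¹) (-(-(3/2)*(ψ u)^2) / K u ^ 2) u :=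
        (hK u hu).inv (ne_of_gt (hKpos u hu))
      convert h using 1
      ring
    have hfc : ContinuousOn (fun u => (3/2)*(ψ u)^2/(K u)^2) (Ioc (0:ℝ) t₀) :=
      (continuousOn_const.mul (cψ.pow 2)).div (cK.pow 2)
        (fun u hu => pow_ne_zero _ (ne_of_gt (hKpos u hu)))
    have hstep : ∀ sp ∈ Ioc (0:ℝ) t₀, ∀ x ∈ Ioc (0:ℝ) sp,
        (K sp)⁻¹ - (K x)⁻¹ ≤ sp - x := by
      intro sp hsp x hx
      have hxS : x ∈ Ioc (0:ℝ) t₀ := ⟨hx.1, le_trans hx.2 hsp.2⟩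
      have hftc := ftc19 hfd hfc hxS hsp hx.2
      have hm : (∫ u in x..sp, ((3/2)*(ψ u)^2/(K u)^2)) ≤ ∫ u in x..sp, (1:ℝ) := by
        refine integral_mono_on hx.2 (intble19 hfc hxS hsp hx.2)
          intervalIntegrable_const ?_
        intro u hu
        have huS : u ∈ Ioc (0:ℝ) t₀ := ⟨lt_of_lt_of_le hxS.1 hu.1, le_trans hu.2 hsp.2⟩
        rw [div_le_one (pow_pos (hKpos u huS) 2)]
        exact hD u huS
      have h2 : (∫ u in x..sp, (1:ℝ)) = sp - x := by simp
      rw [hftc, h2] at hm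
      exact hm
    intro sp hsp
    have hinv : Filter.Tendsto (fun x => (K x)⁻¹) (nhdsWithin 0 (Ioi 0)) (nhds 0) :=
      hsing.inv_tendsto_atTop
    have hev : ∀ᶠ x in nhdsWithin (0:ℝ) (Ioi 0), (K sp)⁻¹ - sp + x ≤ (K x)⁻¹ := by
      filter_upwards [Ioc_mem_nhdsGT_of_mem (⟨le_refl (0:ℝ), hsp.1⟩ : (0:ℝ) ∈ Ico (0:ℝ) sp)]
        with x hx
      have := hstep sp hsp x hx
      linarith
    have hlim : Filter.Tendsto (fun x => (K sp)⁻¹ - sp + x) (nhdsWithin (0:ℝ) (Ioi 0))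
        (nhds ((K sp)⁻¹ - sp + 0)) :=
      tendsto_const_nhds.add (Filter.tendsto_id.mono_left nhdsWithin_le_nhds)
    have hle : (K sp)⁻¹ - sp + 0 ≤ 0 := le_of_tendsto_of_tendsto hlim hinv hev
    have hKsp := hKpos sp hsp
    have h1 : (K sp)⁻¹ ≤ sp := by linarith
    have h2 := mul_le_mul_of_nonneg_left h1 hKsp.le
    rw [mul_inv_cancel₀ (ne_of_gt hKsp)] at h2
    nlinarith
  have hg0 : ∀ u ∈ Ioc (0:ℝ) t₀, 0 ≤ K u - u⁻¹ := by
    intro u hu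
    have h := hk1 u hu
    have hu0 := hu.1
    have h2 := mul_le_mul_of_nonneg_left h (inv_nonneg.mpr hu0.le)
    rw [mul_one] at h2
    have h3 : u⁻¹*(u*K u) = K u := by field_simp
    linarith
  have cg : ContinuousOn (fun u => K u - u⁻¹) (Ioc (0:ℝ) t₀) := cK.sub invCont19
  -- reduce to divergence of ∫ (K - 1/u)
  suffices hGt : Filter.Tendsto (fun t => ∫ u in t..t₀, (K u - u⁻¹))
      (nhdsWithin 0 (Set.Ioi 0)) Filter.atTop by
    have h1 : Filter.Tendsto (fun t => Real.exp (-(∫ u in t..t₀, (K u - u⁻¹))) / t₀)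
        (nhdsWithin 0 (Set.Ioi 0)) (nhds 0) := by
      have h2 : Filter.Tendsto (fun t => -(∫ u in t..t₀, (K u - u⁻¹)))
          (nhdsWithin 0 (Set.Ioi 0)) Filter.atBot := Filter.tendsto_neg_atTop_atBot.comp hGt
      have h3 := Real.tendsto_exp_atBot.comp h2
      have h4 := h3.div_const t₀
      rwa [zero_div] at h4
    refine h1.congr' ?_
    filter_upwards [Ioc_mem_nhdsGT_of_mem (⟨le_refl (0:ℝ), ht₀⟩ : (0:ℝ) ∈ Ico (0:ℝ) t₀)]
      with x hx
    have hIK : (∫ u in x..t₀, K u) = (∫ u in x..t₀, (K u - u⁻¹))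
        + (Real.log t₀ - Real.log x) := by
      have hsub : (∫ u in x..t₀, (K u - u⁻¹)) = (∫ u in x..t₀, K u) - ∫ u in x..t₀, u⁻¹ :=
        integral_sub (intble19 cK hx ht₀S hx.2) (intble19 invCont19 hx ht₀S hx.2)
      rw [integral_inv_of_pos hx.1 ht₀, Real.log_div (ne_of_gt ht₀) (ne_of_gt hx.1)] at hsub
      linarith
    have e1 : -(∫ u in x..t₀, K u)
        = (-(∫ u in x..t₀, (K u - u⁻¹))) + (Real.log x - Real.log t₀) := by
      rw [hIK]; ring
    rw [e1, Real.exp_add, Real.exp_sub, Real.exp_log hx.1, Real.exp_log ht₀]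
    rw [div_eq_div_iff (ne_of_gt ht₀) (ne_of_gt hx.1), mul_assoc,
      div_mul_cancel₀ _ (ne_of_gt ht₀)]
  -- reduce to unboundedness
  suffices hEx : ∀ b : ℝ, ∃ sp ∈ Ioc (0:ℝ) t₀, b ≤ ∫ u in sp..t₀, (K u - u⁻¹) by
    rw [Filter.tendsto_atTop]
    intro b
    obtain ⟨sp, hsp, hb⟩ := hEx b
    filter_upwards [Ioc_mem_nhdsGT_of_mem (⟨le_refl (0:ℝ), hsp.1⟩ : (0:ℝ) ∈ Ico (0:ℝ) sp)]
      with x hx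
    have hxS : x ∈ Ioc (0:ℝ) t₀ := ⟨hx.1, le_trans hx.2 hsp.2⟩
    have hadd := integral_add_adjacent_intervals (a := x) (b := sp) (c := t₀)
      (intble19 cg hxS hsp hx.2) (intble19 cg hsp ht₀S hsp.2)
    have h0 : 0 ≤ ∫ u in x..sp, (K u - u⁻¹) :=
      integral_nonneg hx.2
        (fun u hu => hg0 u ⟨lt_of_lt_of_le hxS.1 hu.1, le_trans hu.2 hsp.2⟩)
    linarith
  by_contra hcon2
  push_neg at hcon2
  obtain ⟨A, hA⟩ := hcon2
  have hA' : ∀ sp ∈ Ioc (0:ℝ) t₀, (∫ u in sp..t₀, (K u - u⁻¹)) ≤ A :=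
    fun sp hsp => le_of_lt (hA sp hsp)
  have hA0 : 0 ≤ A := by
    have := hA' t₀ ht₀S
    rwa [integral_same] at this
  -- M bound on u K u
  obtain ⟨M, hMdef⟩ : ∃ x:ℝ, x = Real.exp (Real.log (t₀ * K t₀) + A) := ⟨_, rfl⟩
  have hM1 : 1 ≤ M := by
    rw [hMdef]
    calc (1:ℝ) = Real.exp 0 := Real.exp_zero.symm
    _ ≤ _ := Real.exp_le_exp.mpr (by
        have h := Real.log_nonneg (hk1 t₀ ht₀S)
        linarith)
  have hM0 : 0 < M := lt_of_lt_of_le one_pos hM1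
  have hkd : ∀ u ∈ Ioc (0:ℝ) t₀,
      HasDerivAt (fun x => x * K x) (K u + u*(-(3/2)*(ψ u)^2)) u := by
    intro u hu
    have h : HasDerivAt (fun x => x * K x) (1 * K u + id u * (-(3/2)*(ψ u)^2)) u :=
      (hasDerivAt_id u).mul (hK u hu)
    convert h using 1
    simp only [id_eq]
    ring
  have hkdc : ContinuousOn (fun u => K u + u*(-(3/2)*(ψ u)^2)) (Ioc (0:ℝ) t₀) :=
    cK.add (continuousOn_id.mul (continuousOn_const.mul (cψ.pow 2)))
  have hkM : ∀ u ∈ Ioc (0:ℝ) t₀, u * K u ≤ M := by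
    intro u hu
    have hlkd : ∀ v ∈ Ioc (0:ℝ) t₀, HasDerivAt (fun x => Real.log (x * K x))
        ((K v + v*(-(3/2)*(ψ v)^2))/(v * K v)) v := by
      intro v hv
      exact (hkd v hv).log (ne_of_gt (hkpos v hv))
    have hlkc : ContinuousOn (fun v => (K v + v*(-(3/2)*(ψ v)^2))/(v * K v))
        (Ioc (0:ℝ) t₀) :=
      hkdc.div (continuousOn_id.mul cK) (fun v hv => ne_of_gt (hkpos v hv))
    have hftc : (∫ v in u..t₀, ((K v + v*(-(3/2)*(ψ v)^2))/(v * K v)))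
        = Real.log (t₀ * K t₀) - Real.log (u * K u) := ftc19 hlkd hlkc hu ht₀S hu.2
    have hm : (∫ v in u..t₀, (-(K v - v⁻¹))) ≤
        ∫ v in u..t₀, ((K v + v*(-(3/2)*(ψ v)^2))/(v * K v)) := by
      refine integral_mono_on hu.2 ((intble19 cg hu ht₀S hu.2).neg)
        (intble19 hlkc hu ht₀S hu.2) ?_
      intro v hv
      have hvS : v ∈ Ioc (0:ℝ) t₀ := ⟨lt_of_lt_of_le hu.1 hv.1, hv.2⟩
      rw [le_div_iff₀ (hkpos v hvS)]
      have e : (-(K v - v⁻¹)) * (v * K v) = K v - v * (K v)^2 := by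
        field_simp [ne_of_gt hvS.1]
        ring
      rw [e]
      nlinarith [hD v hvS, hvS.1]
    rw [hftc, integral_neg] at hm
    have h4 := hA' u hu
    have h5 : Real.log (u * K u) ≤ Real.log (t₀ * K t₀) + A := by linarith
    calc u * K u = Real.exp (Real.log (u * K u)) := (Real.exp_log (hkpos u hu)).symm
    _ ≤ Real.exp (Real.log (t₀ * K t₀) + A) := Real.exp_le_exp.mpr h5
    _ = M := hMdef.symm
  -- B bound on ∫ 3 u V
  have c3uV : ContinuousOn (fun u => 3*u*(Real.exp (lam*φ u) + Real.exp (-(lam*φ u))))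
      (Ioc (0:ℝ) t₀) := (continuousOn_const.mul continuousOn_id).mul cV
  have hB : ∀ t ∈ Ioc (0:ℝ) t₀, (∫ u in t..t₀,
      3*u*(Real.exp (lam * φ u) + Real.exp (-(lam * φ u)))) ≤ t₀ * K t₀ + M*A := by
    intro t ht
    have hftc : (∫ u in t..t₀, (K u + u*(-(3/2)*(ψ u)^2))) = t₀ * K t₀ - t * K t :=
      ftc19 hkd hkdc ht ht₀S ht.2
    have hcong : (∫ u in t..t₀, (K u + u*(-(3/2)*(ψ u)^2)))
        = ∫ u in t..t₀, (3*u*(Real.exp (lam*φ u) + Real.exp (-(lam*φ u)))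
            - (u*K u)*(K u - u⁻¹)) := by
      refine integral_congr ?_
      intro u hu
      have huS : u ∈ Ioc (0:ℝ) t₀ := subIoc19 ht ht₀S ht.2 hu
      have h := hcon u huS
      have e : (u*K u)*(K u - u⁻¹) = u*(K u)^2 - K u := by
        field_simp [ne_of_gt huS.1]
      show K u + u*(-(3/2)*(ψ u)^2)
        = 3*u*(Real.exp (lam*φ u) + Real.exp (-(lam*φ u))) - (u*K u)*(K u - u⁻¹)
      rw [e]
      linear_combination u * h
    have ckg : ContinuousOn (fun u => (u*K u)*(K u - u⁻¹)) (Ioc (0:ℝ) t₀) :=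
      (continuousOn_id.mul cK).mul cg
    have hsub : (∫ u in t..t₀, (3*u*(Real.exp (lam*φ u) + Real.exp (-(lam*φ u)))
            - (u*K u)*(K u - u⁻¹)))
        = (∫ u in t..t₀, 3*u*(Real.exp (lam*φ u) + Real.exp (-(lam*φ u))))
          - ∫ u in t..t₀, (u*K u)*(K u - u⁻¹) :=
      integral_sub (intble19 c3uV ht ht₀S ht.2) (intble19 ckg ht ht₀S ht.2)
    have hbd : (∫ u in t..t₀, (u*K u)*(K u - u⁻¹)) ≤ M*A := by
      have h1 : (∫ u in t..t₀, (u*K u)*(K u - u⁻¹)) ≤ ∫ u in t..t₀, M*(K u - u⁻¹) := by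
        refine integral_mono_on ht.2 (intble19 ckg ht ht₀S ht.2)
          (intble19 (continuousOn_const.mul cg) ht ht₀S ht.2) ?_
        intro u hu
        have huS : u ∈ Ioc (0:ℝ) t₀ := ⟨lt_of_lt_of_le ht.1 hu.1, hu.2⟩
        exact mul_le_mul_of_nonneg_right (hkM u huS) (hg0 u huS)
      rw [integral_const_mul] at h1
      have h2 := mul_le_mul_of_nonneg_left (hA' t ht) hM0.le
      linarith
    have hkt := hk1 t ht
    rw [hcong, hsub] at hftc
    linarith
  -- A₂ bound on ∫ |1 - D|/u
  obtain ⟨A₂, hA₂def⟩ : ∃ x:ℝ, x = (M+1)*A + (t₀ * K t₀ + M*A) := ⟨_, rfl⟩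
  have cabs : ContinuousOn (fun u => |1 - (3/2)*(u*ψ u)^2| / u) (Ioc (0:ℝ) t₀) := by
    refine ContinuousOn.div ?_ continuousOn_id (fun u hu => ne_of_gt hu.1)
    exact (continuousOn_const.sub (continuousOn_const.mul
      ((continuousOn_id.mul cψ).pow 2))).abs
  have hA₂b : ∀ t ∈ Ioc (0:ℝ) t₀, (∫ u in t..t₀, |1 - (3/2)*(u*ψ u)^2| / u) ≤ A₂ := by
    intro t ht
    have hpt : ∀ u ∈ Icc t t₀, |1 - (3/2)*(u*ψ u)^2|/u
        ≤ (M+1)*(K u - u⁻¹) + 3*u*(Real.exp (lam*φ u) + Real.exp (-(lam*φ u))) := by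
      intro u hu
      have huS : u ∈ Ioc (0:ℝ) t₀ := ⟨lt_of_lt_of_le ht.1 hu.1, hu.2⟩
      have hu0 : (0:ℝ) < u := huS.1
      have h := hcon u huS
      have e1 : 1 - (3/2)*(u*ψ u)^2 = (1 - (u*K u)^2)
          + 3*u^2*(Real.exp (lam*φ u) + Real.exp (-(lam*φ u))) := by
        linear_combination u^2 * h
      have hk := hk1 u huS
      have hkM' := hkM u huS
      have h2 : |1 - (3/2)*(u*ψ u)^2| ≤ ((u*K u)^2 - 1)
          + 3*u^2*(Real.exp (lam*φ u) + Real.exp (-(lam*φ u))) := by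
        rw [e1]
        have ha := abs_add_le (1 - (u*K u)^2)
          (3*u^2*(Real.exp (lam*φ u) + Real.exp (-(lam*φ u))))
        have hb : |1 - (u*K u)^2| = (u*K u)^2 - 1 := by
          rw [abs_of_nonpos (by nlinarith)]
          ring
        have hcpos : (0:ℝ) < 3*u^2*(Real.exp (lam*φ u) + Real.exp (-(lam*φ u))) := by
          positivity
        rw [hb, abs_of_pos hcpos] at ha
        exact ha
      rw [div_le_iff₀ hu0]
      have e3 : u⁻¹ * u = 1 := inv_mul_cancel₀ (ne_of_gt hu0)
      have hprod : (u*K u - 1)*(u*K u + 1) ≤ (u*K u - 1)*(M + 1) :=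
        mul_le_mul_of_nonneg_left (by linarith) (by linarith)
      nlinarith [h2, hg0 u huS]
    have hmono := integral_mono_on ht.2 (intble19 cabs ht ht₀S ht.2)
      (intble19 (f := fun u => (M+1)*(K u - u⁻¹) + 3*u*(Real.exp (lam*φ u) + Real.exp (-(lam*φ u))))
        ((continuousOn_const.mul cg).add c3uV) ht ht₀S ht.2) hpt
    have hadd : (∫ u in t..t₀, ((M+1)*(K u - u⁻¹)
          + 3*u*(Real.exp (lam*φ u) + Real.exp (-(lam*φ u)))))
        = (M+1) * (∫ u in t..t₀, (K u - u⁻¹))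
          + ∫ u in t..t₀, 3*u*(Real.exp (lam*φ u) + Real.exp (-(lam*φ u))) := by
      rw [integral_add (intble19 (f := fun u => (M+1)*(K u - u⁻¹)) (continuousOn_const.mul cg) ht ht₀S ht.2)
        (intble19 c3uV ht ht₀S ht.2), integral_const_mul]
    rw [hadd] at hmono
    have h2 := mul_le_mul_of_nonneg_left (hA' t ht) (by linarith : (0:ℝ) ≤ M+1)
    have h3 := hB t ht
    rw [hA₂def]
    linarith
  -- square bounds
  have hk2M : ∀ u ∈ Ioc (0:ℝ) t₀, (u*K u)^2 ≤ M^2 := by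
    intro u hu
    nlinarith [hk1 u hu, hkM u hu]
  have hcu : ∀ u ∈ Ioc (0:ℝ) t₀, (u*K u)^2
      = 3*u^2*(Real.exp (lam*φ u) + Real.exp (-(lam*φ u))) + (3/2)*(u*ψ u)^2 := by
    intro u hu
    linear_combination u^2 * (hcon u hu)
  have hWm : ∀ u ∈ Ioc (0:ℝ) t₀, 3*u^2*Real.exp (-(lam*φ u)) ≤ M^2 := by
    intro u hu
    nlinarith [hcu u hu, hk2M u hu, sq_nonneg (u*ψ u),
      mul_nonneg (sq_nonneg u) (Real.exp_pos (lam*φ u)).le]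
  have hWp : ∀ u ∈ Ioc (0:ℝ) t₀, 3*u^2*Real.exp (lam*φ u) ≤ M^2 := by
    intro u hu
    nlinarith [hcu u hu, hk2M u hu, sq_nonneg (u*ψ u),
      mul_nonneg (sq_nonneg u) (Real.exp_pos (-(lam*φ u))).le]
  have hψM : ∀ u ∈ Ioc (0:ℝ) t₀, |u * ψ u| ≤ M := by
    intro u hu
    have h1 : (u*ψ u)^2 ≤ M^2 := by
      nlinarith [hcu u hu, hk2M u hu,
        mul_nonneg (sq_nonneg u) (Real.exp_pos (lam*φ u)).le,
        mul_nonneg (sq_nonneg u) (Real.exp_pos (-(lam*φ u))).le]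
    rw [abs_le]
    constructor
    · nlinarith [sq_nonneg (u*ψ u + M)]
    · nlinarith [sq_nonneg (u*ψ u - M)]
  -- Lipschitz-in-log bound for u ψ u
  obtain ⟨Λ, hΛdef⟩ : ∃ x:ℝ, x = M*M + (2/3)*lam*M^2 := ⟨_, rfl⟩
  have hΛ1 : 1 ≤ Λ := by rw [hΛdef]; nlinarith
  have hΛ0 : 0 < Λ := lt_of_lt_of_le one_pos hΛ1
  have hPd : ∀ u ∈ Ioc (0:ℝ) t₀, HasDerivAt (fun x => x * ψ x)
      (ψ u + u * (-K u * ψ u - lam*(Real.exp (lam*φ u) - Real.exp (-(lam*φ u))))) u := by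
    intro u hu
    have h : HasDerivAt (fun x => x * ψ x) (1 * ψ u + id u * (-K u * ψ u
        - lam*(Real.exp (lam*φ u) - Real.exp (-(lam*φ u))))) u :=
      (hasDerivAt_id u).mul (hψ u hu)
    convert h using 1
    simp only [id_eq]
    ring
  have cP' : ContinuousOn (fun u => ψ u + u * (-K u * ψ u
      - lam*(Real.exp (lam*φ u) - Real.exp (-(lam*φ u))))) (Ioc (0:ℝ) t₀) :=
    cψ.add (continuousOn_id.mul ((cK.neg.mul cψ).sub (continuousOn_const.mul (cE.sub cE'))))
  have hP'bd : ∀ u ∈ Ioc (0:ℝ) t₀, |ψ u + u * (-K u * ψ u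
      - lam*(Real.exp (lam*φ u) - Real.exp (-(lam*φ u))))| ≤ Λ * u⁻¹ := by
    intro u hu
    have hu0 := hu.1
    have key0 : |u * (ψ u + u * (-K u * ψ u
        - lam*(Real.exp (lam*φ u) - Real.exp (-(lam*φ u)))))| ≤ Λ := by
      have e : u * (ψ u + u * (-K u * ψ u - lam*(Real.exp (lam*φ u) - Real.exp (-(lam*φ u)))))
          = (u*ψ u)*(1 - u*K u)
            - lam*(u^2*Real.exp (lam*φ u) - u^2*Real.exp (-(lam*φ u))) := by
        ring
      rw [e]
      have b1 : |(u*ψ u)*(1 - u*K u)| ≤ M * M := by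
        rw [abs_mul]
        have hb : |1 - u*K u| ≤ M := by
          rw [abs_of_nonpos (by linarith [hk1 u hu])]
          have := hkM u hu
          linarith
        exact mul_le_mul (hψM u hu) hb (abs_nonneg _) hM0.le
      have b2 : |lam*(u^2*Real.exp (lam*φ u) - u^2*Real.exp (-(lam*φ u)))|
          ≤ (2/3)*lam*M^2 := by
        rw [abs_mul, abs_of_pos hlam0]
        have hb : |u^2*Real.exp (lam*φ u) - u^2*Real.exp (-(lam*φ u))| ≤ (2/3)*M^2 := by
          have h1 := hWp u hu
          have h2 := hWm u hu
          have h3 : (0:ℝ) ≤ u^2*Real.exp (lam*φ u) := by positivity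
          have h4 : (0:ℝ) ≤ u^2*Real.exp (-(lam*φ u)) := by positivity
          rw [abs_le]
          constructor <;> nlinarith
        nlinarith
      calc |(u*ψ u)*(1 - u*K u)
            - lam*(u^2*Real.exp (lam*φ u) - u^2*Real.exp (-(lam*φ u)))|
          ≤ |(u*ψ u)*(1 - u*K u)|
            + |lam*(u^2*Real.exp (lam*φ u) - u^2*Real.exp (-(lam*φ u)))| := by
            rw [sub_eq_add_neg]
            refine le_trans (abs_add_le _ _) ?_
            rw [abs_neg]
        _ ≤ M*M + (2/3)*lam*M^2 := add_le_add b1 b2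
        _ = Λ := hΛdef.symm
    have h5 := mul_le_mul_of_nonneg_right key0 (inv_nonneg.mpr hu0.le)
    rw [abs_mul, abs_of_pos hu0, mul_comm u, mul_assoc,
      mul_inv_cancel₀ (ne_of_gt hu0), mul_one] at h5
    exact h5
  have hLip : ∀ a b : ℝ, a ∈ Ioc (0:ℝ) t₀ → b ∈ Ioc (0:ℝ) t₀ → a ≤ b →
      |b * ψ b - a * ψ a| ≤ Λ * (Real.log b - Real.log a) := by
    intro a b ha hb hab
    have hPeq : (∫ u in a..b, (ψ u + u * (-K u * ψ u
        - lam*(Real.exp (lam*φ u) - Real.exp (-(lam*φ u)))))) = b * ψ b - a * ψ a :=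
      ftc19 hPd cP' ha hb hab
    have h1 : |∫ u in a..b, (ψ u + u * (-K u * ψ u
        - lam*(Real.exp (lam*φ u) - Real.exp (-(lam*φ u)))))|
        ≤ ∫ u in a..b, |ψ u + u * (-K u * ψ u
        - lam*(Real.exp (lam*φ u) - Real.exp (-(lam*φ u))))| := by
      have h0 := intervalIntegral.norm_integral_le_integral_norm
        (f := fun u => ψ u + u * (-K u * ψ u
          - lam*(Real.exp (lam*φ u) - Real.exp (-(lam*φ u)))))
        (μ := MeasureTheory.volume) hab
      simpa [Real.norm_eq_abs] using h0
    have h2 : (∫ u in a..b, |ψ u + u * (-K u * ψ u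
        - lam*(Real.exp (lam*φ u) - Real.exp (-(lam*φ u))))|) ≤ ∫ u in a..b, Λ * u⁻¹ :=
      integral_mono_on hab (intble19 cP'.abs ha hb hab)
        (intble19 (continuousOn_const.mul invCont19) ha hb hab)
        (fun u hu => hP'bd u ⟨lt_of_lt_of_le ha.1 hu.1, le_trans hu.2 hb.2⟩)
    have h3 : (∫ u in a..b, Λ * u⁻¹) = Λ * (Real.log b - Real.log a) := by
      rw [integral_const_mul, integral_inv_of_pos ha.1 (lt_of_lt_of_le ha.1 hab),
        Real.log_div (ne_of_gt (lt_of_lt_of_le ha.1 hab)) (ne_of_gt ha.1)]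
    rw [hPeq] at h1
    rw [h3] at h2
    linarith
  -- eventually no zero of ψ
  obtain ⟨δ, hδdef⟩ : ∃ x:ℝ, x = 1/(3*Λ) := ⟨_, rfl⟩
  have hδ0 : 0 < δ := by rw [hδdef]; positivity
  have hexpδ : Real.exp (-δ) ≤ 1 := Real.exp_le_one_iff.mpr (by linarith)
  have hΛδ : Λ * δ = 1/3 := by
    rw [hδdef]
    field_simp [ne_of_gt hΛ0]
  have hzf : ∃ t₁, t₁ ∈ Ioc (0:ℝ) t₀ ∧ ∀ u ∈ Ioc (0:ℝ) t₁, ψ u ≠ 0 := by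
    by_contra hacc
    push_neg at hacc
    have hmem : ∀ z ∈ Ioc (0:ℝ) t₀, z * Real.exp (-δ) ∈ Ioc (0:ℝ) t₀ := by
      intro z hz
      constructor
      · exact mul_pos hz.1 (Real.exp_pos _)
      · calc z * Real.exp (-δ) ≤ z * 1 := mul_le_mul_of_nonneg_left hexpδ hz.1.le
        _ = z := mul_one z
        _ ≤ t₀ := hz.2
    have claim : ∀ n : ℕ, ∃ z ∈ Ioc (0:ℝ) t₀, ψ z = 0 ∧
        (n:ℝ)*((3/4)*δ) ≤ ∫ u in (z*Real.exp (-δ))..t₀, |1 - (3/2)*(u*ψ u)^2|/u := by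
      intro n
      induction n with
      | zero =>
        obtain ⟨z, hzm, hz0⟩ := hacc t₀ ht₀S
        have hzS : z ∈ Ioc (0:ℝ) t₀ := hzm
        refine ⟨z, hzS, hz0, ?_⟩
        rw [Nat.cast_zero, zero_mul]
        refine integral_nonneg (hmem z hzS).2 ?_
        intro u hu
        have hu0 : 0 < u := lt_of_lt_of_le (hmem z hzS).1 hu.1
        exact div_nonneg (abs_nonneg _) hu0.le
      | succ n ih =>
        obtain ⟨z, hzS, hz0, hzb⟩ := ih
        have hz1 : z*Real.exp (-δ) ∈ Ioc (0:ℝ) t₀ := hmem z hzS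
        obtain ⟨z', hz'm, hz'0⟩ := hacc (z*Real.exp (-δ)) hz1
        have hz'S : z' ∈ Ioc (0:ℝ) t₀ := ⟨hz'm.1, le_trans hz'm.2 hz1.2⟩
        have hz'e : z'*Real.exp (-δ) ∈ Ioc (0:ℝ) t₀ := hmem z' hz'S
        refine ⟨z', hz'S, hz'0, ?_⟩
        have hle1 : z'*Real.exp (-δ) ≤ z' := by
          nlinarith [hz'S.1, Real.exp_pos (-δ)]
        have hle2 : z' ≤ z*Real.exp (-δ) := hz'm.2
        have i1 := intble19 cabs hz'e hz'S hle1
        have i2 := intble19 cabs hz'S hz1 hle2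
        have i3 := intble19 cabs hz1 ht₀S hz1.2
        have i12 := intble19 cabs hz'e hz1 (le_trans hle1 hle2)
        have hsp1 := integral_add_adjacent_intervals i1 i2
        have hsp2 := integral_add_adjacent_intervals i12 i3
        have hlog : Real.log z' - Real.log (z'*Real.exp (-δ)) = δ := by
          rw [Real.log_mul (ne_of_gt hz'S.1) (Real.exp_ne_zero _), Real.log_exp]
          ring
        have hfst : (3/4)*δ ≤ ∫ u in (z'*Real.exp (-δ))..z', |1 - (3/2)*(u*ψ u)^2|/u := by
          have hptw : ∀ u ∈ Icc (z'*Real.exp (-δ)) z',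
              (3/4)*u⁻¹ ≤ |1 - (3/2)*(u*ψ u)^2|/u := by
            intro u hu
            have hu0 : 0 < u := lt_of_lt_of_le hz'e.1 hu.1
            have huS : u ∈ Ioc (0:ℝ) t₀ := ⟨hu0, le_trans hu.2 hz'S.2⟩
            have hlu : Real.log z' - Real.log u ≤ δ := by
              have hll := Real.log_le_log hz'e.1 hu.1
              linarith
            have hP : |u*ψ u| ≤ 1/3 := by
              have h1 := hLip u z' huS hz'S hu.2
              rw [hz'0, mul_zero, zero_sub, abs_neg] at h1
              have h2 : Λ*(Real.log z' - Real.log u) ≤ Λ*δ :=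
                mul_le_mul_of_nonneg_left hlu hΛ0.le
              linarith
            have habs : (3/4:ℝ) ≤ |1 - (3/2)*(u*ψ u)^2| := by
              have h4 : (u*ψ u)^2 ≤ 1/9 := by
                nlinarith [hP, abs_nonneg (u*ψ u), sq_abs (u*ψ u)]
              have h5 : 1 - (3/2)*(u*ψ u)^2 ≤ |1 - (3/2)*(u*ψ u)^2| := le_abs_self _
              linarith
            have h6 := mul_le_mul_of_nonneg_right habs (inv_nonneg.mpr hu0.le)
            calc (3/4)*u⁻¹ ≤ |1 - (3/2)*(u*ψ u)^2| * u⁻¹ := h6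
            _ = |1 - (3/2)*(u*ψ u)^2|/u := (div_eq_mul_inv _ _).symm
          have hm := integral_mono_on hle1
            (intble19 (f := fun u => (3/4)*u⁻¹) (continuousOn_const.mul invCont19) hz'e hz'S hle1) i1 hptw
          rw [integral_const_mul, integral_inv_of_pos hz'e.1 hz'S.1,
            Real.log_div (ne_of_gt hz'S.1) (ne_of_gt hz'e.1), hlog] at hm
          linarith
        have hmid : 0 ≤ ∫ u in z'..(z*Real.exp (-δ)), |1 - (3/2)*(u*ψ u)^2|/u := by
          refine integral_nonneg hle2 ?_
          intro u hu
          have hu0 : 0 < u := lt_of_lt_of_le hz'S.1 hu.1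
          exact div_nonneg (abs_nonneg _) hu0.le
        push_cast
        linarith [hzb, hfst, hmid, hsp1, hsp2]
    obtain ⟨n, hn⟩ := exists_nat_gt (A₂/((3/4)*δ))
    obtain ⟨z, hzS, hz0, hzb⟩ := claim n
    have h1 := hA₂b (z*Real.exp (-δ)) (hmem z hzS)
    have h2 : A₂ < (n:ℝ)*((3/4)*δ) := by
      rw [div_lt_iff₀ (by positivity : (0:ℝ) < (3/4)*δ)] at hn
      linarith
    linarith
  -- sign dichotomy and conclusion via key19
  obtain ⟨t₁, ht₁S, hnz⟩ := hzf
  have hsubS : Ioc (0:ℝ) t₁ ⊆ Ioc (0:ℝ) t₀ := fun u hu => ⟨hu.1, le_trans hu.2 ht₁S.2⟩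
  have ht₁m : t₁ ∈ Ioc (0:ℝ) t₁ := ⟨ht₁S.1, le_refl _⟩
  have hIntt₁ : ∀ t ∈ Ioc (0:ℝ) t₁, (∫ u in t..t₁, |1 - (3/2)*(u*ψ u)^2|/u) ≤ A₂ := by
    intro t ht
    have htS : t ∈ Ioc (0:ℝ) t₀ := hsubS ht
    have hadd := integral_add_adjacent_intervals (intble19 cabs htS ht₁S ht.2)
      (intble19 cabs ht₁S ht₀S ht₁S.2)
    have hnn : 0 ≤ ∫ u in t₁..t₀, |1 - (3/2)*(u*ψ u)^2|/u := by
      refine integral_nonneg ht₁S.2 ?_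
      intro u hu
      exact div_nonneg (abs_nonneg _) (le_of_lt (lt_of_lt_of_le ht₁S.1 hu.1))
    have := hA₂b t htS
    linarith
  have hM2 : (0:ℝ) < M^2 := by positivity
  have hdi : (∀ u ∈ Ioc (0:ℝ) t₁, 0 < ψ u) ∨ (∀ u ∈ Ioc (0:ℝ) t₁, ψ u < 0) := by
    rcases lt_or_gt_of_ne (hnz t₁ ht₁m) with h | h
    · right
      intro u hu
      by_contra hc
      push_neg at hc
      have hlt : 0 < ψ u := lt_of_le_of_ne hc (Ne.symm (hnz u hu))
      have hc1 : ContinuousOn ψ (Icc u t₁) :=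
        cψ.mono (fun x hx => hsubS ⟨lt_of_lt_of_le hu.1 hx.1, hx.2⟩)
      obtain ⟨x, hx, hx0⟩ := intermediate_value_Icc' hu.2 hc1 ⟨h.le, hlt.le⟩
      exact hnz x ⟨lt_of_lt_of_le hu.1 hx.1, hx.2⟩ hx0
    · left
      intro u hu
      by_contra hc
      push_neg at hc
      have hlt : ψ u < 0 := lt_of_le_of_ne hc (hnz u hu)
      have hc1 : ContinuousOn ψ (Icc u t₁) :=
        cψ.mono (fun x hx => hsubS ⟨lt_of_lt_of_le hu.1 hx.1, hx.2⟩)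
      obtain ⟨x, hx, hx0⟩ := intermediate_value_Icc hu.2 hc1 ⟨hlt.le, h.le⟩
      exact hnz x ⟨lt_of_lt_of_le hu.1 hx.1, hx.2⟩ hx0
  rcases hdi with hsp | hsn
  · exact key19 lam t₁ A₂ (M^2) hlam ht₁S.1 hM2 φ ψ
      (fun t ht => hφ t (hsubS ht)) (cψ.mono hsubS) hsp hIntt₁
      (fun t ht => hWm t (hsubS ht))
  · refine key19 lam t₁ A₂ (M^2) hlam ht₁S.1 hM2 (fun u => -φ u) (fun u => -ψ u)
      (fun t ht => (hφ t (hsubS ht)).neg) ((cψ.mono hsubS).neg)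
      (fun t ht => neg_pos.mpr (hsn t ht)) ?_ ?_
    · intro t ht
      have he : (∫ u in t..t₁, |1 - (3/2)*(u*(-ψ u))^2|/u)
          = ∫ u in t..t₁, |1 - (3/2)*(u*ψ u)^2|/u := by
        refine integral_congr ?_
        intro u hu
        simp [mul_neg, neg_sq]
      refine le_trans (le_of_eq ?_) (hIntt₁ t ht)
      exact he
    · intro t ht
      show 3*t^2*Real.exp (-(lam * (-φ t))) ≤ M^2
      have he : -(lam * (-φ t)) = lam * φ t := by ring
      rw [he]
      exact hWp t (hsubS ht)
end
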